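/- arXiv:2012.00285 — 10 statements merged into one kernel-verified Lean document; each statement's English description precedes it below -/
import Mathlib

section
/- For positive integers m and n₀ with n₀ ≥ 0, the following identity holds: (1/m) · (m! n₀!)/((m+n₀)!) = Σ_{n > n₀} (1/n) · (m! n!)/((m+n)!), where the sum is over integers n > n₀. -/
open Filter Finset

theorem stmt_0 (m n₀ : ℕ) (hm : 0 < m) :
    (1 / (m : ℝ)) * ((m.factorial * n₀.factorial : ℕ) : ℝ) / ((m + n₀).factorial : ℝ) =
      ∑' k : ℕ, (1 / ((n₀ + 1 + k : ℕ) : ℝ)) *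
        ((m.factorial * (n₀ + 1 + k).factorial : ℕ) : ℝ) / ((m + (n₀ + 1 + k)).factorial : ℝ) := by
  set f : ℕ → ℝ := fun n => (1 / (m : ℝ)) * ((m.factorial * n.factorial : ℕ) : ℝ) /
    ((m + n).factorial : ℝ) with hf
  have hmR : (0 : ℝ) < m := by exact_mod_cast hm
  have key : ∀ n : ℕ, f n - f (n + 1) =
      (1 / ((n + 1 : ℕ) : ℝ)) * ((m.factorial * (n + 1).factorial : ℕ) : ℝ) /
        ((m + (n + 1)).factorial : ℝ) := by
    intro n
    have h1 : ((n + 1).factorial : ℝ) = (n + 1) * (n.factorial : ℝ) := by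
      rw [Nat.factorial_succ]; push_cast; ring
    have h2 : ((m + (n + 1)).factorial : ℝ) = (m + n + 1) * ((m + n).factorial : ℝ) := by
      have : m + (n + 1) = (m + n) + 1 := by ring
      rw [this, Nat.factorial_succ]; push_cast; ring
    have hfac1 : (0 : ℝ) < ((m + n).factorial : ℝ) := by
      exact_mod_cast Nat.factorial_pos _
    simp only [hf]
    push_cast
    rw [h2, h1]
    field_simp
    ring
  have hnonneg : ∀ k : ℕ, 0 ≤ (1 / ((n₀ + 1 + k : ℕ) : ℝ)) *
      ((m.factorial * (n₀ + 1 + k).factorial : ℕ) : ℝ) / ((m + (n₀ + 1 + k)).factorial : ℝ) :=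
    fun k => by positivity
  -- f tends to 0
  have hbound : ∀ n : ℕ, f n ≤ (m.factorial : ℝ) / m / (n + 1) := by
    intro n
    have hle : ((n + 1) : ℕ) * n.factorial ≤ (m + n).factorial := by
      calc ((n + 1) : ℕ) * n.factorial = (n + 1).factorial := (Nat.factorial_succ n).symm
        _ ≤ (m + n).factorial := Nat.factorial_le (by omega)
    have hleR : ((n : ℝ) + 1) * (n.factorial : ℝ) ≤ ((m + n).factorial : ℝ) := by
      exact_mod_cast hle
    have hfac : (0 : ℝ) < ((m + n).factorial : ℝ) := by exact_mod_cast Nat.factorial_pos _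
    have hnfac : (0 : ℝ) < (n.factorial : ℝ) := by exact_mod_cast Nat.factorial_pos _
    have hinv : 1 / ((m + n).factorial : ℝ) ≤ 1 / (((n:ℝ) + 1) * n.factorial) :=
      one_div_le_one_div_of_le (by positivity) hleR
    simp only [hf]
    push_cast
    calc 1 / (m:ℝ) * ((m.factorial : ℝ) * n.factorial) / ((m + n).factorial : ℝ)
        = (1 / (m:ℝ) * ((m.factorial : ℝ) * n.factorial)) * (1 / ((m + n).factorial : ℝ)) := by
          ring
      _ ≤ (1 / (m:ℝ) * ((m.factorial : ℝ) * n.factorial)) * (1 / (((n:ℝ) + 1) * n.factorial)) := by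
          apply mul_le_mul_of_nonneg_left hinv; positivity
      _ = (m.factorial : ℝ) / m / ((n:ℝ) + 1) := by field_simp
  have hf0 : ∀ n, 0 ≤ f n := fun n => by simp only [hf]; positivity
  have htend : Tendsto f atTop (nhds 0) := by
    apply squeeze_zero hf0 hbound
    have h1 : Tendsto (fun n : ℕ => (m.factorial : ℝ) / m / n) atTop (nhds 0) :=
      tendsto_const_div_atTop_nhds_zero_nat _
    have h2 := h1.comp (tendsto_add_atTop_nat 1)
    simpa [Function.comp_def] using h2
  have hs : HasSum (fun k : ℕ => (1 / ((n₀ + 1 + k : ℕ) : ℝ)) *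
      ((m.factorial * (n₀ + 1 + k).factorial : ℕ) : ℝ) / ((m + (n₀ + 1 + k)).factorial : ℝ))
      (f n₀) := by
    rw [hasSum_iff_tendsto_nat_of_nonneg hnonneg]
    have hpart : ∀ N : ℕ, ∑ k ∈ range N, (1 / ((n₀ + 1 + k : ℕ) : ℝ)) *
        ((m.factorial * (n₀ + 1 + k).factorial : ℕ) : ℝ) / ((m + (n₀ + 1 + k)).factorial : ℝ)
        = f n₀ - f (n₀ + N) := by
      intro N
      have : ∀ k ∈ range N, (1 / ((n₀ + 1 + k : ℕ) : ℝ)) *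
          ((m.factorial * (n₀ + 1 + k).factorial : ℕ) : ℝ) / ((m + (n₀ + 1 + k)).factorial : ℝ)
          = f (n₀ + k) - f (n₀ + k + 1) := by
        intro k _
        have := key (n₀ + k)
        rw [this]
        norm_num [add_assoc, add_comm 1 k]
      rw [Finset.sum_congr rfl this]
      have := Finset.sum_range_sub' (fun k => f (n₀ + k)) N
      simpa [add_assoc] using this
    simp only [hpart]
    have : Tendsto (fun N : ℕ => f (n₀ + N)) atTop (nhds 0) := by
      simpa [Function.comp_def, add_comm] using htend.comp (tendsto_add_atTop_nat n₀)
    simpa using (tendsto_const_nhds.sub this)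
  rw [hs.tsum_eq]
end

section
/- For nonnegative integers m₀ and positive integers n, the following identity holds: Σ_{m > m₀} (1/m) · (m! n!)/((m+n)!) = (1/n) · (m₀! n!)/((m₀+n)!), where the sum is over integers m > m₀. -/
open Filter Finset Topology

theorem stmt_1 (m₀ n : ℕ) (hn : 0 < n) :
    (∑' k : ℕ, (1 / ((m₀ + 1 + k : ℕ) : ℝ)) *
        (((m₀ + 1 + k).factorial * n.factorial : ℕ) : ℝ) / (((m₀ + 1 + k) + n).factorial : ℝ)) =
      (1 / (n : ℝ)) * ((m₀.factorial * n.factorial : ℕ) : ℝ) / ((m₀ + n).factorial : ℝ) := by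
  set A : ℕ → ℝ := fun m => ((m.factorial * n.factorial : ℕ) : ℝ) / ((m + n).factorial : ℝ)
    with hA
  set g : ℕ → ℝ := fun k => (1 / (n : ℝ)) * A (m₀ + k) with hg
  have hfac : ∀ m : ℕ, (0:ℝ) < (m.factorial : ℝ) := fun m =>
    Nat.cast_pos.mpr m.factorial_pos
  -- key telescoping identity
  have key : ∀ k : ℕ, (1 / ((m₀ + 1 + k : ℕ) : ℝ)) *
      (((m₀ + 1 + k).factorial * n.factorial : ℕ) : ℝ) / (((m₀ + 1 + k) + n).factorial : ℝ)
      = g k - g (k+1) := by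
    intro k
    have h1 : m₀ + (k+1) = (m₀ + k) + 1 := by ring
    simp only [hg, hA, h1]
    set m := m₀ + k with hm
    have e1 : (m+1).factorial = (m+1) * m.factorial := Nat.factorial_succ m
    have e2 : ((m+1) + n).factorial = (m+1+n) * (m+n).factorial := by
      have : m + 1 + n = (m + n) + 1 := by ring
      rw [this, Nat.factorial_succ]
    have hmn : m₀ + 1 + k = m + 1 := by omega
    rw [hmn]
    push_cast [e1, e2]
    have h2 : (0:ℝ) < (m:ℝ)+1 := by positivity
    have h3 : (0:ℝ) < (m:ℝ)+1+(n:ℝ) := by positivity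
    have h4 := hfac m
    have h5 := hfac n
    have h6 := hfac (m+n)
    have h7 : (0:ℝ) < (n:ℝ) := Nat.cast_pos.mpr hn
    field_simp
    ring
  rw [tsum_congr key]
  -- g tends to 0
  have hbound : ∀ k : ℕ, g k ≤ (n.factorial : ℝ) / ((m₀ + k : ℕ) + 1) := by
    intro k
    have h1 : A (m₀ + k) ≤ (n.factorial : ℝ) / ((m₀ + k : ℕ) + 1) := by
      rw [hA]
      rw [div_le_div_iff₀ (hfac _) (by positivity)]
      have : ((m₀+k+1).factorial : ℝ) ≤ ((m₀+k+n).factorial : ℝ) :=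
        Nat.cast_le.mpr (Nat.factorial_le (by omega))
      calc (((m₀+k).factorial * n.factorial : ℕ) : ℝ) * ((m₀+k:ℕ) + 1)
          = ((m₀+k+1).factorial : ℝ) * (n.factorial : ℝ) := by
            push_cast [Nat.factorial_succ]; ring
        _ ≤ ((m₀+k+n).factorial : ℝ) * (n.factorial : ℝ) := by
            exact mul_le_mul_of_nonneg_right this (le_of_lt (hfac n))
        _ = (n.factorial : ℝ) * ((m₀ + k + n).factorial : ℝ) := by ring
    have h2 : g k ≤ A (m₀ + k) := by
      rw [hg]
      have hApos : 0 ≤ A (m₀ + k) := by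
        rw [hA]; positivity
      have : (1 / (n:ℝ)) ≤ 1 := by
        rw [div_le_one (by exact_mod_cast hn)]
        exact_mod_cast hn
      nlinarith
    linarith
  have hgpos : ∀ k, 0 ≤ g k := by
    intro k; rw [hg, hA]; positivity
  have hgtend : Tendsto g atTop (𝓝 0) := by
    apply squeeze_zero hgpos hbound
    have h1 : Tendsto (fun k : ℕ => ((m₀ + k : ℕ) : ℝ) + 1) atTop atTop := by
      apply tendsto_atTop_add_const_right
      have h0 : Tendsto (fun k : ℕ => m₀ + k) atTop atTop := by
        simpa [add_comm] using tendsto_add_atTop_nat m₀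
      exact tendsto_natCast_atTop_atTop.comp h0
    simpa [div_eq_mul_inv] using h1.inv_tendsto_atTop.const_mul (n.factorial : ℝ)
  -- telescoping sum
  have hsum : HasSum (fun k => g k - g (k+1)) (g 0) := by
    rw [hasSum_iff_tendsto_nat_of_nonneg (fun k => by
      rw [← key k]; positivity)]
    have : ∀ N : ℕ, ∑ k ∈ range N, (g k - g (k+1)) = g 0 - g N := by
      intro N; exact Finset.sum_range_sub' g N
    simp_rw [this]
    simpa using (tendsto_const_nhds.sub hgtend)
  rw [hsum.tsum_eq]
  simp [hg, hA, mul_div_assoc]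
end

section
/- The multiple zeta value ζ(1,2) := Σ_{0 < m₁ < m₂} 1/(m₁ m₂²) equals ζ(3) := Σ_{0 < n} 1/n³. -/
open Filter Finset

lemma sumg2 : Summable (fun n : ℕ => 1/((n:ℝ)+1)^2) := by
  have := (Real.summable_one_div_nat_pow (p := 2)).mpr (by norm_num)
  exact ((summable_nat_add_iff 1).mpr this).congr fun n => by push_cast; ring

lemma sumg3 : Summable (fun n : ℕ => 1/((n:ℝ)+1)^3) := by
  have := (Real.summable_one_div_nat_pow (p := 3)).mpr (by norm_num)
  exact ((summable_nat_add_iff 1).mpr this).congr fun n => by push_cast; ring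

/-- Telescoping tsum. -/
lemma tele (f : ℕ → ℝ) (hf0 : Tendsto f atTop (nhds 0)) (n : ℕ)
    (hs : Summable fun m => f m - f (m + n)) :
    ∑' m, (f m - f (m + n)) = ∑ i ∈ Finset.range n, f i := by
  have key : ∀ N, ∑ m ∈ range N, (f m - f (m + n)) =
      ∑ i ∈ range n, f i - ∑ i ∈ range n, f (N + i) := by
    intro N
    have h1 : ∑ m ∈ range N, f (m + n) = ∑ x ∈ range (n + N), f x - ∑ x ∈ range n, f x := by
      rw [Finset.sum_range_add f n N]
      simp [add_comm]
    have h2 : ∑ x ∈ range (n + N), f x = ∑ x ∈ range N, f x + ∑ x ∈ range n, f (N + x) := by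
      rw [add_comm n N, Finset.sum_range_add f N n]
    rw [Finset.sum_sub_distrib, h1, h2]; ring
  have h2 : Tendsto (fun N => ∑ m ∈ range N, (f m - f (m + n))) atTop
      (nhds (∑ i ∈ range n, f i)) := by
    simp only [key]
    have h3 : Tendsto (fun N => ∑ i ∈ range n, f (N + i)) atTop (nhds 0) := by
      have : Tendsto (fun N => ∑ i ∈ range n, f (N + i)) atTop (nhds (∑ i ∈ range n, (0:ℝ))) :=
        tendsto_finset_sum _ (fun i _ => hf0.comp (tendsto_add_atTop_nat i))
      simpa using this
    simpa using (tendsto_const_nhds (x := ∑ i ∈ range n, f i)).sub h3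
  exact tendsto_nhds_unique (hs.hasSum_iff_tendsto_nat.mp hs.hasSum) h2

/-- Harmonic telescoping: ∑ₐ (1/(a+1) - 1/(a+n+1)) = Hₙ. -/
lemma harm (n : ℕ) :
    ∑' a : ℕ, (1/((a:ℝ)+1) - 1/(((a + n : ℕ):ℝ)+1)) = ∑ i ∈ range n, 1/((i:ℝ)+1) := by
  have hsum : Summable (fun m : ℕ => 1/((m:ℝ)+1) - 1/(((m + n : ℕ):ℝ)+1)) := by
    apply Summable.of_nonneg_of_le _ _ (sumg2.mul_left (n:ℝ))
    · intro m
      have : ((m:ℝ)+1) ≤ ((m + n : ℕ):ℝ)+1 := by push_cast; linarith [Nat.cast_nonneg (α := ℝ) n]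
      have h1 : (0:ℝ) < (m:ℝ)+1 := by positivity
      exact sub_nonneg.mpr (one_div_le_one_div_of_le h1 this)
    · intro m
      have key : 1/((m:ℝ)+1) - 1/(((m + n : ℕ):ℝ)+1) = n / (((m:ℝ)+1) * ((m:ℝ)+(n:ℝ)+1)) := by
        push_cast
        have h1 : ((m:ℝ)+1) ≠ 0 := by positivity
        have h2 : ((m:ℝ)+(n:ℝ)+1) ≠ 0 := by positivity
        field_simp
        ring
      rw [key]
      have h3 : (0:ℝ) ≤ n := Nat.cast_nonneg n
      have : (n:ℝ) / (((m:ℝ)+1) * ((m:ℝ)+(n:ℝ)+1)) ≤ (n:ℝ) / (((m:ℝ)+1) * ((m:ℝ)+1)) := by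
        gcongr
        linarith [Nat.cast_nonneg (α := ℝ) n]
      calc (n:ℝ) / (((m:ℝ)+1) * ((m:ℝ)+(n:ℝ)+1)) ≤ (n:ℝ) / (((m:ℝ)+1) * ((m:ℝ)+1)) := this
        _ = n * (1/((m:ℝ)+1)^2) := by ring
  exact tele (fun m => 1/((m:ℝ)+1)) tendsto_one_div_add_atTop_nhds_zero_nat n hsum

/-- Triangle reindexing: sum over 0 ≤ a < c of F a c. -/
lemma triangle (F : ℕ → ℕ → ℝ) (hs : Summable fun p : ℕ × ℕ => F p.1 (p.1 + p.2 + 1)) :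
    (Summable fun c => ∑ a ∈ range c, F a c) ∧
      ∑' p : ℕ × ℕ, F p.1 (p.1 + p.2 + 1) = ∑' c, ∑ a ∈ range c, F a c := by
  set f : ℕ × ℕ → ℝ := fun p => if p.1 < p.2 then F p.1 p.2 else 0 with hf
  set i : ℕ × ℕ → ℕ × ℕ := fun p => (p.1, p.1 + p.2 + 1) with hi
  have hinj : Function.Injective i := by
    intro p q h
    simp only [hi, Prod.mk.injEq] at h
    exact Prod.ext h.1 (by omega)
  have hsupp : Function.support f ⊆ Set.range i := by
    rintro ⟨x, y⟩ hp
    have hlt : x < y := by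
      by_contra h; exact hp (by simp [hf, h])
    refine ⟨(x, y - x - 1), ?_⟩
    simp only [hi, Prod.mk.injEq]
    exact ⟨trivial, by omega⟩
  have hcomp : ∀ p : ℕ × ℕ, f (i p) = F p.1 (p.1 + p.2 + 1) := by
    intro p; simp only [hf, hi]; rw [if_pos (by omega)]
  have hfi : Summable (f ∘ i) := hs.congr fun p => (hcomp p).symm
  have hsf : Summable f := (hinj.summable_iff (fun x hx => by
    by_contra h
    exact hx (hsupp h))).mp hfi
  have hv : ∑' p : ℕ × ℕ, F p.1 (p.1 + p.2 + 1) = ∑' p, f p := by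
    rw [← hinj.tsum_eq hsupp]; exact tsum_congr fun p => (hcomp p).symm
  have hfib : ∀ c, HasSum (fun a => f (a, c)) (∑ a ∈ range c, F a c) := by
    intro c
    have h0 : ∀ a ∉ range c, f (a, c) = 0 := by
      intro a ha
      simp only [hf]
      rw [if_neg (by simpa using ha)]
    have h1 : HasSum (fun a => f (a, c)) (∑ a ∈ range c, f (a, c)) := hasSum_sum_of_ne_finset_zero h0
    have h2 : ∑ a ∈ range c, f (a, c) = ∑ a ∈ range c, F a c := by
      refine Finset.sum_congr rfl fun a ha => ?_
      simp only [hf]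
      rw [if_pos (Finset.mem_range.mp ha)]
    rwa [h2] at h1
  have hswap : HasSum (fun q : ℕ × ℕ => f (q.2, q.1)) (∑' p, f p) := by
    have := (Equiv.prodComm ℕ ℕ).hasSum_iff.mpr hsf.hasSum
    exact this
  have hg : HasSum (fun c => ∑ a ∈ range c, F a c) (∑' p, f p) :=
    hswap.prod_fiberwise hfib
  exact ⟨hg.summable, hv.trans hg.tsum_eq.symm⟩

noncomputable def fS : ℕ × ℕ → ℝ :=
  fun p => 1 / (((p.1 : ℝ) + 1) * ((p.1 : ℝ) + (p.2 : ℝ) + 2) ^ 2)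

noncomputable def fT : ℕ × ℕ → ℝ :=
  fun p => 1 / (((p.1 : ℝ) + 1) * ((p.2 : ℝ) + 1) * ((p.1 : ℝ) + (p.2 : ℝ) + 2))

lemma sliceS (a : ℕ) : Summable fun b => fS (a, b) := by
  apply Summable.of_nonneg_of_le (fun b => by unfold fS; positivity) _ sumg2
  intro b
  unfold fS
  apply one_div_le_one_div_of_le (by positivity)
  have h1 : (1:ℝ) ≤ (a:ℝ) + 1 := by linarith [Nat.cast_nonneg (α := ℝ) a]
  have h2 : ((b:ℝ)+1)^2 ≤ ((a:ℝ)+(b:ℝ)+2)^2 := by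
    have := Nat.cast_nonneg (α := ℝ) a
    nlinarith [Nat.cast_nonneg (α := ℝ) b]
  nlinarith [sq_nonneg ((b:ℝ)+1)]

lemma diff_eq (a b : ℕ) :
    1/((b:ℝ)+(a:ℝ)+1) - 1/(((b+1:ℕ):ℝ)+(a:ℝ)+1) = 1/((((b:ℝ)+(a:ℝ)+1)) * ((b:ℝ)+(a:ℝ)+2)) := by
  push_cast
  have h1 : ((b:ℝ)+(a:ℝ)+1) ≠ 0 := by positivity
  have h2 : ((b:ℝ)+(a:ℝ)+2) ≠ 0 := by positivity
  field_simp
  ring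

lemma sdiff (a : ℕ) :
    Summable (fun b : ℕ => 1/((b:ℝ)+(a:ℝ)+1) - 1/(((b+1:ℕ):ℝ)+(a:ℝ)+1)) := by
  apply Summable.of_nonneg_of_le _ _ sumg2
  · intro b; rw [diff_eq]; positivity
  · intro b
    rw [diff_eq]
    apply one_div_le_one_div_of_le (by positivity)
    have := Nat.cast_nonneg (α := ℝ) a
    nlinarith [Nat.cast_nonneg (α := ℝ) b]

lemma tailtel (a : ℕ) :
    ∑' b : ℕ, (1/((b:ℝ)+(a:ℝ)+1) - 1/(((b+1:ℕ):ℝ)+(a:ℝ)+1)) = 1/((a:ℝ)+1) := by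
  have ht : Tendsto (fun b : ℕ => 1/((b:ℝ)+(a:ℝ)+1)) atTop (nhds 0) := by
    apply squeeze_zero (fun b => by positivity) (g := fun b : ℕ => 1/((b:ℝ)+1))
    · intro b
      apply one_div_le_one_div_of_le (by positivity)
      linarith [Nat.cast_nonneg (α := ℝ) a]
    · exact tendsto_one_div_add_atTop_nhds_zero_nat
  have := tele (fun b : ℕ => 1/((b:ℝ)+(a:ℝ)+1)) ht 1 (sdiff a)
  simpa using this

lemma tailS (a : ℕ) : ∑' b, fS (a, b) ≤ 1/((a:ℝ)+1)^2 := by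
  have hle : ∀ b : ℕ, fS (a, b) ≤
      (1/((a:ℝ)+1)) * (1/((b:ℝ)+(a:ℝ)+1) - 1/(((b+1:ℕ):ℝ)+(a:ℝ)+1)) := by
    intro b
    rw [diff_eq]
    unfold fS
    rw [div_mul_div_comm, one_mul]
    apply one_div_le_one_div_of_le (by positivity)
    have ha := Nat.cast_nonneg (α := ℝ) a
    have hb := Nat.cast_nonneg (α := ℝ) b
    nlinarith
  calc ∑' b, fS (a, b)
      ≤ ∑' b : ℕ, (1/((a:ℝ)+1)) * (1/((b:ℝ)+(a:ℝ)+1) - 1/(((b+1:ℕ):ℝ)+(a:ℝ)+1)) :=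
        Summable.tsum_le_tsum hle (sliceS a) ((sdiff a).mul_left _)
    _ = (1/((a:ℝ)+1)) * (1/((a:ℝ)+1)) := by rw [tsum_mul_left, tailtel a]
    _ = 1/((a:ℝ)+1)^2 := by rw [div_mul_div_comm, one_mul, ← sq]

lemma sS : Summable fS := by
  refine (summable_prod_of_nonneg (fun p => by unfold fS; positivity)).mpr ⟨sliceS, ?_⟩
  exact Summable.of_nonneg_of_le
    (fun a => tsum_nonneg fun b => by unfold fS; positivity) tailS sumg2

noncomputable def FF : ℕ → ℕ → ℝ := fun a c => 1 / (((a:ℝ)+1) * ((c:ℝ)+1)^2)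

lemma sSswap : Summable (fun q : ℕ × ℕ => fS (q.2, q.1)) :=
  (Equiv.prodComm ℕ ℕ).summable_iff.mpr sS

lemma hTpt (p : ℕ × ℕ) : fT p = fS p + fS (p.2, p.1) := by
  obtain ⟨a, b⟩ := p
  unfold fS fT
  have h1 : ((a:ℝ)+1) ≠ 0 := by positivity
  have h2 : ((b:ℝ)+1) ≠ 0 := by positivity
  have h3 : ((a:ℝ)+(b:ℝ)+2) ≠ 0 := by positivity
  have h4 : ((b:ℝ)+(a:ℝ)+2) ≠ 0 := by positivity
  field_simp
  ring

lemma sT : Summable fT := (sS.add sSswap).congr fun p => (hTpt p).symm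

lemma eqTS : ∑' p : ℕ × ℕ, fT p = 2 * ∑' p : ℕ × ℕ, fS p := by
  have e : ∑' q : ℕ × ℕ, fS (q.2, q.1) = ∑' p, fS p := (Equiv.prodComm ℕ ℕ).tsum_eq fS
  rw [tsum_congr hTpt, Summable.tsum_add sS sSswap, e]
  ring

lemma innerT (b : ℕ) :
    ∑' a : ℕ, fT (a, b) = 1/((b:ℝ)+1)^2 * ∑ i ∈ range (b+1), 1/((i:ℝ)+1) := by
  have key : ∀ a : ℕ, fT (a, b) =
      (1/((b:ℝ)+1)^2) * (1/((a:ℝ)+1) - 1/(((a + (b+1) : ℕ):ℝ)+1)) := by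
    intro a
    unfold fT
    push_cast
    have h1 : ((a:ℝ)+1) ≠ 0 := by positivity
    have h2 : ((b:ℝ)+1) ≠ 0 := by positivity
    have h3 : ((a:ℝ)+(b:ℝ)+2) ≠ 0 := by positivity
    have h4 : ((a:ℝ)+((b:ℝ)+1)+1) ≠ 0 := by positivity
    field_simp
    ring
  rw [tsum_congr key, tsum_mul_left, harm (b+1)]

lemma eqT2 : ∑' p : ℕ × ℕ, fT p
    = ∑' b : ℕ, (1/((b:ℝ)+1)^2 * ∑ i ∈ range (b+1), 1/((i:ℝ)+1)) := by
  have sTswap : Summable (fun q : ℕ × ℕ => fT (q.2, q.1)) :=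
    (Equiv.prodComm ℕ ℕ).summable_iff.mpr sT
  have e1 : ∑' q : ℕ × ℕ, fT (q.2, q.1) = ∑' p, fT p :=
    (Equiv.prodComm ℕ ℕ).tsum_eq fT
  rw [← e1, Summable.tsum_prod' sTswap (fun b => sTswap.prod_factor b)]
  exact tsum_congr innerT

lemma hsF' : Summable (fun p : ℕ × ℕ => FF p.1 (p.1 + p.2 + 1)) := by
  refine sS.congr fun p => ?_
  unfold fS FF
  congr 1
  push_cast
  ring

lemma hsplit (b : ℕ) :
    1/((b:ℝ)+1)^2 * ∑ i ∈ range (b+1), 1/((i:ℝ)+1)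
      = (∑ a ∈ range b, FF a b) + 1/((b:ℝ)+1)^3 := by
  rw [Finset.sum_range_succ, mul_add]
  congr 1
  · rw [Finset.mul_sum]
    refine Finset.sum_congr rfl fun i _ => ?_
    unfold FF
    rw [div_mul_div_comm, one_mul, mul_comm]
  · rw [div_mul_div_comm, one_mul, ← pow_succ]

/-- ζ(1,2) = ζ(3): here m₁ = a+1, m₂ = a+b+2 range over all pairs 0 < m₁ < m₂. -/
theorem stmt_2 :
    (∑' a : ℕ, ∑' b : ℕ, 1 / (((a : ℝ) + 1) * ((a : ℝ) + (b : ℝ) + 2) ^ 2)) =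
      ∑' n : ℕ, 1 / ((n : ℝ) + 1) ^ 3 := by
  have htri := triangle FF hsF'
  have eqSU : ∑' p : ℕ × ℕ, fS p = ∑' c, ∑ a ∈ range c, FF a c := by
    rw [← htri.2]
    refine tsum_congr fun p => ?_
    unfold fS FF
    congr 1
    push_cast
    ring
  have eqTU : ∑' p : ℕ × ℕ, fT p
      = (∑' c, ∑ a ∈ range c, FF a c) + ∑' n : ℕ, 1/((n:ℝ)+1)^3 := by
    rw [eqT2, tsum_congr hsplit, Summable.tsum_add htri.1 sumg3]
  have hL : (∑' a : ℕ, ∑' b : ℕ, 1 / (((a : ℝ) + 1) * ((a : ℝ) + (b : ℝ) + 2) ^ 2))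
      = ∑' p : ℕ × ℕ, fS p :=
    (Summable.tsum_prod' sS fun a => sS.prod_factor a).symm
  have := eqTS
  rw [eqTU, eqSU] at this
  rw [hL, eqSU]
  linarith
end

section
/- For a complex number α with Re(α) > 0 and nonnegative integers m_r and n_{s-1} (taking the Gamma-function convention below), the telescoping identity holds: (1/(m_r+α)) · Γ(m_r+α+1)Γ(n_{s-1}+α+1)/Γ(m_r+n_{s-1}+2α+1) = Σ_{n > n_{s-1}} (1/(n+α)) · Γ(m_r+α+1)Γ(n+α+1)/Γ(m_r+n+2α+1), where the sum is over integers n > n_{s-1}. More generally, the same identity is allowed with n_{s-1} = -1. -/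
open Complex MeasureTheory Set

private lemma beta_formula {u v : ℂ} (hu : 0 < u.re) (hv : 0 < v.re) :
    Complex.betaIntegral u v = Complex.Gamma u * Complex.Gamma v / Complex.Gamma (u + v) := by
  have hne : Complex.Gamma (u + v) ≠ 0 :=
    Complex.Gamma_ne_zero_of_re_pos (by rw [Complex.add_re]; positivity)
  rw [Complex.Gamma_mul_Gamma_eq_betaIntegral hu hv, mul_div_cancel_left₀ _ hne]

private lemma hasSum_beta {u v : ℂ} (hu : 0 < u.re) (hv : 0 < v.re) :
    HasSum (fun k : ℕ => Complex.betaIntegral (u + k) (v + 1)) (Complex.betaIntegral u v) := by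
  have huk : ∀ k : ℕ, 0 < (u + k).re := by
    intro k; rw [Complex.add_re, Complex.natCast_re]; positivity
  have hv1 : 0 < (v + 1).re := by
    rw [Complex.add_re, Complex.one_re]; positivity
  set F : ℕ → ℝ → ℂ := fun k t => (t : ℂ) ^ (u + k - 1) * (1 - (t : ℂ)) ^ v with hF
  set f : ℝ → ℂ := fun t => (t : ℂ) ^ (u - 1) * (1 - (t : ℂ)) ^ (v - 1) with hf
  set bound : ℕ → ℝ → ℝ := fun k t => t ^ (u.re + k - 1) * (1 - t) ^ v.re with hbound
  have hFik : ∀ k : ℕ, IntervalIntegrable (F k) volume 0 1 := by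
    intro k
    have := Complex.betaIntegral_convergent (huk k) hv1
    simpa [hF, add_sub_cancel_right] using this
  have h1 : ∀ᵐ t : ℝ, t ≠ 1 := by
    refine ae_iff.mpr ?_
    simpa using Real.volume_singleton (x := (1:ℝ))
  have hmem : ∀ t : ℝ, t ∈ Set.uIoc (0:ℝ) 1 → t ≠ 1 → 0 < t ∧ t < 1 := by
    intro t ht h1t
    rw [Set.uIoc_of_le zero_le_one] at ht
    exact ⟨ht.1, lt_of_le_of_ne ht.2 h1t⟩
  have key := intervalIntegral.hasSum_integral_of_dominated_convergence (μ := volume)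
    (a := (0:ℝ)) (b := 1) (F := F) (f := f) bound
    (fun k => (intervalIntegrable_iff.mp (hFik k)).aestronglyMeasurable)
    (fun k => by
      filter_upwards [h1] with t ht1 htI
      obtain ⟨ht0, ht1'⟩ := hmem t htI ht1
      have h1t : (0:ℝ) < 1 - t := by linarith
      have e1 : ‖(t : ℂ) ^ (u + k - 1)‖ = t ^ (u.re + k - 1) := by
        rw [Complex.norm_cpow_eq_rpow_re_of_pos ht0]
        norm_num [Complex.add_re, Complex.sub_re, Complex.natCast_re]
      have e2 : ‖(1 - (t : ℂ)) ^ v‖ = (1 - t) ^ v.re := by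
        rw [show (1 - (t:ℂ)) = ((1 - t : ℝ) : ℂ) by push_cast; ring,
          Complex.norm_cpow_eq_rpow_re_of_pos h1t]
      simp only [hF, hbound]
      rw [norm_mul, e1, e2])
    (by
      filter_upwards [h1] with t ht1 htI
      obtain ⟨ht0, ht1'⟩ := hmem t htI ht1
      have : (fun k : ℕ => bound k t) = fun k : ℕ => (t ^ (u.re - 1) * (1 - t) ^ v.re) * t ^ k := by
        funext k
        simp only [hbound]
        rw [show u.re + k - 1 = (u.re - 1) + (k:ℝ) by ring, Real.rpow_add ht0,
          Real.rpow_natCast]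
        ring
      rw [this]
      exact (summable_geometric_of_lt_one ht0.le ht1').mul_left _)
    (by
      have base : IntervalIntegrable (fun t : ℝ => ‖f t‖) volume 0 1 :=
        (Complex.betaIntegral_convergent hu hv).norm
      refine base.congr_ae ?_
      filter_upwards [ae_restrict_of_ae h1, ae_restrict_mem measurableSet_uIoc] with t ht1 htI
      obtain ⟨ht0, ht1'⟩ := hmem t htI ht1
      have h1t : (0:ℝ) < 1 - t := by linarith
      have hgeom : HasSum (fun k : ℕ => (t ^ (u.re - 1) * (1 - t) ^ v.re) * t ^ k)
          ((t ^ (u.re - 1) * (1 - t) ^ v.re) * (1 - t)⁻¹) :=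
        (hasSum_geometric_of_lt_one ht0.le ht1').mul_left _
      have hts : ∑' k : ℕ, bound k t = (t ^ (u.re - 1) * (1 - t) ^ v.re) * (1 - t)⁻¹ := by
        rw [show (fun k : ℕ => bound k t)
            = fun k : ℕ => (t ^ (u.re - 1) * (1 - t) ^ v.re) * t ^ k by
          funext k
          simp only [hbound]
          rw [show u.re + k - 1 = (u.re - 1) + (k:ℝ) by ring, Real.rpow_add ht0,
            Real.rpow_natCast]
          ring]
        exact hgeom.tsum_eq
      have e1 : ‖(t : ℂ) ^ (u - 1)‖ = t ^ (u.re - 1) := by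
        rw [Complex.norm_cpow_eq_rpow_re_of_pos ht0]
        norm_num [Complex.sub_re]
      have e2 : ‖(1 - (t : ℂ)) ^ (v - 1)‖ = (1 - t) ^ (v.re - 1) := by
        rw [show (1 - (t:ℂ)) = ((1 - t : ℝ) : ℂ) by push_cast; ring,
          Complex.norm_cpow_eq_rpow_re_of_pos h1t]
        norm_num [Complex.sub_re]
      have e3 : (1 - t) ^ (v.re - 1) = (1 - t) ^ v.re * (1 - t)⁻¹ := by
        rw [show v.re - 1 = v.re + (-1) by ring, Real.rpow_add h1t, Real.rpow_neg_one]
      simp only [hf, hbound] at hts ⊢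
      rw [norm_mul, e1, e2, e3, hts]
      ring)
    (by
      filter_upwards [h1] with t ht1 htI
      obtain ⟨ht0, ht1'⟩ := hmem t htI ht1
      have htne : (t : ℂ) ≠ 0 := by exact_mod_cast ht0.ne'
      have h1tne : (1 : ℂ) - t ≠ 0 := by
        intro h
        have : (t : ℂ) = 1 := by linear_combination -h
        exact ht1 (by exact_mod_cast this)
      have hnorm : ‖(t : ℂ)‖ < 1 := by
        rw [Complex.norm_real, Real.norm_eq_abs, abs_of_pos ht0]; exact ht1'
      have hgeom : HasSum (fun k : ℕ => ((t : ℂ) ^ (u - 1) * (1 - (t : ℂ)) ^ v) * (t:ℂ) ^ k)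
          (((t : ℂ) ^ (u - 1) * (1 - (t : ℂ)) ^ v) * (1 - (t:ℂ))⁻¹) :=
        (hasSum_geometric_of_norm_lt_one hnorm).mul_left _
      have heq : (fun k : ℕ => F k t)
          = fun k : ℕ => ((t : ℂ) ^ (u - 1) * (1 - (t : ℂ)) ^ v) * (t:ℂ) ^ k := by
        funext k
        simp only [hF]
        rw [show u + k - 1 = (u - 1) + (k : ℂ) by ring, Complex.cpow_add _ _ htne,
          Complex.cpow_natCast]
        ring
      rw [heq, hf]
      convert hgeom using 1
      · rfl
      have : (1 - (t:ℂ)) ^ v = (1 - (t:ℂ)) ^ (v - 1) * (1 - (t:ℂ)) := by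
        conv_lhs => rw [show v = (v - 1) + 1 by ring]
        rw [Complex.cpow_add _ _ h1tne, Complex.cpow_one]
      rw [this]
      field_simp)
  have eFk : ∀ k : ℕ, (∫ t in (0:ℝ)..1, F k t) = Complex.betaIntegral (u + k) (v + 1) := by
    intro k
    rw [Complex.betaIntegral]
    simp [hF, add_sub_cancel_right]
  have ef : (∫ t in (0:ℝ)..1, f t) = Complex.betaIntegral u v := rfl
  rw [show (fun k : ℕ => Complex.betaIntegral (u + k) (v + 1))
      = fun k : ℕ => ∫ t in (0:ℝ)..1, F k t from funext fun k => (eFk k).symm, ← ef]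
  exact key

theorem stmt_3 (α : ℂ) (hα : 0 < α.re) (m : ℕ) (n₀ : ℤ) (hn₀ : -1 ≤ n₀) :
    (1 / ((m : ℂ) + α)) *
        (Complex.Gamma ((m : ℂ) + α + 1) * Complex.Gamma ((n₀ : ℂ) + α + 1) /
          Complex.Gamma ((m : ℂ) + (n₀ : ℂ) + 2 * α + 1)) =
      ∑' k : ℕ, (1 / (((n₀ + 1 + k : ℤ) : ℂ) + α)) *
        (Complex.Gamma ((m : ℂ) + α + 1) * Complex.Gamma (((n₀ + 1 + k : ℤ) : ℂ) + α + 1) /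
          Complex.Gamma ((m : ℂ) + ((n₀ + 1 + k : ℤ) : ℂ) + 2 * α + 1)) := by
  set v : ℂ := (m : ℂ) + α with hvdef
  set u : ℂ := (n₀ : ℂ) + α + 1 with hudef
  have hv : 0 < v.re := by
    rw [hvdef, Complex.add_re, Complex.natCast_re]; positivity
  have hu : 0 < u.re := by
    rw [hudef]
    simp only [Complex.add_re, Complex.intCast_re, Complex.one_re]
    have : (-1 : ℝ) ≤ (n₀ : ℝ) := by exact_mod_cast hn₀
    linarith
  have hv1 : 0 < (v + 1).re := by rw [Complex.add_re, Complex.one_re]; positivity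
  have hvne : v ≠ 0 := by
    intro h; rw [h] at hv; simp at hv
  have hukre : ∀ k : ℕ, 0 < (u + k).re := by
    intro k; rw [Complex.add_re, Complex.natCast_re]; positivity
  have hukne : ∀ k : ℕ, u + (k : ℂ) ≠ 0 := by
    intro k h; have := hukre k; rw [h] at this; simp at this
  refine Eq.trans ?_ (Eq.trans (hasSum_beta hu hv).tsum_eq.symm (tsum_congr fun k => ?_))
  · rw [beta_formula hu hv,
      show (m : ℂ) + (n₀ : ℂ) + 2 * α + 1 = u + v by rw [hudef, hvdef]; ring,
      Complex.Gamma_add_one v hvne]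
    linear_combination (Complex.Gamma u * Complex.Gamma v /
      Complex.Gamma (u + v)) * mul_inv_cancel₀ hvne
  · have hcast : ((n₀ + 1 + k : ℤ) : ℂ) = (n₀ : ℂ) + 1 + (k : ℂ) := by push_cast; ring
    rw [hcast,
      show (n₀ : ℂ) + 1 + (k : ℂ) + α = u + k by rw [hudef]; ring,
      show (m : ℂ) + ((n₀ : ℂ) + 1 + (k : ℂ)) + 2 * α + 1 = (u + k) + (v + 1) by
        rw [hudef, hvdef]; ring,
      beta_formula (hukre k) hv1, Complex.Gamma_add_one _ (hukne k)]
    linear_combination (-(Complex.Gamma (u + (k:ℂ)) * Complex.Gamma (v + 1) /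
      Complex.Gamma (u + (k:ℂ) + (v + 1)))) * mul_inv_cancel₀ (hukne k)
end

section
/- For a complex number α with Re(α) > 0, a nonnegative integer n_s, and an integer m_{r-1} ≥ -1, the telescoping identity holds: Σ_{m > m_{r-1}} (1/(m+α)) · Γ(m+α+1)Γ(n_s+α+1)/Γ(m+n_s+2α+1) = (1/(n_s+α)) · Γ(m_{r-1}+α+1)Γ(n_s+α+1)/Γ(m_{r-1}+n_s+2α+1), where the sum is over integers m > m_{r-1}. -/
open MeasureTheory Set Complex
open scoped ENNReal NNReal

lemma aux_meas (c d : ℂ) : AEStronglyMeasurable (fun x:ℝ => (x:ℂ)^c * (1-(x:ℂ))^d)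
    (volume.restrict (Ioo (0:ℝ) 1)) := by
  apply ContinuousOn.aestronglyMeasurable _ measurableSet_Ioo
  intro x hx
  apply ContinuousAt.continuousWithinAt
  apply ContinuousAt.mul
  · exact continuousAt_ofReal_cpow_const x c (Or.inr (ne_of_gt hx.1))
  · have h1 : ContinuousAt (fun t:ℝ => (t:ℂ)^d) (1-x) :=
      continuousAt_ofReal_cpow_const _ d (Or.inr (by linarith [hx.2]))
    have h2 : ContinuousAt (fun x:ℝ => 1-x) x := by fun_prop
    have h3 := h1.comp h2
    have : (fun t:ℝ => (t:ℂ)^d) ∘ (fun x:ℝ => 1-x) = fun x:ℝ => (1-(x:ℂ))^d := by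
      ext y; simp [Function.comp]
    rwa [this] at h3

lemma aux_norm {x : ℝ} (hx : x ∈ Ioo (0:ℝ) 1) (c d : ℂ) :
    ‖(x:ℂ)^c * (1-(x:ℂ))^d‖ = x ^ c.re * (1-x) ^ d.re := by
  have h2 : (0:ℝ) < 1 - x := by linarith [hx.2]
  rw [norm_mul, Complex.norm_cpow_eq_rpow_re_of_pos hx.1]
  congr 1
  rw [show (1:ℂ) - (x:ℂ) = ((1-x:ℝ):ℂ) by push_cast; ring,
    Complex.norm_cpow_eq_rpow_re_of_pos h2]

lemma hbeta (u v : ℂ) : Complex.betaIntegral u v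
    = ∫ x in Ioo (0:ℝ) 1, (x:ℂ)^(u-1) * (1-(x:ℂ))^(v-1) := by
  rw [Complex.betaIntegral, intervalIntegral.integral_of_le zero_le_one,
    MeasureTheory.integral_Ioc_eq_integral_Ioo]

lemma beta_tsum (α β : ℂ) (hα : 0 < α.re) (hβ : 0 < β.re) :
    ∑' k : ℕ, Complex.betaIntegral (α + k) (β + 1) = Complex.betaIntegral α β := by
  set f : ℕ → ℝ → ℂ := fun k x => (x:ℂ)^(α + k - 1) * (1-(x:ℂ))^β with hf
  have hmeas : ∀ k, AEStronglyMeasurable (f k) (volume.restrict (Ioo (0:ℝ) 1)) :=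
    fun k => aux_meas _ _
  have hfin : ∑' k, ∫⁻ x in Ioo (0:ℝ) 1, ‖f k x‖₊ ≠ ⊤ := by
    rw [← MeasureTheory.lintegral_tsum (f := fun k x => (‖f k x‖₊ : ℝ≥0∞)) (fun k => (hmeas k).enorm)]
    have hptwise : ∀ x ∈ Ioo (0:ℝ) 1, (∑' k, (‖f k x‖₊ : ℝ≥0∞))
        = ENNReal.ofReal (x ^ (α.re - 1) * (1-x) ^ (β.re - 1)) := by
      intro x hx
      have h1 : (0:ℝ) < x := hx.1
      have hx1 : x < 1 := hx.2
      have h2 : (0:ℝ) < 1 - x := by linarith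
      have hnorm : ∀ k : ℕ, ‖f k x‖ = (x ^ (α.re - 1) * (1-x) ^ β.re) * x ^ k := by
        intro k
        rw [hf]
        simp only []
        rw [aux_norm hx]
        have h3 : (α + k - 1).re = (α.re - 1) + k := by
          simp [Complex.add_re, Complex.sub_re]; ring
        rw [h3, Real.rpow_add h1, Real.rpow_natCast]
        ring
      have hsummable : Summable (fun k : ℕ => ‖f k x‖) := by
        refine Summable.congr (f := fun k : ℕ => (x ^ (α.re - 1) * (1-x) ^ β.re) * x ^ k)
          (Summable.mul_left _ (summable_geometric_of_lt_one h1.le hx1)) fun k => (hnorm k).symm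
      calc (∑' k, (‖f k x‖₊ : ℝ≥0∞)) = ∑' k, ENNReal.ofReal (‖f k x‖) :=
            tsum_congr fun k => (ofReal_norm _).symm
        _ = ENNReal.ofReal (∑' k, ‖f k x‖) :=
            (ENNReal.ofReal_tsum_of_nonneg (fun k => norm_nonneg _) hsummable).symm
        _ = ENNReal.ofReal (x ^ (α.re - 1) * (1-x) ^ (β.re - 1)) := by
            congr 1
            rw [tsum_congr hnorm, tsum_mul_left, tsum_geometric_of_lt_one h1.le hx1,
              Real.rpow_sub h2, Real.rpow_one]
            field_simp
    rw [setLIntegral_congr_fun_ae measurableSet_Ioo (ae_of_all _ hptwise)]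
    have hInt : IntervalIntegrable
        (fun x:ℝ => (x:ℂ)^((α.re:ℂ)-1) * (1-(x:ℂ))^((β.re:ℂ)-1)) volume 0 1 :=
      Complex.betaIntegral_convergent (by simpa) (by simpa)
    have hInt2 : IntegrableOn
        (fun x:ℝ => (x:ℂ)^((α.re:ℂ)-1) * (1-(x:ℂ))^((β.re:ℂ)-1)) (Ioo (0:ℝ) 1) :=
      ((intervalIntegrable_iff_integrableOn_Ioc_of_le zero_le_one).mp hInt).mono_set
        Ioo_subset_Ioc_self
    have hfi := hInt2.hasFiniteIntegral
    rw [HasFiniteIntegral] at hfi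
    refine ne_of_lt (lt_of_le_of_lt (le_of_eq ?_) hfi)
    refine setLIntegral_congr_fun_ae measurableSet_Ioo (ae_of_all _ fun x hx => ?_)
    rw [← ofReal_norm, aux_norm hx]
    norm_num
  have hsum := MeasureTheory.integral_tsum hmeas hfin
  calc ∑' (k:ℕ), Complex.betaIntegral (α+k) (β+1)
      = ∑' k, ∫ x in Ioo (0:ℝ) 1, f k x := by
        refine tsum_congr fun k => ?_
        rw [hbeta]
        simp only [add_sub_cancel_right, hf]
    _ = ∫ x in Ioo (0:ℝ) 1, ∑' k, f k x := hsum.symm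
    _ = ∫ x in Ioo (0:ℝ) 1, (x:ℂ)^(α-1) * (1-(x:ℂ))^(β-1) := by
        refine setIntegral_congr_fun measurableSet_Ioo fun x hx => ?_
        have h1 : (0:ℝ) < x := hx.1
        have h2 : (0:ℝ) < 1 - x := by linarith [hx.2]
        have hx0 : (x:ℂ) ≠ 0 := by exact_mod_cast h1.ne'
        have hx1c : (1:ℂ) - (x:ℂ) ≠ 0 := by
          rw [show (1:ℂ) - (x:ℂ) = ((1-x:ℝ):ℂ) by push_cast; ring]
          exact_mod_cast h2.ne'
        have hterm : ∀ k : ℕ, f k x = ((x:ℂ)^(α-1) * (1-(x:ℂ))^β) * (x:ℂ)^k := by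
          intro k
          rw [hf]
          simp only []
          rw [show α + (k:ℂ) - 1 = (α - 1) + (k:ℂ) by ring,
            Complex.cpow_add _ _ hx0, Complex.cpow_natCast]
          ring
        rw [tsum_congr hterm, tsum_mul_left,
          tsum_geometric_of_norm_lt_one (by simpa [abs_of_pos h1] using hx.2),
          Complex.cpow_sub _ _ hx1c, Complex.cpow_one]
        field_simp
    _ = Complex.betaIntegral α β := (hbeta α β).symm


theorem stmt_4 (α : ℂ) (hα : 0 < α.re) (ns : ℕ) (m₀ : ℤ) (hm₀ : -1 ≤ m₀) :
    (∑' k : ℕ, (1 / (((m₀ + 1 + k : ℤ) : ℂ) + α)) *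
        (Complex.Gamma (((m₀ + 1 + k : ℤ) : ℂ) + α + 1) * Complex.Gamma ((ns : ℂ) + α + 1) /
          Complex.Gamma (((m₀ + 1 + k : ℤ) : ℂ) + (ns : ℂ) + 2 * α + 1))) =
      (1 / ((ns : ℂ) + α)) *
        (Complex.Gamma ((m₀ : ℂ) + α + 1) * Complex.Gamma ((ns : ℂ) + α + 1) /
          Complex.Gamma ((m₀ : ℂ) + (ns : ℂ) + 2 * α + 1)) := by
  set A : ℂ := (m₀:ℂ) + 1 + α with hA_def
  set w : ℂ := (ns:ℂ) + α with hw_def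
  have hm₀' : (0:ℝ) ≤ (m₀:ℝ) + 1 := by
    have h : (0:ℤ) ≤ m₀ + 1 := by linarith
    exact_mod_cast h
  have hA : 0 < A.re := by
    simp only [hA_def, Complex.add_re, Complex.intCast_re, Complex.one_re]
    linarith
  have hw : 0 < w.re := by
    simp only [hw_def, Complex.add_re, Complex.natCast_re]
    have : (0:ℝ) ≤ (ns:ℝ) := Nat.cast_nonneg ns
    linarith
  have hw0 : w ≠ 0 := fun h => by simp [h] at hw
  have hterm : ∀ k : ℕ, (1 / (((m₀ + 1 + k : ℤ) : ℂ) + α)) *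
        (Complex.Gamma (((m₀ + 1 + k : ℤ) : ℂ) + α + 1) * Complex.Gamma ((ns : ℂ) + α + 1) /
          Complex.Gamma (((m₀ + 1 + k : ℤ) : ℂ) + (ns : ℂ) + 2 * α + 1)) =
        Complex.betaIntegral (A + k) (w + 1) := by
    intro k
    have hcast : ((m₀ + 1 + k : ℤ) : ℂ) = (m₀:ℂ) + 1 + (k:ℂ) := by push_cast; ring
    have hu : 0 < (A + (k:ℂ)).re := by
      simp only [Complex.add_re, Complex.natCast_re]
      have : (0:ℝ) ≤ (k:ℝ) := Nat.cast_nonneg k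
      linarith
    have hu0 : A + (k:ℂ) ≠ 0 := fun h => by simp [h] at hu
    have hv : 0 < (w + 1).re := by
      simp only [Complex.add_re, Complex.one_re]; linarith
    have hden : 0 < ((A + (k:ℂ)) + (w + 1)).re := by
      have hk : (0:ℝ) ≤ (k:ℝ) := Nat.cast_nonneg k
      simp only [Complex.add_re, Complex.one_re, Complex.natCast_re]; linarith
    have hdnz := Complex.Gamma_ne_zero_of_re_pos hden
    have hBeta := Complex.Gamma_mul_Gamma_eq_betaIntegral hu hv
    have e2 : ((m₀ + 1 + k : ℤ) : ℂ) + α + 1 = (A + (k:ℂ)) + 1 := by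
      rw [hcast, hA_def]; ring
    have e3 : ((m₀ + 1 + k : ℤ) : ℂ) + (ns : ℂ) + 2 * α + 1 = (A + (k:ℂ)) + (w + 1) := by
      rw [hcast, hA_def, hw_def]; ring
    have e4 : ((ns : ℂ) + α + 1) = w + 1 := by rw [hw_def]
    rw [e2, e3, e4, hcast, show (m₀:ℂ) + 1 + (k:ℂ) + α = A + (k:ℂ) by rw [hA_def]; ring,
      Complex.Gamma_add_one _ hu0, mul_assoc, hBeta]
    field_simp
  rw [tsum_congr hterm, beta_tsum A w hA hw]
  -- now RHS
  have hdenR : 0 < (A + w).re := by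
    simp only [Complex.add_re]; linarith
  have hdnzR := Complex.Gamma_ne_zero_of_re_pos hdenR
  have hBetaR := Complex.Gamma_mul_Gamma_eq_betaIntegral hA hw
  have f2 : (m₀ : ℂ) + α + 1 = A := by rw [hA_def]; ring
  have f3 : (m₀ : ℂ) + (ns : ℂ) + 2 * α + 1 = A + w := by rw [hA_def, hw_def]; ring
  have f4 : ((ns : ℂ) + α + 1) = w + 1 := by rw [hw_def]
  rw [f2, f3, f4, Complex.Gamma_add_one _ hw0]
  rw [show Complex.Gamma A * (w * Complex.Gamma w) = w * (Complex.Gamma A * Complex.Gamma w) by ring,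
    hBetaR]
  field_simp
end

section
/- For a complex number α with Re(α) > 0, a complex number x with Re(α - x) > 0, and nonnegative integers m_r, n_{s-1} (or n_{s-1} = -1), one has (1/(m_r+α)) · Γ(m_r+α-x+1)Γ(n_{s-1}+α-x+1)/Γ(m_r+n_{s-1}+2α-x+1) = Σ_{n > n_{s-1}} (1/(n+α-x)) · Γ(m_r+α-x+1)Γ(n+α-x+1)/Γ(m_r+n+2α-x+1), where the sum is over integers n > n_{s-1}. -/
open Complex Filter Finset

-- complex telescoping step
lemma pco_gamma_step (β γ : ℂ) (hβ : 0 < β.re) (hγ : 0 < γ.re) :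
    (1 / β) * (Complex.Gamma (β + 1) / Complex.Gamma (β + γ + 1)) =
      (1 / γ) * (Complex.Gamma β / Complex.Gamma (β + γ) -
        Complex.Gamma (β + 1) / Complex.Gamma (β + γ + 1)) := by
  have hβ0 : β ≠ 0 := by intro h; rw [h] at hβ; simp at hβ
  have hγ0 : γ ≠ 0 := by intro h; rw [h] at hγ; simp at hγ
  have hβγre : 0 < (β + γ).re := by rw [Complex.add_re]; linarith
  have hβγ0 : β + γ ≠ 0 := by intro h; rw [h] at hβγre; simp at hβγre
  have hG : Complex.Gamma (β + γ) ≠ 0 := Complex.Gamma_ne_zero_of_re_pos hβγre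
  rw [Complex.Gamma_add_one β hβ0, Complex.Gamma_add_one (β + γ) hβγ0]
  field_simp
  ring

-- real telescoping step
lemma pco_real_step (b d : ℝ) (hb : 0 < b) (hd : 0 < d) :
    Real.Gamma b / Real.Gamma (b + d) - Real.Gamma (b + 1) / Real.Gamma (b + d + 1) =
      (d / b) * (Real.Gamma (b + 1) / Real.Gamma (b + d + 1)) := by
  have hbd : (0:ℝ) < b + d := by linarith
  have h1 : Real.Gamma (b + d) ≠ 0 := (Real.Gamma_pos_of_pos hbd).ne'
  rw [Real.Gamma_add_one hb.ne', show b + d + 1 = (b + d) + 1 by ring,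
    Real.Gamma_add_one hbd.ne']
  field_simp
  ring

lemma pco_ratio_pos {b d : ℝ} (hb : 0 < b) (hd : 0 < d) :
    0 < Real.Gamma b / Real.Gamma (b + d) :=
  div_pos (Real.Gamma_pos_of_pos hb) (Real.Gamma_pos_of_pos (by linarith))

lemma pco_summable (a d : ℝ) (ha : 0 < a) (hd : 0 < d) :
    Summable (fun k : ℕ =>
      (1 / (a + k)) * (Real.Gamma (a + k + 1) / Real.Gamma (a + k + 1 + d))) := by
  set h : ℕ → ℝ := fun k => Real.Gamma (a + k) / Real.Gamma (a + k + d) with hh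
  have hpos : ∀ k : ℕ, 0 < h k := fun k => pco_ratio_pos (by positivity) hd
  have hsucc : ∀ k : ℕ, h (k + 1) = Real.Gamma (a + k + 1) / Real.Gamma (a + k + 1 + d) := by
    intro k
    simp only [hh, Nat.cast_add, Nat.cast_one, ← add_assoc]
  have hstep : ∀ k : ℕ, (1 / (a + k)) * (Real.Gamma (a + k + 1) / Real.Gamma (a + k + 1 + d))
      = (1 / d) * (h k - h (k + 1)) := by
    intro k
    have hak : (0:ℝ) < a + k := by positivity
    have hrs := pco_real_step (a + k) d hak hd
    rw [hsucc k, hh]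
    simp only []
    rw [show a + (k:ℝ) + 1 + d = a + (k:ℝ) + d + 1 by ring, hrs]
    field_simp
  apply summable_of_sum_range_le (c := (1 / d) * h 0)
  · intro k
    have hak : (0:ℝ) < a + k := by positivity
    have h1 : 0 < Real.Gamma (a + k + 1) / Real.Gamma (a + k + 1 + d) := by
      rw [← hsucc k]; exact hpos (k + 1)
    positivity
  · intro n
    have e : ∀ k ∈ Finset.range n, (1 / (a + k)) *
        (Real.Gamma (a + k + 1) / Real.Gamma (a + k + 1 + d))
          = (1 / d) * h k - (1 / d) * h (k + 1) := by
      intro k _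
      rw [hstep k]; ring
    rw [Finset.sum_congr rfl e, Finset.sum_range_sub']
    have h0 : 0 ≤ (1 / d) * h n := mul_nonneg (by positivity) (hpos n).le
    linarith

lemma pco_tendsto (a d : ℝ) (ha : 0 < a) (hd : 0 < d) :
    Tendsto (fun k : ℕ => Real.Gamma (a + k) / Real.Gamma (a + k + d)) atTop (nhds 0) := by
  set h : ℕ → ℝ := fun k => Real.Gamma (a + k) / Real.Gamma (a + k + d) with hh
  have hpos : ∀ k : ℕ, 0 < h k := fun k => pco_ratio_pos (by positivity) hd
  have hsucc : ∀ k : ℕ, h (k + 1) = Real.Gamma (a + k + 1) / Real.Gamma (a + k + 1 + d) := by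
    intro k
    simp only [hh, Nat.cast_add, Nat.cast_one, ← add_assoc]
  have hstep : ∀ k : ℕ, h k - h (k + 1) = (d / (a + k)) * h (k + 1) := by
    intro k
    have hak : (0:ℝ) < a + k := by positivity
    have hrs := pco_real_step (a + k) d hak hd
    rw [hsucc k, hh]
    simp only []
    rw [show a + (k:ℝ) + 1 + d = a + (k:ℝ) + d + 1 by ring, hrs]
  have hanti : Antitone h := by
    apply antitone_nat_of_succ_le
    intro k
    have hak : (0:ℝ) < a + k := by positivity
    have h2 := hpos (k + 1)
    have h3 := hstep k
    nlinarith [div_pos hd hak]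
  have hbdd : BddBelow (Set.range h) := ⟨0, fun y ⟨k, hk⟩ => hk ▸ (hpos k).le⟩
  have htend : Tendsto h atTop (nhds (⨅ k, h k)) := tendsto_atTop_ciInf hanti hbdd
  have hL0 : 0 ≤ ⨅ k, h k := le_ciInf fun k => (hpos k).le
  rcases eq_or_lt_of_le hL0 with hL | hL
  · rwa [← hL] at htend
  · exfalso
    set L := ⨅ k, h k with hLdef
    have hsum := pco_summable a d ha hd
    have hcomp : Summable (fun k : ℕ => 1 / (a + k)) := by
      apply Summable.of_nonneg_of_le (fun k => by positivity)
        (fun k => ?_) (hsum.mul_left (1 / L))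
      have hLle : L ≤ Real.Gamma (a + k + 1) / Real.Gamma (a + k + 1 + d) := by
        rw [← hsucc k]; exact ciInf_le hbdd (k + 1)
      have hak : (0:ℝ) < a + k := by positivity
      have step1 : (1:ℝ) / (a + k) = (1 / L) * (L * (1 / (a + k))) := by field_simp
      have step2 : L * (1 / (a + k)) ≤
          (1 / (a + k)) * (Real.Gamma (a + k + 1) / Real.Gamma (a + k + 1 + d)) := by
        rw [mul_comm]
        exact mul_le_mul_of_nonneg_left hLle (by positivity)
      calc (1:ℝ) / (a + k) = (1 / L) * (L * (1 / (a + k))) := step1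
        _ ≤ (1 / L) * ((1 / (a + k)) *
            (Real.Gamma (a + k + 1) / Real.Gamma (a + k + 1 + d))) :=
          mul_le_mul_of_nonneg_left step2 (by positivity)
    have hnot : ¬ Summable (fun k : ℕ => 1 / (a + k)) := by
      intro hS
      have h2 : Summable (fun k : ℕ => (1 / (a + 1)) * (1 / ((k : ℝ) + 1))) := by
        apply Summable.of_nonneg_of_le (fun k => by positivity) (fun k => ?_) hS
        have hk0 : (0:ℝ) ≤ (k : ℝ) := Nat.cast_nonneg k
        have e : (1 / (a + 1)) * (1 / ((k : ℝ) + 1)) = 1 / ((a + 1) * ((k : ℝ) + 1)) := by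
          rw [div_mul_div_comm, one_mul]
        rw [e]
        apply one_div_le_one_div_of_le (by positivity)
        nlinarith
      have h3 : Summable (fun k : ℕ => 1 / ((k : ℝ) + 1)) := by
        have hne : (1 / (a + 1) : ℝ) ≠ 0 := by positivity
        exact (summable_mul_left_iff hne).mp h2
      have h4 : Summable (fun k : ℕ => 1 / ((k + 1 : ℕ) : ℝ)) := by
        simpa [Nat.cast_add, Nat.cast_one] using h3
      exact Real.not_summable_one_div_natCast ((summable_nat_add_iff 1).mp h4)
    exact hnot hcomp

lemma pco_realBeta_eq (p q : ℝ) (hp : 0 < p) (hq : 0 < q) :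
    Complex.betaIntegral (p : ℂ) (q : ℂ) =
      ((Real.Gamma p * Real.Gamma q / Real.Gamma (p + q) : ℝ) : ℂ) := by
  have h := Complex.Gamma_mul_Gamma_eq_betaIntegral (s := (p : ℂ)) (t := (q : ℂ))
    (by simpa using hp) (by simpa using hq)
  rw [← Complex.ofReal_add, Complex.Gamma_ofReal, Complex.Gamma_ofReal, Complex.Gamma_ofReal] at h
  have hpq : Real.Gamma (p + q) ≠ 0 := (Real.Gamma_pos_of_pos (by linarith)).ne'
  have hpq' : ((Real.Gamma (p + q) : ℝ) : ℂ) ≠ 0 := by exact_mod_cast hpq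
  rw [Complex.ofReal_div, Complex.ofReal_mul, eq_div_iff hpq', mul_comm]
  exact h.symm

lemma pco_beta_norm_le (v w : ℂ) (hv : 0 < v.re) (hw : 0 < w.re) :
    ‖Complex.betaIntegral v w‖ ≤
      Real.Gamma v.re * Real.Gamma w.re / Real.Gamma (v.re + w.re) := by
  set g : ℝ → ℂ := fun t => (t : ℂ) ^ ((v.re : ℂ) - 1) * (1 - (t : ℂ)) ^ ((w.re : ℂ) - 1) with hg
  have hgint : IntervalIntegrable g MeasureTheory.volume 0 1 :=
    Complex.betaIntegral_convergent (by simpa using hv) (by simpa using hw)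
  have h1 : ∀ᵐ t : ℝ, t ≠ 1 := by
    have := MeasureTheory.compl_mem_ae_iff.mpr (Real.volume_singleton (a := 1))
    filter_upwards [this] with t ht
    simpa using ht
  have hIoo : ∀ᵐ t ∂(MeasureTheory.volume.restrict (Set.uIoc (0:ℝ) 1)),
      t ∈ Set.Ioo (0:ℝ) 1 := by
    have h2 := MeasureTheory.ae_restrict_of_ae (μ := MeasureTheory.volume)
      (s := Set.uIoc (0:ℝ) 1) h1
    have h3 := MeasureTheory.ae_restrict_mem (μ := MeasureTheory.volume)
      (s := Set.uIoc (0:ℝ) 1) measurableSet_uIoc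
    filter_upwards [h2, h3] with t ht1 ht2
    rw [Set.uIoc_of_le zero_le_one] at ht2
    exact ⟨ht2.1, lt_of_le_of_ne ht2.2 ht1⟩
  have hGnorm : ∀ t : ℝ, t ∈ Set.Ioo (0:ℝ) 1 →
      ‖g t‖ = t ^ (v.re - 1) * (1 - t) ^ (w.re - 1) := by
    intro t ht
    rw [hg]
    simp only [norm_mul]
    rw [Complex.norm_cpow_eq_rpow_re_of_pos ht.1,
      show (1 : ℂ) - (t : ℂ) = ((1 - t : ℝ) : ℂ) by push_cast; ring,
      Complex.norm_cpow_eq_rpow_re_of_pos (by linarith [ht.2])]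
    simp [Complex.sub_re, Complex.ofReal_re, Complex.one_re]
  have hgofReal : ∀ t : ℝ, t ∈ Set.Ioo (0:ℝ) 1 →
      g t = ((t ^ (v.re - 1) * (1 - t) ^ (w.re - 1) : ℝ) : ℂ) := by
    intro t ht
    rw [hg]
    simp only []
    rw [show ((v.re : ℂ) - 1) = ((v.re - 1 : ℝ) : ℂ) by push_cast; ring,
      show ((w.re : ℂ) - 1) = ((w.re - 1 : ℝ) : ℂ) by push_cast; ring,
      show (1 : ℂ) - (t : ℂ) = ((1 - t : ℝ) : ℂ) by push_cast; ring,
      ← Complex.ofReal_cpow ht.1.le,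
      ← Complex.ofReal_cpow (by linarith [ht.2] : (0:ℝ) ≤ 1 - t),
      ← Complex.ofReal_mul]
  have key : ‖Complex.betaIntegral v w‖ ≤ |∫ t in (0:ℝ)..1, ‖g t‖| := by
    rw [Complex.betaIntegral]
    apply intervalIntegral.norm_integral_le_abs_of_norm_le _ hgint.norm
    filter_upwards [hIoo] with t ht
    have hnf : ‖(t : ℂ) ^ (v - 1) * (1 - (t : ℂ)) ^ (w - 1)‖
        = t ^ (v.re - 1) * (1 - t) ^ (w.re - 1) := by
      simp only [norm_mul]
      rw [Complex.norm_cpow_eq_rpow_re_of_pos ht.1,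
        show (1 : ℂ) - (t : ℂ) = ((1 - t : ℝ) : ℂ) by push_cast; ring,
        Complex.norm_cpow_eq_rpow_re_of_pos (by linarith [ht.2])]
      simp [Complex.sub_re, Complex.one_re]
    rw [hnf, hGnorm t ht]
  have hval : (∫ t in (0:ℝ)..1, ‖g t‖) =
      Real.Gamma v.re * Real.Gamma w.re / Real.Gamma (v.re + w.re) := by
    have h5 : ∫ t in (0:ℝ)..1, ((‖g t‖ : ℝ) : ℂ) = Complex.betaIntegral (v.re : ℂ) (w.re : ℂ) := by
      rw [Complex.betaIntegral]
      apply intervalIntegral.integral_congr_ae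
      filter_upwards [h1] with t ht1
      intro ht2
      rw [Set.uIoc_of_le zero_le_one] at ht2
      have htIoo : t ∈ Set.Ioo (0:ℝ) 1 := ⟨ht2.1, lt_of_le_of_ne ht2.2 ht1⟩
      rw [hGnorm t htIoo, ← hgofReal t htIoo]
    have h6 : ∫ t in (0:ℝ)..1, ((‖g t‖ : ℝ) : ℂ) = ((∫ t in (0:ℝ)..1, ‖g t‖ : ℝ) : ℂ) :=
      intervalIntegral.integral_ofReal
    rw [h6, pco_realBeta_eq v.re w.re hv hw] at h5
    exact_mod_cast h5
  rw [hval] at key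
  have hratio : 0 ≤ Real.Gamma v.re * Real.Gamma w.re / Real.Gamma (v.re + w.re) :=
    le_of_lt (div_pos (mul_pos (Real.Gamma_pos_of_pos hv) (Real.Gamma_pos_of_pos hw))
      (Real.Gamma_pos_of_pos (by linarith)))
  rwa [_root_.abs_of_nonneg hratio] at key

lemma pco_re_calc (α x : ℂ) (n₀ : ℤ) (k : ℕ) :
    ((n₀ : ℂ) + 1 + (k : ℂ) + α - x).re = (n₀ : ℝ) + 1 + k + (α - x).re := by
  simp [Complex.add_re, Complex.sub_re]
  ring

lemma pco_step_main (α x : ℂ) (hα : 0 < α.re) (hαx : 0 < (α - x).re)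
    (m : ℕ) (n₀ : ℤ) (hn₀ : -1 ≤ n₀) (k : ℕ) :
    (1 / (((n₀ + 1 + k : ℤ) : ℂ) + α - x)) *
        (Complex.Gamma ((m : ℂ) + α - x + 1) * Complex.Gamma (((n₀ + 1 + k : ℤ) : ℂ) + α - x + 1) /
          Complex.Gamma ((m : ℂ) + ((n₀ + 1 + k : ℤ) : ℂ) + 2 * α - x + 1)) =
      (1 / ((m : ℂ) + α)) *
        (Complex.Gamma ((m : ℂ) + α - x + 1) * Complex.Gamma ((n₀ : ℂ) + (k : ℂ) + α - x + 1) /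
          Complex.Gamma ((m : ℂ) + ((n₀ : ℂ) + (k : ℂ)) + 2 * α - x + 1)) -
      (1 / ((m : ℂ) + α)) *
        (Complex.Gamma ((m : ℂ) + α - x + 1) * Complex.Gamma ((n₀ : ℂ) + ((k : ℂ) + 1) + α - x + 1) /
          Complex.Gamma ((m : ℂ) + ((n₀ : ℂ) + ((k : ℂ) + 1)) + 2 * α - x + 1)) := by
  have hn₀' : (-1 : ℝ) ≤ (n₀ : ℝ) := by exact_mod_cast hn₀
  have hk : (0 : ℝ) ≤ (k : ℝ) := Nat.cast_nonneg k
  have h1 : 0 < ((n₀ : ℂ) + 1 + (k : ℂ) + α - x).re := by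
    rw [pco_re_calc]
    linarith
  have h2 : 0 < ((m : ℂ) + α).re := by
    rw [Complex.add_re, Complex.natCast_re]
    have : (0 : ℝ) ≤ (m : ℝ) := Nat.cast_nonneg m
    linarith
  have h := pco_gamma_step ((n₀ : ℂ) + 1 + (k : ℂ) + α - x) ((m : ℂ) + α) h1 h2
  rw [show ((n₀ + 1 + (k : ℕ) : ℤ) : ℂ) + α - x + 1 = ((n₀ : ℂ) + 1 + (k : ℂ) + α - x) + 1 by
      push_cast; ring,
    show ((n₀ + 1 + (k : ℕ) : ℤ) : ℂ) + α - x = ((n₀ : ℂ) + 1 + (k : ℂ) + α - x) by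
      push_cast; ring,
    show (m : ℂ) + ((n₀ + 1 + (k : ℕ) : ℤ) : ℂ) + 2 * α - x + 1 =
        ((n₀ : ℂ) + 1 + (k : ℂ) + α - x) + ((m : ℂ) + α) + 1 by push_cast; ring,
    show (n₀ : ℂ) + (k : ℂ) + α - x + 1 = ((n₀ : ℂ) + 1 + (k : ℂ) + α - x) by ring,
    show (m : ℂ) + ((n₀ : ℂ) + (k : ℂ)) + 2 * α - x + 1 =
        ((n₀ : ℂ) + 1 + (k : ℂ) + α - x) + ((m : ℂ) + α) by ring,
    show (n₀ : ℂ) + ((k : ℂ) + 1) + α - x + 1 = ((n₀ : ℂ) + 1 + (k : ℂ) + α - x) + 1 by ring,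
    show (m : ℂ) + ((n₀ : ℂ) + ((k : ℂ) + 1)) + 2 * α - x + 1 =
        ((n₀ : ℂ) + 1 + (k : ℂ) + α - x) + ((m : ℂ) + α) + 1 by ring]
  linear_combination Complex.Gamma ((m : ℂ) + α - x + 1) * h

lemma pco_gamma_ratio_norm_le (v w : ℂ) (hv : 0 < v.re) (hw : 0 < w.re) :
    ‖Complex.Gamma v / Complex.Gamma (v + w)‖ ≤
      (Real.Gamma v.re * Real.Gamma w.re / Real.Gamma (v.re + w.re)) / ‖Complex.Gamma w‖ := by
  have hvw : 0 < (v + w).re := by rw [Complex.add_re]; linarith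
  have hVW : Complex.Gamma (v + w) ≠ 0 := Complex.Gamma_ne_zero_of_re_pos hvw
  have hW : Complex.Gamma w ≠ 0 := Complex.Gamma_ne_zero_of_re_pos hw
  have hbeta := Complex.Gamma_mul_Gamma_eq_betaIntegral hv hw
  have heq : Complex.Gamma v / Complex.Gamma (v + w)
      = Complex.betaIntegral v w / Complex.Gamma w := by
    field_simp
    linear_combination hbeta
  rw [heq, norm_div]
  gcongr
  exact pco_beta_norm_le v w hv hw

theorem stmt_5 (α x : ℂ) (hα : 0 < α.re) (hαx : 0 < (α - x).re)
    (m : ℕ) (n₀ : ℤ) (hn₀ : -1 ≤ n₀) :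
    (1 / ((m : ℂ) + α)) *
        (Complex.Gamma ((m : ℂ) + α - x + 1) * Complex.Gamma ((n₀ : ℂ) + α - x + 1) /
          Complex.Gamma ((m : ℂ) + (n₀ : ℂ) + 2 * α - x + 1)) =
      ∑' k : ℕ, (1 / (((n₀ + 1 + k : ℤ) : ℂ) + α - x)) *
        (Complex.Gamma ((m : ℂ) + α - x + 1) * Complex.Gamma (((n₀ + 1 + k : ℤ) : ℂ) + α - x + 1) /
          Complex.Gamma ((m : ℂ) + ((n₀ + 1 + k : ℤ) : ℂ) + 2 * α - x + 1)) := by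
  have hn₀' : (-1 : ℝ) ≤ (n₀ : ℝ) := by exact_mod_cast hn₀
  have hm0 : (0 : ℝ) ≤ (m : ℝ) := Nat.cast_nonneg m
  set c : ℝ := α.re - x.re with hc
  have hc0 : 0 < c := by rw [hc]; simpa [Complex.sub_re] using hαx
  set aR : ℝ := (n₀ : ℝ) + c + 1 with haR
  have haR0 : 0 < aR := by rw [haR]; linarith
  set dR : ℝ := (m : ℝ) + α.re with hdR
  have hdR0 : 0 < dR := by rw [hdR]; linarith
  have hγre : 0 < ((m : ℂ) + α).re := by rw [Complex.add_re, Complex.natCast_re]; linarith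
  have hγre' : ((m : ℂ) + α).re = dR := by rw [hdR, Complex.add_re, Complex.natCast_re]
  have hΓγ : Complex.Gamma ((m : ℂ) + α) ≠ 0 := Complex.Gamma_ne_zero_of_re_pos hγre
  set u : ℂ := Complex.Gamma ((m : ℂ) + α - x + 1) with hu
  set g : ℕ → ℂ := fun k => (1 / ((m : ℂ) + α)) *
      (u * Complex.Gamma ((n₀ : ℂ) + (k : ℂ) + α - x + 1) /
        Complex.Gamma ((m : ℂ) + ((n₀ : ℂ) + (k : ℂ)) + 2 * α - x + 1)) with hg
  set f : ℕ → ℂ := fun k => (1 / (((n₀ + 1 + k : ℤ) : ℂ) + α - x)) *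
        (u * Complex.Gamma (((n₀ + 1 + k : ℤ) : ℂ) + α - x + 1) /
          Complex.Gamma ((m : ℂ) + ((n₀ + 1 + k : ℤ) : ℂ) + 2 * α - x + 1)) with hf
  -- step identity
  have hfg : ∀ k : ℕ, f k = g k - g (k + 1) := by
    intro k
    rw [hf, hg]
    simp only [Nat.cast_add, Nat.cast_one, hu]
    exact pco_step_main α x hα hαx m n₀ hn₀ k
  -- real part computations
  have hvre : ∀ k : ℕ, ((n₀ : ℂ) + (k : ℂ) + α - x + 1).re = aR + k := by
    intro k
    rw [haR, hc]
    simp only [Complex.add_re, Complex.sub_re, Complex.one_re, Complex.intCast_re,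
      Complex.natCast_re]
    ring
  have hzre : ∀ k : ℕ, ((((n₀ + 1 + k : ℤ) : ℂ)) + α - x).re = aR + k := by
    intro k
    rw [haR, hc]
    push_cast
    simp only [Complex.add_re, Complex.sub_re, Complex.one_re, Complex.intCast_re,
      Complex.natCast_re]
    ring
  have hz're : ∀ k : ℕ, ((((n₀ + 1 + k : ℤ) : ℂ)) + α - x + 1).re = aR + k + 1 := by
    intro k
    rw [Complex.add_re, hzre k, Complex.one_re]
  -- norm bounds
  set Cg : ℝ := ‖1 / ((m : ℂ) + α)‖ * ‖u‖ * (Real.Gamma dR / ‖Complex.Gamma ((m : ℂ) + α)‖)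
    with hCg
  have hgle : ∀ k : ℕ, ‖g k‖ ≤ Cg * (Real.Gamma (aR + k) / Real.Gamma (aR + k + dR)) := by
    intro k
    have hv : 0 < ((n₀ : ℂ) + (k : ℂ) + α - x + 1).re := by
      rw [hvre k]; positivity
    have hr := pco_gamma_ratio_norm_le ((n₀ : ℂ) + (k : ℂ) + α - x + 1) ((m : ℂ) + α) hv hγre
    rw [hvre k, hγre'] at hr
    rw [hg]
    simp only []
    rw [show (m : ℂ) + ((n₀ : ℂ) + (k : ℂ)) + 2 * α - x + 1
        = ((n₀ : ℂ) + (k : ℂ) + α - x + 1) + ((m : ℂ) + α) by ring]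
    rw [mul_div_assoc, norm_mul, norm_mul]
    calc ‖1 / ((m : ℂ) + α)‖ * (‖u‖ * ‖Complex.Gamma ((n₀ : ℂ) + (k : ℂ) + α - x + 1) /
            Complex.Gamma (((n₀ : ℂ) + (k : ℂ) + α - x + 1) + ((m : ℂ) + α))‖)
        ≤ ‖1 / ((m : ℂ) + α)‖ * (‖u‖ *
            ((Real.Gamma (aR + k) * Real.Gamma dR / Real.Gamma (aR + k + dR)) /
              ‖Complex.Gamma ((m : ℂ) + α)‖)) := by
          gcongr
      _ = Cg * (Real.Gamma (aR + k) / Real.Gamma (aR + k + dR)) := by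
          rw [hCg]; ring
  have hgto : Filter.Tendsto g Filter.atTop (nhds 0) := by
    apply squeeze_zero_norm hgle
    simpa using (pco_tendsto aR dR haR0 hdR0).const_mul Cg
  set Cf : ℝ := ‖u‖ * (Real.Gamma dR / ‖Complex.Gamma ((m : ℂ) + α)‖) with hCf
  have hfle : ∀ k : ℕ, ‖f k‖ ≤ Cf * ((1 / (aR + k)) *
      (Real.Gamma (aR + k + 1) / Real.Gamma (aR + k + 1 + dR))) := by
    intro k
    have hv : 0 < ((((n₀ + 1 + k : ℤ) : ℂ)) + α - x + 1).re := by
      rw [hz're k]; positivity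
    have hr := pco_gamma_ratio_norm_le ((((n₀ + 1 + k : ℤ) : ℂ)) + α - x + 1)
      ((m : ℂ) + α) hv hγre
    rw [hz're k, hγre'] at hr
    have hzn : ‖1 / ((((n₀ + 1 + k : ℤ) : ℂ)) + α - x)‖ ≤ 1 / (aR + k) := by
      rw [norm_div, norm_one]
      apply one_div_le_one_div_of_le (by rw [← hzre k]; rw [hzre k]; positivity)
      rw [← hzre k]
      exact Complex.re_le_norm _
    rw [hf]
    simp only []
    rw [show (m : ℂ) + (((n₀ + 1 + k : ℤ) : ℂ)) + 2 * α - x + 1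
        = ((((n₀ + 1 + k : ℤ) : ℂ)) + α - x + 1) + ((m : ℂ) + α) by ring]
    rw [mul_div_assoc, norm_mul, norm_mul]
    calc ‖1 / ((((n₀ + 1 + k : ℤ) : ℂ)) + α - x)‖ *
          (‖u‖ * ‖Complex.Gamma ((((n₀ + 1 + k : ℤ) : ℂ)) + α - x + 1) /
            Complex.Gamma (((((n₀ + 1 + k : ℤ) : ℂ)) + α - x + 1) + ((m : ℂ) + α))‖)
        ≤ (1 / (aR + k)) * (‖u‖ *
            ((Real.Gamma (aR + k + 1) * Real.Gamma dR / Real.Gamma (aR + k + 1 + dR)) /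
              ‖Complex.Gamma ((m : ℂ) + α)‖)) := by
          have h1 : (0:ℝ) ≤ ‖u‖ := norm_nonneg _
          apply mul_le_mul hzn ?_ (by positivity) (by positivity)
          gcongr
      _ = Cf * ((1 / (aR + k)) *
            (Real.Gamma (aR + k + 1) / Real.Gamma (aR + k + 1 + dR))) := by
          rw [hCf]; ring
  have hsum : Summable f :=
    Summable.of_norm_bounded ((pco_summable aR dR haR0 hdR0).mul_left Cf) hfle
  -- telescoping
  have hpartial : ∀ N : ℕ, ∑ k ∈ Finset.range N, f k = g 0 - g N := by
    intro N
    rw [Finset.sum_congr rfl fun k _ => hfg k, Finset.sum_range_sub' g]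
  have h1 : Filter.Tendsto (fun N : ℕ => g 0 - g N) Filter.atTop (nhds (∑' k, f k)) :=
    hsum.hasSum.tendsto_sum_nat.congr fun N => hpartial N
  have h4 : Filter.Tendsto (fun N : ℕ => g 0 - g N) Filter.atTop (nhds (g 0)) := by
    simpa using tendsto_const_nhds.sub hgto
  have h5 : (∑' k, f k) = g 0 := tendsto_nhds_unique h1 h4
  rw [h5, hg]
  simp only [Nat.cast_zero, add_zero, hu]
end

section
/- For complex numbers α, x with Re(α) > 0 and Re(α − x) > 0, and a nonnegative integer m, the following summation holds: Σ_{n ≥ 0} (1/(n+α−x)) · ((α)_n / n!) · Γ(m+α−x+1)Γ(n+α−x+1)/Γ(m+n+2α−x+1) = (Γ(α−x)/Γ(α)) · (1/(m+α)) · (m!/(α)_m), where (α)_n := α(α+1)···(α+n−1) is the Pochhammer symbol with (α)_0 = 1. -/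
open Complex Finset

/-- Pochhammer symbol (α)_n = α(α+1)⋯(α+n−1). -/
noncomputable def cpoch (α : ℂ) (n : ℕ) : ℂ := ∏ i ∈ Finset.range n, (α + i)


open Filter MeasureTheory Set
open scoped Topology

namespace CPOaux

lemma cpoch_succ (α : ℂ) (n : ℕ) : cpoch α (n+1) = cpoch α n * (α + n) :=
  Finset.prod_range_succ _ _

lemma ne_zero_of_re_pos' {z : ℂ} (hz : 0 < z.re) : z ≠ 0 := by
  intro h; rw [h] at hz; simp at hz

lemma add_nat_re (z : ℂ) (n : ℕ) : (z + n).re = z.re + n := by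
  simp

lemma cpoch_ne_zero {α : ℂ} (hα : 0 < α.re) (n : ℕ) : cpoch α n ≠ 0 := by
  refine Finset.prod_ne_zero_iff.mpr fun i _ => ?_
  apply ne_zero_of_re_pos'
  rw [add_nat_re]
  positivity

lemma Gamma_cpoch {α : ℂ} (hα : 0 < α.re) (n : ℕ) :
    Complex.Gamma (α + n) = Complex.Gamma α * cpoch α n := by
  induction n with
  | zero => simp [cpoch]
  | succ n ih =>
    have hne : α + (n : ℂ) ≠ 0 := by
      apply ne_zero_of_re_pos'; rw [add_nat_re]; positivity
    have : α + ((n+1 : ℕ) : ℂ) = (α + n) + 1 := by push_cast; ring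
    rw [this, Complex.Gamma_add_one _ hne, ih, cpoch_succ]; ring

lemma absGamma {s : ℂ} (hs : 0 < s.re) : ‖Complex.Gamma s‖ ≤ Real.Gamma s.re := by
  rw [Complex.Gamma_eq_integral hs, Real.Gamma_eq_integral hs, Complex.GammaIntegral]
  refine (norm_integral_le_integral_norm _).trans (le_of_eq ?_)
  refine setIntegral_congr_fun measurableSet_Ioi fun t ht => ?_
  rw [norm_mul, Complex.norm_real,
    Complex.norm_cpow_eq_rpow_re_of_pos ht]
  simp [_root_.abs_of_nonneg (Real.exp_nonneg _), Complex.sub_re]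

lemma realBeta {p q : ℝ} (hp : 0 < p) (hq : 0 < q) :
    ∫ t in Set.Ioc (0:ℝ) 1, t ^ (p - 1) * (1 - t) ^ (q - 1) =
      Real.Gamma p * Real.Gamma q / Real.Gamma (p + q) := by
  have hp' : 0 < (p : ℂ).re := by simpa using hp
  have hq' : 0 < (q : ℂ).re := by simpa using hq
  have hne : Complex.Gamma ((p : ℂ) + q) ≠ 0 := by
    apply Complex.Gamma_ne_zero_of_re_pos; simp [Complex.add_re]; positivity
  have h2 : Complex.betaIntegral p q =
      ((Real.Gamma p * Real.Gamma q / Real.Gamma (p + q) : ℝ) : ℂ) := by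
    have := Complex.Gamma_mul_Gamma_eq_betaIntegral hp' hq'
    have h3 : Complex.betaIntegral p q =
        Complex.Gamma p * Complex.Gamma q / Complex.Gamma ((p : ℂ) + q) := by
      rw [eq_div_iff hne]; rw [this]; ring
    rw [h3, ← Complex.ofReal_add, Complex.Gamma_ofReal, Complex.Gamma_ofReal,
      Complex.Gamma_ofReal]
    push_cast
    ring
  have h1 : Complex.betaIntegral p q =
      ((∫ t in Set.Ioc (0:ℝ) 1, t ^ (p-1) * (1-t) ^ (q-1) : ℝ) : ℂ) := by
    rw [Complex.betaIntegral, ← intervalIntegral.integral_of_le (zero_le_one (α := ℝ))]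
    rw [show (∫ t in (0:ℝ)..1, t ^ (p-1) * (1-t) ^ (q-1)) =
      ∫ t in (0:ℝ)..1, ((t ^ (p-1) * (1-t) ^ (q-1) : ℝ)) from rfl]
    rw [← intervalIntegral.integral_ofReal]
    refine intervalIntegral.integral_congr fun t ht => ?_
    rw [Set.uIcc_of_le (zero_le_one (α := ℝ))] at ht
    push_cast
    rw [Complex.ofReal_cpow ht.1 (p-1), Complex.ofReal_cpow (by linarith [ht.2] : (0:ℝ) ≤ 1 - t) (q-1)]
    push_cast
    ring
  rw [h1] at h2
  exact_mod_cast h2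

end CPOaux

namespace CPOaux

lemma Gamma_prod {s : ℝ} (hs : 0 < s) (k : ℕ) :
    Real.Gamma (s + k) = Real.Gamma s * ∏ j ∈ Finset.range k, (s + j) := by
  induction k with
  | zero => simp
  | succ k ih =>
    have h1 : s + ((k+1 : ℕ) : ℝ) = (s + k) + 1 := by push_cast; ring
    rw [h1, Real.Gamma_add_one (by positivity), ih, Finset.prod_range_succ]; ring

/-- `Γ(s+n) * (s+n) / (n^s * n!) → 1`. -/
lemma gammaA {s : ℝ} (hs : 0 < s) :
    Tendsto (fun n : ℕ => Real.Gamma (s + n) * (s + n) / ((n:ℝ) ^ s * n.factorial))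
      atTop (𝓝 1) := by
  have h0 : Real.Gamma s ≠ 0 := (Real.Gamma_pos_of_pos hs).ne'
  have key : Tendsto (fun n : ℕ => Real.Gamma s / Real.GammaSeq s n) atTop
      (𝓝 (Real.Gamma s / Real.Gamma s)) :=
    tendsto_const_nhds.div (Real.GammaSeq_tendsto_Gamma s) h0
  rw [div_self h0] at key
  refine key.congr' ?_
  filter_upwards [eventually_ge_atTop 1] with n hn
  have hn0 : (0:ℝ) < n := by exact_mod_cast hn
  have hprod : (0:ℝ) < ∏ j ∈ Finset.range (n+1), (s + j) :=
    Finset.prod_pos fun j _ => by positivity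
  have hfact : (0:ℝ) < (n.factorial : ℝ) := by exact_mod_cast n.factorial_pos
  have hG : Real.Gamma (s + n) * (s + n) = Real.Gamma s * ∏ j ∈ Finset.range (n+1), (s + j) := by
    have h1 : s + ((n+1:ℕ):ℝ) = (s + n) + 1 := by push_cast; ring
    have := Gamma_prod hs (n+1)
    rw [h1, Real.Gamma_add_one (by positivity)] at this
    rw [← this]; ring
  rw [Real.GammaSeq, hG]
  rw [div_div_eq_mul_div]

end CPOaux

namespace CPOaux2
open CPOaux

lemma tendsto_add_div (p : ℝ) : Tendsto (fun n : ℕ => (p + n)/n) atTop (𝓝 1) := by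
  have h : Tendsto (fun n : ℕ => p / n + 1) atTop (𝓝 (0 + 1)) :=
    (tendsto_const_div_atTop_nhds_zero_nat p).add tendsto_const_nhds
  rw [zero_add] at h
  refine h.congr' ?_
  filter_upwards [eventually_ge_atTop 1] with n hn
  have hn0 : (n:ℝ) ≠ 0 := by
    have : (0:ℝ) < n := by exact_mod_cast hn
    exact this.ne'
  field_simp

lemma qsummable {a b : ℝ} (ha : 0 < a) (hb : 0 < b) (m : ℕ) :
    Summable (fun n : ℕ => Real.Gamma (a + n) * Real.Gamma (b + n) /
      (n.factorial * Real.Gamma (a + b + m + 1 + n))) := by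
  set c : ℝ := a + b + m + 1 with hc
  have hcpos : 0 < c := by positivity
  set q : ℕ → ℝ := fun n => Real.Gamma (a+n) * Real.Gamma (b+n) /
      (n.factorial * Real.Gamma (c+n)) with hqdef
  have hA := gammaA ha
  have hB := gammaA hb
  have hC := gammaA hcpos
  have t2 : Tendsto (fun n : ℕ => ((a+n)/n)⁻¹) atTop (𝓝 1) := by
    simpa using (tendsto_add_div a).inv₀ one_ne_zero
  have t3 : Tendsto (fun n : ℕ => ((b+n)/n)⁻¹) atTop (𝓝 1) := by
    simpa using (tendsto_add_div b).inv₀ one_ne_zero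
  have hw : Tendsto (fun n : ℕ => ((c+n)*n)/((a+n)*(b+n))) atTop (𝓝 1) := by
    have := ((tendsto_add_div c).mul t2).mul t3
    norm_num at this
    refine this.congr' ?_
    filter_upwards [eventually_ge_atTop 1] with n hn
    have hn0 : (0:ℝ) < n := by exact_mod_cast hn
    have h1 : a + (n:ℝ) ≠ 0 := by positivity
    have h2 : b + (n:ℝ) ≠ 0 := by positivity
    field_simp
  have hlim : Tendsto (fun n => q n * (n:ℝ)^((m:ℝ)+2)) atTop (𝓝 1) := by
    have h := ((hA.mul hB).div hC one_ne_zero).mul hw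
    norm_num at h
    refine h.congr' ?_
    filter_upwards [eventually_ge_atTop 1] with n hn
    have hn0 : (0:ℝ) < n := by exact_mod_cast hn
    have hfa : (0:ℝ) < (n.factorial : ℝ) := by exact_mod_cast n.factorial_pos
    have hGc : (0:ℝ) < Real.Gamma (c+n) := Real.Gamma_pos_of_pos (by positivity)
    have hna : (0:ℝ) < (n:ℝ)^a := Real.rpow_pos_of_pos hn0 _
    have hnb : (0:ℝ) < (n:ℝ)^b := Real.rpow_pos_of_pos hn0 _
    have hsplit : (n:ℝ)^c = (n:ℝ)^a * (n:ℝ)^b * (n:ℝ)^((m:ℝ)+1) := by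
      rw [hc, show a+b+(m:ℝ)+1 = a+(b+((m:ℝ)+1)) by ring, Real.rpow_add hn0,
        Real.rpow_add hn0]
      ring
    have hsplit2 : (n:ℝ)^((m:ℝ)+2) = (n:ℝ)^((m:ℝ)+1) * n := by
      rw [show (m:ℝ)+2 = ((m:ℝ)+1)+1 by ring, Real.rpow_add hn0, Real.rpow_one]
    have hca : a + (n:ℝ) ≠ 0 := by positivity
    have hcb : b + (n:ℝ) ≠ 0 := by positivity
    have hcc : c + (n:ℝ) ≠ 0 := by positivity
    rw [hqdef]
    field_simp
    rw [hsplit, hsplit2]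
    ring
  have hq0 : ∀ n, 0 ≤ q n := fun n => by
    have g1 := Real.Gamma_pos_of_pos (show (0:ℝ) < a + n by positivity)
    have g2 := Real.Gamma_pos_of_pos (show (0:ℝ) < b + n by positivity)
    have g3 := Real.Gamma_pos_of_pos (show (0:ℝ) < c + n by positivity)
    have hfa : (0:ℝ) < (n.factorial : ℝ) := by exact_mod_cast n.factorial_pos
    positivity
  have hge : ∀ᶠ n in atTop, q n ≤ 2 * (n:ℝ)^(-((m:ℝ)+2)) := by
    have h2 : ∀ᶠ n in atTop, q n * (n:ℝ)^((m:ℝ)+2) ≤ 2 :=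
      hlim.eventually (eventually_le_nhds (by norm_num))
    filter_upwards [h2, eventually_ge_atTop 1] with n hn2 hn1
    have hn0 : (0:ℝ) < n := by exact_mod_cast hn1
    have hpow : (0:ℝ) < (n:ℝ)^((m:ℝ)+2) := Real.rpow_pos_of_pos hn0 _
    rw [Real.rpow_neg hn0.le, ← div_eq_mul_inv, le_div_iff₀ hpow]
    exact hn2
  obtain ⟨N, hN⟩ := eventually_atTop.mp hge
  have hsum2 : Summable (fun n : ℕ => 2 * (((n+N : ℕ)):ℝ)^(-((m:ℝ)+2))) := by
    have h : Summable (fun n : ℕ => (n:ℝ)^(-((m:ℝ)+2))) :=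
      Real.summable_nat_rpow.mpr (by push_cast; linarith)
    exact ((summable_nat_add_iff N).mpr h).mul_left 2
  have : Summable (fun n : ℕ => q (n + N)) :=
    Summable.of_nonneg_of_le (fun n => hq0 _) (fun n => hN (n+N) (Nat.le_add_left _ _)) hsum2
  exact (summable_nat_add_iff N).mp this

end CPOaux2

namespace CPOaux3

lemma cpoch_succ (α : ℂ) (n : ℕ) : cpoch α (n+1) = cpoch α n * (α + n) :=
  Finset.prod_range_succ _ _

lemma ne_zero_of_re_pos' {z : ℂ} (hz : 0 < z.re) : z ≠ 0 := by
  intro h; rw [h] at hz; simp at hz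

lemma cpoch_ne_zero {α : ℂ} (hα : 0 < α.re) (n : ℕ) : cpoch α n ≠ 0 := by
  refine Finset.prod_ne_zero_iff.mpr fun i _ => ?_
  apply ne_zero_of_re_pos'
  simp only [Complex.add_re, Complex.natCast_re]
  positivity

lemma tendsto_add_div' (p : ℝ) : Tendsto (fun n : ℕ => (p + n)/n) atTop (𝓝 1) := by
  have h : Tendsto (fun n : ℕ => p / n + 1) atTop (𝓝 (0 + 1)) :=
    (tendsto_const_div_atTop_nhds_zero_nat p).add tendsto_const_nhds
  rw [zero_add] at h
  refine h.congr' ?_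
  filter_upwards [eventually_ge_atTop 1] with n hn
  have hn0 : (n:ℝ) ≠ 0 := by
    have : (0:ℝ) < n := by exact_mod_cast hn
    exact this.ne'
  field_simp

lemma nrm (n : ℕ) : ‖((n:ℂ)+1)‖ = (n:ℝ)+1 := by
  rw [show ((n:ℂ)+1) = ((n+1:ℕ):ℂ) by push_cast; ring, Complex.norm_natCast]
  push_cast; ring

lemma crec (α : ℂ) (n : ℕ) :
    ((n:ℂ)+1) * (cpoch α (n+1) / ((n+1).factorial : ℂ)) =
      (α + n) * (cpoch α n / (n.factorial : ℂ)) := by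
  have h1 : (((n+1).factorial : ℕ) : ℂ) = ((n:ℂ)+1) * (n.factorial : ℂ) := by
    push_cast [Nat.factorial_succ]; ring
  have h2 : ((n.factorial : ℕ) : ℂ) ≠ 0 := Nat.cast_ne_zero.mpr n.factorial_ne_zero
  have h3 : ((n:ℂ)+1) ≠ 0 := Nat.cast_add_one_ne_zero n
  rw [cpoch_succ, h1]
  field_simp

lemma cstep (α : ℂ) (n : ℕ) :
    cpoch α (n+1) / ((n+1).factorial : ℂ) =
      (α + n) * (cpoch α n / (n.factorial : ℂ)) / ((n:ℂ)+1) := by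
  have h3 : ((n:ℂ)+1) ≠ 0 := Nat.cast_add_one_ne_zero n
  rw [eq_div_iff h3]
  linear_combination crec α n

lemma cnorm_step (α : ℂ) (n : ℕ) :
    ‖cpoch α (n+1) / (((n+1).factorial : ℕ) : ℂ)‖ =
      ‖α + (n:ℂ)‖ * ‖cpoch α n / ((n.factorial : ℕ) : ℂ)‖ / ((n:ℝ)+1) := by
  rw [cstep, norm_div, norm_mul, nrm n]

lemma summ_master {α : ℂ} (hα : 0 < α.re) {r : ℝ} (hr0 : 0 < r) (hr1 : r < 1) :
    Summable (fun n : ℕ => ((n:ℝ)+1) * ‖cpoch α n / (n.factorial : ℂ)‖ * r ^ n) := by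
  set f : ℕ → ℝ := fun n => ((n:ℝ)+1) * ‖cpoch α n / (n.factorial : ℂ)‖ * r ^ n with hf
  have hcne : ∀ n, cpoch α n / ((n.factorial : ℕ) : ℂ) ≠ 0 := fun n =>
    div_ne_zero (cpoch_ne_zero hα n) (Nat.cast_ne_zero.mpr n.factorial_ne_zero)
  have hfpos : ∀ n, 0 < f n := fun n => by
    have h := norm_pos_iff.mpr (hcne n)
    have : (0:ℝ) < (n:ℝ)+1 := by positivity
    positivity
  apply summable_of_ratio_test_tendsto_lt_one hr1
    (Eventually.of_forall fun n => (hfpos n).ne')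
  -- limit of ratios
  have t1 : Tendsto (fun n : ℕ => ((n:ℝ)+2)/((n:ℝ)+1)) atTop (𝓝 1) := by
    have := (tendsto_add_div' 1).comp (tendsto_add_atTop_nat 1)
    refine this.congr fun n => ?_
    simp only [Function.comp_apply]
    push_cast; ring_nf
  have t2 : Tendsto (fun n : ℕ => ‖α + (n:ℂ)‖/((n:ℝ)+1)) atTop (𝓝 1) := by
    have h0 : Tendsto (fun n : ℕ => (α-1)/((n:ℂ)+1) + 1) atTop (𝓝 (0+1)) := by
      refine Tendsto.add ?_ tendsto_const_nhds
      rw [tendsto_zero_iff_norm_tendsto_zero]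
      have : Tendsto (fun n : ℕ => ‖α-1‖ / ((n:ℝ)+1)) atTop (𝓝 0) := by
        have := (tendsto_const_div_atTop_nhds_zero_nat ‖α-1‖).comp (tendsto_add_atTop_nat 1)
        refine this.congr fun n => ?_
        simp only [Function.comp_apply]
        push_cast; ring_nf
      refine this.congr fun n => ?_
      rw [norm_div, nrm n]
    rw [zero_add] at h0
    have h1 := h0.norm
    rw [norm_one] at h1
    refine h1.congr fun n => ?_
    have h3 : ((n:ℂ)+1) ≠ 0 := Nat.cast_add_one_ne_zero n
    have : (α-1)/((n:ℂ)+1) + 1 = (α + n)/((n:ℂ)+1) := by field_simp; ring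
    rw [this, norm_div, nrm n]
  have t3 : Tendsto (fun n : ℕ => ((n:ℝ)+2)/((n:ℝ)+1) * (‖α + (n:ℂ)‖/((n:ℝ)+1)) * r)
      atTop (𝓝 r) := by
    have := (t1.mul t2).mul_const r
    norm_num at this
    exact this
  refine t3.congr fun n => ?_
  have hn1 : (0:ℝ) < (n:ℝ)+1 := by positivity
  have hcn : (0:ℝ) < ‖cpoch α n / ((n.factorial : ℕ) : ℂ)‖ := norm_pos_iff.mpr (hcne n)
  have hrn : (0:ℝ) < r ^ n := pow_pos hr0 n
  have hratio : f (n+1) / f n = ((n:ℝ) + 2) / ((n:ℝ) + 1) * (‖α + (n:ℂ)‖ / ((n:ℝ) + 1)) * r := by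
    show (((n+1:ℕ):ℝ) + 1) * ‖cpoch α (n+1) / (((n+1).factorial : ℕ) : ℂ)‖ * r ^ (n+1) / f n = _
    have hfn : ((n:ℝ) + 1) * ‖cpoch α n / ((n.factorial : ℕ) : ℂ)‖ * r ^ n ≠ 0 := by positivity
    rw [cnorm_step α n, hf]
    simp only []
    rw [pow_succ, div_eq_iff hfn]
    push_cast
    field_simp
    ring
  rw [Real.norm_of_nonneg (hfpos _).le, Real.norm_of_nonneg (hfpos _).le, hratio]

end CPOaux3

section Binom

open CPOaux3

variable {α : ℂ}

lemma summ_at {α : ℂ} (hα : 0 < α.re) {r : ℝ} (hr0 : 0 < r) (hr1 : r < 1) {y : ℝ}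
    (hy : |y| ≤ r) : Summable (fun n : ℕ => cpoch α n / (n.factorial : ℂ) * (y:ℂ)^n) := by
  refine Summable.of_norm (Summable.of_nonneg_of_le (fun n => norm_nonneg _) (fun n => ?_)
    (summ_master hα hr0 hr1))
  rw [norm_mul, norm_pow, Complex.norm_real, Real.norm_eq_abs]
  have h1 : |y| ^ n ≤ r ^ n := pow_le_pow_left₀ (abs_nonneg _) hy n
  have h2 : ‖cpoch α n / ((n.factorial : ℕ) : ℂ)‖ * |y| ^ n ≤
      ‖cpoch α n / ((n.factorial : ℕ) : ℂ)‖ * r ^ n :=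
    mul_le_mul_of_nonneg_left h1 (norm_nonneg _)
  refine h2.trans ?_
  have h3 : (1:ℝ) ≤ (n:ℝ) + 1 := by
    have : (0:ℝ) ≤ n := n.cast_nonneg
    linarith
  calc ‖cpoch α n / ((n.factorial : ℕ) : ℂ)‖ * r ^ n
      = 1 * (‖cpoch α n / ((n.factorial : ℕ) : ℂ)‖ * r ^ n) := by ring
    _ ≤ ((n:ℝ) + 1) * (‖cpoch α n / ((n.factorial : ℕ) : ℂ)‖ * r ^ n) :=
        mul_le_mul_of_nonneg_right h3 (by positivity)
    _ = ((n:ℝ) + 1) * ‖cpoch α n / ((n.factorial : ℕ) : ℂ)‖ * r ^ n := by ring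

lemma summ_deriv {α : ℂ} (hα : 0 < α.re) {r : ℝ} (hr0 : 0 < r) (hr1 : r < 1) :
    Summable (fun n : ℕ => (n:ℝ) * ‖cpoch α n / (n.factorial : ℂ)‖ * r ^ (n-1)) := by
  have hM := (summ_master hα hr0 hr1).mul_left (1/r)
  refine Summable.of_nonneg_of_le (fun n => by positivity) (fun n => ?_) hM
  rcases n with _ | k
  · simp
    positivity
  · have hstep : r ^ (k+1-1) = r ^ (k+1) / r := by
      rw [Nat.add_sub_cancel, pow_succ, mul_div_assoc, div_self hr0.ne', mul_one]
    rw [hstep, ← mul_div_assoc, div_mul_eq_mul_div, one_mul]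
    gcongr
    have : (0:ℝ) ≤ (k:ℝ) := k.cast_nonneg
    push_cast
    linarith

lemma deriv_bound {α : ℂ} {r : ℝ} {z : ℝ} (hz : |z| ≤ r) (n : ℕ) :
    ‖cpoch α n / (n.factorial : ℂ) * ((n:ℂ) * ((z:ℝ):ℂ)^(n-1))‖ ≤
      (n:ℝ) * ‖cpoch α n / (n.factorial : ℂ)‖ * r ^ (n-1) := by
  rw [norm_mul, norm_mul, norm_pow, Complex.norm_natCast, Complex.norm_real, Real.norm_eq_abs]
  rw [show (n:ℝ) * ‖cpoch α n / ((n.factorial : ℕ) : ℂ)‖ * r ^ (n-1)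
      = ‖cpoch α n / ((n.factorial : ℕ) : ℂ)‖ * ((n:ℝ) * r ^ (n-1)) by ring]
  gcongr
  all_goals first
    | exact hz
    | exact (abs_nonneg z).trans hz
    | positivity

lemma binom {α : ℂ} (hα : 0 < α.re) {T : ℝ} (hT0 : 0 < T) (hT1 : T < 1) :
    HasSum (fun n : ℕ => cpoch α n / (n.factorial : ℂ) * (T:ℂ)^n) ((1 - (T:ℂ)) ^ (-α)) := by
  set c : ℕ → ℂ := fun n => cpoch α n / (n.factorial : ℂ) with hc
  set r : ℝ := (1+T)/2 with hr
  have hr0 : 0 < r := by rw [hr]; linarith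
  have hr1 : r < 1 := by rw [hr]; linarith
  have hTr : T < r := by rw [hr]; linarith
  set f : ℝ → ℂ := fun y => ∑' n, c n * (y:ℂ)^n with hfdef
  have hball : ∀ y : ℝ, y ∈ Set.Ioo (-r) r → |y| ≤ r := fun y hy =>
    abs_le.mpr ⟨hy.1.le, hy.2.le⟩
  have habs0 : |(0:ℝ)| ≤ r := by rw [abs_zero]; exact hr0.le
  have hderiv : ∀ y ∈ Set.Ioo (-r) r,
      HasDerivAt f (∑' n, c n * ((n:ℂ) * (y:ℂ)^(n-1))) y := by
    intro y hy
    exact hasDerivAt_tsum_of_isPreconnected (summ_deriv hα hr0 hr1) isOpen_Ioo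
      (convex_Ioo _ _).isPreconnected
      (fun n z _ => HasDerivAt.const_mul (c n) ((hasDerivAt_pow n ((z:ℝ):ℂ)).comp_ofReal))
      (fun n z hz => deriv_bound (hball z hz) n)
      (Set.mem_Ioo.mpr ⟨neg_lt_zero.mpr hr0, hr0⟩)
      (summ_at hα hr0 hr1 habs0) hy
  have hODE : ∀ y ∈ Set.Ioo (-r) r,
      (1 - (y:ℂ)) * (∑' n, c n * ((n:ℂ) * (y:ℂ)^(n-1))) = α * f y := by
    intro y hy
    have hyr : |y| ≤ r := hball y hy
    have hsum1 : Summable (fun n => c n * ((y:ℝ):ℂ)^n) := summ_at hα hr0 hr1 hyr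
    have hsumD : Summable (fun n => c n * ((n:ℂ) * ((y:ℝ):ℂ)^(n-1))) :=
      Summable.of_norm (Summable.of_nonneg_of_le (fun n => norm_nonneg _)
        (fun n => deriv_bound hyr n) (summ_deriv hα hr0 hr1))
    set D := ∑' n, c n * ((n:ℂ) * ((y:ℝ):ℂ)^(n-1)) with hDdef
    have hD : HasSum (fun n => c n * ((n:ℂ) * ((y:ℝ):ℂ)^(n-1))) D := hsumD.hasSum
    have hfy : HasSum (fun n => c n * ((y:ℝ):ℂ)^n) (f y) := hsum1.hasSum
    have h1 : HasSum (fun n => c (n+1) * (((n:ℂ)+1) * ((y:ℝ):ℂ)^n)) D := by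
      have h := (hasSum_nat_add_iff' (f := fun n => c n * ((n:ℂ) * ((y:ℝ):ℂ)^(n-1))) 1).mpr hD
      simp only [Finset.range_one, Finset.sum_singleton, Nat.cast_zero, zero_mul, mul_zero,
        sub_zero, Nat.add_sub_cancel] at h
      have heq : (fun n => c (n+1) * (((n+1:ℕ):ℂ) * ((y:ℝ):ℂ)^n))
          = fun n => c (n+1) * (((n:ℂ)+1) * ((y:ℝ):ℂ)^n) := by
        funext n; push_cast; ring
      rwa [heq] at h
    have h2 : HasSum (fun n => c n * ((n:ℂ) * ((y:ℝ):ℂ)^n)) ((y:ℂ) * D) := by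
      refine (hasSum_nat_add_iff' (f := fun n => c n * ((n:ℂ) * ((y:ℝ):ℂ)^n)) 1).mp ?_
      have hz : ((y:ℝ):ℂ) * D - ∑ i ∈ Finset.range 1, c i * ((i:ℂ) * ((y:ℝ):ℂ)^i)
          = ((y:ℝ):ℂ) * D := by simp
      rw [hz]
      have h2pre := h1.mul_left ((y:ℝ):ℂ)
      have heq : (fun n => ((y:ℝ):ℂ) * (c (n+1) * (((n:ℂ)+1) * ((y:ℝ):ℂ)^n)))
          = fun n => c (n+1) * (((n+1:ℕ):ℂ) * ((y:ℝ):ℂ)^(n+1)) := by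
        funext n; push_cast; ring
      rwa [heq] at h2pre
    have h3 := h1.sub h2
    have heq2 : (fun n => c (n+1) * (((n:ℂ)+1) * ((y:ℝ):ℂ)^n) - c n * ((n:ℂ) * ((y:ℝ):ℂ)^n))
        = fun n => α * (c n * ((y:ℝ):ℂ)^n) := by
      funext n
      have hrec : ((n:ℂ)+1) * c (n+1) = (α + n) * c n := crec α n
      linear_combination ((y:ℝ):ℂ)^n * hrec
    rw [heq2] at h3
    have h4 := hfy.mul_left α
    have h5 := h3.unique h4
    linear_combination h5
  have hslit : ∀ y : ℝ, y < 1 → (1 - (y:ℂ)) ∈ Complex.slitPlane := by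
    intro y hy
    rw [show (1 - (y:ℂ)) = (((1 - y : ℝ)):ℂ) by push_cast; ring]
    exact Complex.ofReal_mem_slitPlane.mpr (by linarith)
  have hGderiv : ∀ y ∈ Set.Ioo (-r) r, y < 1 →
      HasDerivAt (fun w : ℝ => (1 - (w:ℂ))^α * f w) 0 y := by
    intro y hy hy1
    have hne : (1 - (y:ℂ)) ≠ 0 := by
      rw [show (1 - (y:ℂ)) = (((1 - y : ℝ)):ℂ) by push_cast; ring]
      exact Complex.ofReal_ne_zero.mpr (by linarith)
    have hb : HasDerivAt (fun w : ℂ => 1 - w) (-1) ((y:ℝ):ℂ) := (hasDerivAt_id _).const_sub 1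
    have h1 : HasDerivAt (fun w : ℂ => (1 - w)^α) (α * (1 - (y:ℂ))^(α-1) * (-1)) ((y:ℝ):ℂ) :=
      hb.cpow_const (hslit y hy1)
    have h1' := h1.comp_ofReal
    have hmul := h1'.mul (hderiv y hy)
    refine hmul.congr_deriv ?_
    have hsplit : (1 - (y:ℂ))^α = (1 - (y:ℂ))^(α-1) * (1 - (y:ℂ)) := by
      conv_lhs => rw [show α = (α - 1) + 1 by ring]
      rw [Complex.cpow_add _ _ hne, Complex.cpow_one]
    have hODEy := hODE y hy
    rw [hsplit]
    linear_combination ((1 : ℂ) - (y:ℂ))^(α-1) * hODEy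
  have hmemIoo : ∀ y ∈ Set.Icc (0:ℝ) T, y ∈ Set.Ioo (-r) r := fun y hy =>
    Set.mem_Ioo.mpr ⟨by linarith [hy.1], by linarith [hy.2]⟩
  have hconst := constant_of_has_deriv_right_zero (f := fun w : ℝ => (1 - (w:ℂ))^α * f w)
      (a := 0) (b := T)
      (fun y hy => ((hGderiv y (hmemIoo y hy) (by
        rcases hy with ⟨_, h2⟩; linarith)).continuousAt).continuousWithinAt)
      (fun y hy => ((hGderiv y (hmemIoo y ⟨hy.1, hy.2.le⟩) (by
        rcases hy with ⟨_, h2⟩; linarith)).hasDerivWithinAt))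
  have hT := hconst T ⟨hT0.le, le_refl T⟩
  have hf0 : f 0 = 1 := by
    rw [hfdef]
    simp only []
    rw [tsum_eq_single 0 (fun n hn => by simp [zero_pow hn])]
    simp [hc, cpoch]
  have hT' : (1 - (T:ℂ))^α * f T = 1 := by
    have h := hT
    simp only [Complex.ofReal_zero, sub_zero, Complex.one_cpow, hf0, mul_one] at h
    exact h
  have hne : (1 - (T:ℂ)) ≠ 0 := by
    rw [show (1 - (T:ℂ)) = (((1 - T : ℝ)):ℂ) by push_cast; ring]
    exact Complex.ofReal_ne_zero.mpr (by linarith)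
  have hpow_ne : (1 - (T:ℂ))^α ≠ 0 := by
    rw [Ne, Complex.cpow_eq_zero_iff]
    simp [hne]
  have hval : f T = (1 - (T:ℂ))^(-α) := by
    rw [Complex.cpow_neg]
    field_simp
    linear_combination hT'
  have hsumT : Summable (fun n => c n * ((T:ℝ):ℂ)^n) :=
    summ_at hα hr0 hr1 (by rw [abs_of_pos hT0]; linarith)
  have hfin := hsumT.hasSum
  rw [show (∑' n, c n * ((T:ℝ):ℂ)^n) = f T from rfl, hval] at hfin
  exact hfin

end Binom

section MainAux
open CPOaux3

lemma term_rewrite (α x : ℂ) (hα : 0 < α.re) (hαx : 0 < (α - x).re) (m n : ℕ) :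
    (1 / ((n : ℂ) + α - x)) * (cpoch α n / (n.factorial : ℂ)) *
        (Complex.Gamma ((m : ℂ) + α - x + 1) * Complex.Gamma ((n : ℂ) + α - x + 1) /
          Complex.Gamma ((m : ℂ) + (n : ℂ) + 2 * α - x + 1)) =
      (Complex.Gamma ((m : ℂ) + α - x + 1) / Complex.Gamma ((m : ℂ) + α + 1)) *
        (cpoch α n / (n.factorial : ℂ) *
          Complex.betaIntegral ((n : ℂ) + α - x) ((m : ℂ) + α + 1)) := by
  have h1 : 0 < ((n:ℂ) + α - x).re := by
    simp only [Complex.add_re, Complex.sub_re, Complex.natCast_re]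
    have := n.cast_nonneg (α := ℝ)
    have h := hαx
    rw [Complex.sub_re] at h
    linarith
  have h2 : 0 < ((m:ℂ) + α + 1).re := by
    simp only [Complex.add_re, Complex.natCast_re, Complex.one_re]
    have := m.cast_nonneg (α := ℝ)
    linarith
  have hu_ne : ((n:ℂ) + α - x) ≠ 0 := ne_zero_of_re_pos' h1
  have hG2_ne : Complex.Gamma ((m:ℂ) + α + 1) ≠ 0 := Complex.Gamma_ne_zero_of_re_pos h2
  have huv : 0 < (((n:ℂ) + α - x) + ((m:ℂ) + α + 1)).re := by
    rw [Complex.add_re]; linarith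
  have hGuv_ne : Complex.Gamma (((n:ℂ) + α - x) + ((m:ℂ) + α + 1)) ≠ 0 :=
    Complex.Gamma_ne_zero_of_re_pos huv
  have hga : Complex.Gamma ((n:ℂ) + α - x + 1) =
      ((n:ℂ) + α - x) * Complex.Gamma ((n:ℂ) + α - x) :=
    Complex.Gamma_add_one _ hu_ne
  have hbeta := Complex.Gamma_mul_Gamma_eq_betaIntegral h1 h2
  have hBval : Complex.betaIntegral ((n:ℂ) + α - x) ((m:ℂ) + α + 1) =
      Complex.Gamma ((n:ℂ) + α - x) * Complex.Gamma ((m:ℂ) + α + 1) /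
        Complex.Gamma (((n:ℂ) + α - x) + ((m:ℂ) + α + 1)) := by
    rw [eq_div_iff hGuv_ne]; linear_combination -hbeta
  rw [show ((m:ℂ) + (n:ℂ) + 2*α - x + 1) = ((n:ℂ) + α - x) + ((m:ℂ) + α + 1) by ring]
  have hfac_ne : ((n.factorial : ℕ) : ℂ) ≠ 0 := Nat.cast_ne_zero.mpr n.factorial_ne_zero
  rw [hga, hBval]
  field_simp [hu_ne, hG2_ne, hGuv_ne, hfac_ne]

end MainAux

section MainProof
open CPOaux3

theorem stmt_7aux (α x : ℂ) (hα : 0 < α.re) (hαx : 0 < (α - x).re) (m : ℕ) :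
    (∑' n : ℕ, (1 / ((n : ℂ) + α - x)) * (cpoch α n / (n.factorial : ℂ)) *
        (Complex.Gamma ((m : ℂ) + α - x + 1) * Complex.Gamma ((n : ℂ) + α - x + 1) /
          Complex.Gamma ((m : ℂ) + (n : ℂ) + 2 * α - x + 1))) =
      (Complex.Gamma (α - x) / Complex.Gamma α) * (1 / ((m : ℂ) + α)) *
        ((m.factorial : ℂ) / cpoch α m) := by
  have hbr : 0 < (α - x).re := hαx
  have hxr : (α - x).re = α.re - x.re := Complex.sub_re _ _
  have hre_u : ∀ n : ℕ, 0 < ((n:ℂ) + α - x).re := fun n => by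
    simp only [Complex.add_re, Complex.sub_re, Complex.natCast_re]
    have h2 := n.cast_nonneg (α := ℝ)
    rw [Complex.sub_re] at hbr
    linarith
  have hre_v : 0 < ((m:ℂ) + α + 1).re := by
    simp only [Complex.add_re, Complex.natCast_re, Complex.one_re]
    have := m.cast_nonneg (α := ℝ)
    linarith
  have hGv_ne : Complex.Gamma ((m:ℂ) + α + 1) ≠ 0 := Complex.Gamma_ne_zero_of_re_pos hre_v
  set F : ℕ → ℝ → ℂ := fun n t => cpoch α n / (n.factorial : ℂ) *
      ((t:ℂ) ^ ((n:ℂ) + α - x - 1) * (1 - (t:ℂ)) ^ ((m:ℂ) + α)) with hF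
  -- integrability
  have hFint : ∀ n : ℕ, MeasureTheory.IntegrableOn (F n) (Set.Ioc 0 1) MeasureTheory.volume := by
    intro n
    have h := Complex.betaIntegral_convergent (hre_u n) hre_v
    rw [intervalIntegrable_iff_integrableOn_Ioc_of_le zero_le_one] at h
    simp only [add_sub_cancel_right] at h
    exact h.const_mul _
  -- norm values
  have hnormF : ∀ n : ℕ, (∫ t in Set.Ioc (0:ℝ) 1, ‖F n t‖) =
      ‖cpoch α n / (n.factorial : ℂ)‖ *
        (Real.Gamma (((n:ℝ) + (α-x).re)) * Real.Gamma (((m:ℝ) + α.re + 1)) /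
          Real.Gamma (((n:ℝ) + (α-x).re) + ((m:ℝ) + α.re + 1))) := by
    intro n
    have hp : 0 < (n:ℝ) + (α-x).re := by
      have := n.cast_nonneg (α := ℝ); linarith
    have hq : 0 < (m:ℝ) + α.re + 1 := by
      have := m.cast_nonneg (α := ℝ); linarith
    rw [← CPOaux.realBeta hp hq, ← MeasureTheory.integral_const_mul]
    refine MeasureTheory.setIntegral_congr_fun measurableSet_Ioc fun t ht => ?_
    obtain ⟨ht0, ht1⟩ := ht
    have e1 : ‖(t:ℂ) ^ ((n:ℂ) + α - x - 1)‖ = t ^ (((n:ℝ) + (α-x).re) - 1) := by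
      rw [Complex.norm_cpow_eq_rpow_re_of_pos ht0]
      congr 1
      simp only [Complex.sub_re, Complex.add_re, Complex.natCast_re, Complex.one_re]
      ring
    have e2 : ‖(1 - (t:ℂ)) ^ ((m:ℂ) + α)‖ = (1-t) ^ (((m:ℝ) + α.re + 1) - 1) := by
      rw [show (1 - (t:ℂ)) = (((1-t : ℝ)):ℂ) by push_cast; ring,
        Complex.norm_cpow_eq_rpow_re_of_nonneg (by linarith) (by
          simp only [Complex.add_re, Complex.natCast_re]
          have := m.cast_nonneg (α := ℝ)
          exact ne_of_gt (by linarith))]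
      congr 1
      simp only [Complex.add_re, Complex.natCast_re]
      ring
    rw [norm_mul, norm_mul, e1, e2]
  -- summability of norms
  have hΓα_ne : Complex.Gamma α ≠ 0 := Complex.Gamma_ne_zero_of_re_pos hα
  have hsumnorm : Summable (fun n => ∫ t in Set.Ioc (0:ℝ) 1, ‖F n t‖) := by
    refine Summable.congr ?_ (fun n => (hnormF n).symm)
    have hq := CPOaux2.qsummable hα hαx m
    refine Summable.of_nonneg_of_le (fun n => ?_) (fun n => ?_)
      (hq.mul_left (Real.Gamma ((m:ℝ) + α.re + 1) / ‖Complex.Gamma α‖))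
    · have g1 := Real.Gamma_pos_of_pos (show (0:ℝ) < (n:ℝ) + (α-x).re by
        have := n.cast_nonneg (α := ℝ); linarith)
      have g2 := Real.Gamma_pos_of_pos (show (0:ℝ) < (m:ℝ) + α.re + 1 by
        have := m.cast_nonneg (α := ℝ); linarith)
      have g3 := Real.Gamma_pos_of_pos (show (0:ℝ) < ((n:ℝ) + (α-x).re) + ((m:ℝ) + α.re + 1) by
        have := n.cast_nonneg (α := ℝ); have := m.cast_nonneg (α := ℝ); linarith)
      have := norm_nonneg (cpoch α n / (n.factorial : ℂ))
      positivity
    · -- the bound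
      have hfacpos : (0:ℝ) < (n.factorial : ℝ) := by exact_mod_cast n.factorial_pos
      have habsΓ : (0:ℝ) < ‖Complex.Gamma α‖ :=
        norm_pos_iff.mpr hΓα_ne
      have hcb : ‖cpoch α n / (n.factorial : ℂ)‖ ≤
          Real.Gamma (α.re + n) / (‖Complex.Gamma α‖ * (n.factorial : ℝ)) := by
        have hpoch : cpoch α n = Complex.Gamma (α + n) / Complex.Gamma α := by
          rw [CPOaux.Gamma_cpoch hα n]  -- Γ(α+n) = Γ α * cpoch α n ... careful: cpoch vs cpoch
          field_simp
        have h1 : ‖Complex.Gamma (α + n)‖ ≤ Real.Gamma (α.re + n) := by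
          have h2 := CPOaux.absGamma (s := α + n) (by
            simp only [Complex.add_re, Complex.natCast_re]
            have := n.cast_nonneg (α := ℝ); linarith)
          simpa only [Complex.add_re, Complex.natCast_re] using h2
        rw [hpoch, norm_div, norm_div,
          Complex.norm_natCast]
        rw [div_div]
        gcongr
      have g1 := Real.Gamma_pos_of_pos (show (0:ℝ) < (n:ℝ) + (α-x).re by
        have := n.cast_nonneg (α := ℝ); linarith)
      have g2 := Real.Gamma_pos_of_pos (show (0:ℝ) < (m:ℝ) + α.re + 1 by
        have := m.cast_nonneg (α := ℝ); linarith)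
      have g3 := Real.Gamma_pos_of_pos (show (0:ℝ) < ((n:ℝ) + (α-x).re) + ((m:ℝ) + α.re + 1) by
        have := n.cast_nonneg (α := ℝ); have := m.cast_nonneg (α := ℝ); linarith)
      calc ‖cpoch α n / (n.factorial : ℂ)‖ *
            (Real.Gamma ((n:ℝ) + (α-x).re) * Real.Gamma ((m:ℝ) + α.re + 1) /
              Real.Gamma (((n:ℝ) + (α-x).re) + ((m:ℝ) + α.re + 1)))
          ≤ (Real.Gamma (α.re + n) / (‖Complex.Gamma α‖ * (n.factorial : ℝ))) *
            (Real.Gamma ((n:ℝ) + (α-x).re) * Real.Gamma ((m:ℝ) + α.re + 1) /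
              Real.Gamma (((n:ℝ) + (α-x).re) + ((m:ℝ) + α.re + 1))) := by
            apply mul_le_mul_of_nonneg_right hcb
            positivity
        _ = Real.Gamma ((m:ℝ) + α.re + 1) / ‖Complex.Gamma α‖ *
            (Real.Gamma (α.re + n) * Real.Gamma ((α-x).re + n) /
              ((n.factorial : ℝ) * Real.Gamma (α.re + (α-x).re + m + 1 + n))) := by
            rw [show ((n:ℝ) + (α-x).re) + ((m:ℝ) + α.re + 1) = α.re + (α-x).re + m + 1 + n by ring,
              show (n:ℝ) + (α-x).re = (α-x).re + n by ring]
            field_simp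
  -- swap
  have hswap := MeasureTheory.integral_tsum_of_summable_integral_norm hFint hsumnorm
  -- inner sum evaluation
  have hinner : (∫ t in Set.Ioc (0:ℝ) 1, ∑' n, F n t) =
      Complex.betaIntegral (α - x) ((m:ℂ)+1) := by
    rw [Complex.betaIntegral, intervalIntegral.integral_of_le zero_le_one]
    rw [MeasureTheory.integral_Ioc_eq_integral_Ioo, MeasureTheory.integral_Ioc_eq_integral_Ioo]
    refine MeasureTheory.setIntegral_congr_fun measurableSet_Ioo fun t ht => ?_
    obtain ⟨ht0, ht1⟩ := ht
    have htc_ne : ((t:ℝ):ℂ) ≠ 0 := Complex.ofReal_ne_zero.mpr ht0.ne'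
    have h1t_ne : (1 - (t:ℂ)) ≠ 0 := by
      rw [show (1 - (t:ℂ)) = (((1-t : ℝ)):ℂ) by push_cast; ring]
      exact Complex.ofReal_ne_zero.mpr (by linarith)
    have hbin := binom (α := α) hα ht0 ht1
    have hmul := hbin.mul_right ((t:ℂ)^(α - x - 1) * (1 - (t:ℂ))^((m:ℂ)+α))
    have heq : (fun n : ℕ => cpoch α n / (n.factorial : ℂ) * (t:ℂ)^n *
        ((t:ℂ)^(α-x-1) * (1-(t:ℂ))^((m:ℂ)+α))) = fun n => F n t := by
      funext n
      rw [hF]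
      simp only []
      rw [show ((n:ℂ) + α - x - 1) = (n:ℂ) + (α - x - 1) by ring,
        Complex.cpow_add _ _ htc_ne, Complex.cpow_natCast]
      ring
    rw [heq] at hmul
    rw [hmul.tsum_eq]
    have hsplit : (1 - (t:ℂ))^((m:ℂ)+α) = (1-(t:ℂ))^((m:ℂ)) * (1-(t:ℂ))^α := by
      rw [← Complex.cpow_add _ _ h1t_ne]
    have hcp_ne : (1-(t:ℂ))^α ≠ 0 := by
      rw [Ne, Complex.cpow_eq_zero_iff]
      simp [h1t_ne]
    rw [show ((m:ℂ)+1-1) = (m:ℂ) by ring, hsplit, Complex.cpow_neg]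
    field_simp
  -- betaIntegral value at (α-x, m+1)
  have hBm : Complex.betaIntegral (α - x) ((m:ℂ)+1) =
      Complex.Gamma (α - x) * (m.factorial : ℂ) / Complex.Gamma ((m:ℂ) + α - x + 1) := by
    have h2 : 0 < ((m:ℂ)+1).re := by
      simp only [Complex.add_re, Complex.natCast_re, Complex.one_re]
      have := m.cast_nonneg (α := ℝ); linarith
    have hne : Complex.Gamma ((m:ℂ) + α - x + 1) ≠ 0 := by
      apply Complex.Gamma_ne_zero_of_re_pos
      simp only [Complex.add_re, Complex.sub_re, Complex.natCast_re, Complex.one_re]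
      rw [Complex.sub_re] at hbr
      have := m.cast_nonneg (α := ℝ); linarith
    rw [eq_div_iff hne]
    have hid := Complex.Gamma_mul_Gamma_eq_betaIntegral hαx h2
    rw [Complex.Gamma_nat_eq_factorial] at hid
    rw [show ((m:ℂ) + α - x + 1) = (α - x) + ((m:ℂ)+1) by ring]
    linear_combination -hid
  -- chain of equalities
  have hterm' : ∀ n : ℕ, cpoch α n / (n.factorial : ℂ) *
      Complex.betaIntegral ((n:ℂ) + α - x) ((m:ℂ) + α + 1) =
      ∫ t in Set.Ioc (0:ℝ) 1, F n t := by
    intro n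
    rw [Complex.betaIntegral, intervalIntegral.integral_of_le zero_le_one]
    simp only [add_sub_cancel_right]
    rw [← MeasureTheory.integral_const_mul]
  calc (∑' n : ℕ, (1 / ((n : ℂ) + α - x)) * (cpoch α n / (n.factorial : ℂ)) *
        (Complex.Gamma ((m : ℂ) + α - x + 1) * Complex.Gamma ((n : ℂ) + α - x + 1) /
          Complex.Gamma ((m : ℂ) + (n : ℂ) + 2 * α - x + 1)))
      = ∑' n : ℕ, (Complex.Gamma ((m : ℂ) + α - x + 1) / Complex.Gamma ((m : ℂ) + α + 1)) *
          (cpoch α n / (n.factorial : ℂ) *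
            Complex.betaIntegral ((n:ℂ) + α - x) ((m:ℂ) + α + 1)) :=
        tsum_congr fun n => term_rewrite α x hα hαx m n
    _ = (Complex.Gamma ((m : ℂ) + α - x + 1) / Complex.Gamma ((m : ℂ) + α + 1)) *
          ∑' n : ℕ, (cpoch α n / (n.factorial : ℂ) *
            Complex.betaIntegral ((n:ℂ) + α - x) ((m:ℂ) + α + 1)) := tsum_mul_left
    _ = (Complex.Gamma ((m : ℂ) + α - x + 1) / Complex.Gamma ((m : ℂ) + α + 1)) *
          ∑' n : ℕ, ∫ t in Set.Ioc (0:ℝ) 1, F n t := by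
        rw [tsum_congr hterm']
    _ = (Complex.Gamma ((m : ℂ) + α - x + 1) / Complex.Gamma ((m : ℂ) + α + 1)) *
          Complex.betaIntegral (α - x) ((m:ℂ)+1) := by
        rw [hswap, hinner]
    _ = (Complex.Gamma (α - x) / Complex.Gamma α) * (1 / ((m : ℂ) + α)) *
        ((m.factorial : ℂ) / cpoch α m) := by
        rw [hBm]
        have hmα_ne : ((m:ℂ) + α) ≠ 0 := by
          apply ne_zero_of_re_pos'
          simp only [Complex.add_re, Complex.natCast_re]
          have := m.cast_nonneg (α := ℝ); linarith
        have hG1 : Complex.Gamma ((m:ℂ) + α + 1) =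
            ((m:ℂ) + α) * (Complex.Gamma α * cpoch α m) := by
          rw [Complex.Gamma_add_one _ hmα_ne,
            show ((m:ℂ) + α) = α + (m:ℂ) by ring, CPOaux.Gamma_cpoch hα m]
        have hne1 : Complex.Gamma ((m:ℂ) + α - x + 1) ≠ 0 := by
          apply Complex.Gamma_ne_zero_of_re_pos
          simp only [Complex.add_re, Complex.sub_re, Complex.natCast_re, Complex.one_re]
          rw [Complex.sub_re] at hbr
          have := m.cast_nonneg (α := ℝ); linarith
        have hpoch_ne : cpoch α m ≠ 0 := cpoch_ne_zero hα m
        rw [hG1]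
        field_simp

end MainProof


theorem stmt_7 (α x : ℂ) (hα : 0 < α.re) (hαx : 0 < (α - x).re) (m : ℕ) :
    (∑' n : ℕ, (1 / ((n : ℂ) + α - x)) * (cpoch α n / (n.factorial : ℂ)) *
        (Complex.Gamma ((m : ℂ) + α - x + 1) * Complex.Gamma ((n : ℂ) + α - x + 1) /
          Complex.Gamma ((m : ℂ) + (n : ℂ) + 2 * α - x + 1))) =
      (Complex.Gamma (α - x) / Complex.Gamma α) * (1 / ((m : ℂ) + α)) *
        ((m.factorial : ℂ) / cpoch α m) := by
  exact stmt_7aux α x hα hαx m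
end

section
/- For a complex number α with Re(α) > 0 and a nonnegative integer m, one has Σ_{n ≥ 0} (1/(n+α)) · ((α)_n/n!) · Γ(m+α+1)Γ(n+α+1)/Γ(m+n+2α+1) = (1/(m+α)) · (m!/(α)_m). -/
open Complex Finset

open Filter Topology

lemma cpoch_zero (α : ℂ) : cpoch α 0 = 1 := by simp [cpoch]

lemma cpoch_succ (α : ℂ) (n : ℕ) : cpoch α (n + 1) = cpoch α n * (α + n) := by
  simp [cpoch, Finset.prod_range_succ]

lemma re_pos_add_nat {α : ℂ} (hα : 0 < α.re) (n : ℕ) : 0 < (α + n).re := by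
  simp only [Complex.add_re, Complex.natCast_re]
  positivity

lemma add_nat_ne_zero {α : ℂ} (hα : 0 < α.re) (n : ℕ) : α + n ≠ 0 := by
  intro h
  have := re_pos_add_nat hα n
  rw [h] at this; simp at this

lemma cpoch_ne_zero {α : ℂ} (hα : 0 < α.re) (n : ℕ) : cpoch α n ≠ 0 := by
  induction n with
  | zero => simp [cpoch_zero]
  | succ k ih => rw [cpoch_succ]; exact mul_ne_zero ih (add_nat_ne_zero hα k)

lemma cpoch_one_eq_factorial (n : ℕ) : cpoch 1 n = (n.factorial : ℂ) := by
  induction n with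
  | zero => simp [cpoch_zero]
  | succ k ih =>
      rw [cpoch_succ, ih, Nat.factorial_succ]
      push_cast; ring

noncomputable def rpoch (x : ℝ) (n : ℕ) : ℝ := ∏ i ∈ Finset.range n, (x + i)

lemma rpoch_succ (x : ℝ) (n : ℕ) : rpoch x (n + 1) = rpoch x n * (x + n) := by
  simp [rpoch, Finset.prod_range_succ]

lemma rpoch_pos {x : ℝ} (hx : 0 < x) (n : ℕ) : 0 < rpoch x n := by
  induction n with
  | zero => simp [rpoch]
  | succ k ih => rw [rpoch_succ]; positivity

lemma rpoch_mono {x y : ℝ} (hx : 0 < x) (h : x ≤ y) (n : ℕ) : rpoch x n ≤ rpoch y n := by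
  induction n with
  | zero => simp [rpoch]
  | succ k ih =>
      rw [rpoch_succ, rpoch_succ]
      have h1 : (0:ℝ) < x + k := by positivity
      have := rpoch_pos hx k
      nlinarith [rpoch_pos (lt_of_lt_of_le hx h) k]

/-- real lower bound for norms of pochhammer -/
lemma norm_cpoch_ge {α : ℂ} (hα : 0 < α.re) (n : ℕ) :
    rpoch (α.re) n ≤ ‖cpoch α n‖ := by
  induction n with
  | zero => simp [rpoch, cpoch]
  | succ k ih =>
      rw [rpoch_succ, cpoch_succ, norm_mul]
      have h1 : (α.re) + k ≤ ‖α + (k:ℂ)‖ := by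
        have := Complex.re_le_norm (α + k)
        simpa using this
      have h2 : (0:ℝ) < α.re + k := by positivity
      have := rpoch_pos hα k
      nlinarith [norm_nonneg (cpoch α k)]

/-- GammaSeq in terms of cpoch. -/
lemma gammaSeq_eq (s : ℂ) (k : ℕ) :
    Complex.GammaSeq s k = (k : ℂ) ^ s * (k.factorial : ℂ) / cpoch s (k + 1) := by
  rw [Complex.GammaSeq, cpoch]


lemma tendsto_norm_add_nat_atTop (a : ℂ) :
    Tendsto (fun k : ℕ => ‖a + (k:ℂ)‖) atTop atTop := by
  apply tendsto_atTop_mono (f := fun k : ℕ => (k : ℝ) - ‖a‖)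
  · intro k
    calc (k:ℝ) - ‖a‖ = ‖(k:ℂ)‖ - ‖a‖ := by simp
    _ ≤ ‖a + (k:ℂ)‖ := by
        have : ‖(k:ℂ)‖ ≤ ‖a + (k:ℂ)‖ + ‖a‖ := by
          calc ‖(k:ℂ)‖ = ‖(a + (k:ℂ)) + (-a)‖ := by ring_nf
          _ ≤ ‖a + (k:ℂ)‖ + ‖-a‖ := norm_add_le _ _
          _ = ‖a + (k:ℂ)‖ + ‖a‖ := by rw [norm_neg]
        linarith
  · apply tendsto_atTop_add_const_right
    exact tendsto_natCast_atTop_atTop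

lemma tendsto_div_add_nat_zero (a b : ℂ) :
    Tendsto (fun k : ℕ => b / (a + (k:ℂ))) atTop (𝓝 0) := by
  rw [tendsto_zero_iff_norm_tendsto_zero]
  simp only [norm_div]
  exact Tendsto.div_atTop tendsto_const_nhds (tendsto_norm_add_nat_atTop a)

lemma tendsto_ratio (a c : ℂ) (ha : 0 < a.re) :
    Tendsto (fun k : ℕ => (c + (k:ℂ)) / (a + (k:ℂ))) atTop (𝓝 1) := by
  have h : ∀ k : ℕ, (c + (k:ℂ)) / (a + (k:ℂ)) = 1 + (c - a) / (a + (k:ℂ)) := by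
    intro k
    field_simp [add_nat_ne_zero ha k]
    ring
  simp only [h]
  have := (tendsto_div_add_nat_zero a (c - a)).const_add 1
  simpa using this

lemma cpow_nat_ne_zero {k : ℕ} (hk : 1 ≤ k) (s : ℂ) : (k:ℂ) ^ s ≠ 0 := by
  intro h
  exact (Nat.cast_ne_zero.mpr (by omega : k ≠ 0)) ((cpow_eq_zero_iff _ _).mp h).1

lemma poch_ratio_tendsto {a b c d : ℂ} (ha : 0 < a.re) (hb : 0 < b.re)
    (hc : 0 < c.re) (hd : 0 < d.re) :
    Tendsto (fun k : ℕ => (k:ℂ) ^ (c + d - a - b) * (cpoch a (k+1) * cpoch b (k+1)) /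
      (cpoch c (k+1) * cpoch d (k+1))) atTop
      (𝓝 (Complex.Gamma c * Complex.Gamma d / (Complex.Gamma a * Complex.Gamma b))) := by
  have key : ∀ k : ℕ, 1 ≤ k → (k:ℂ) ^ (c + d - a - b) * (cpoch a (k+1) * cpoch b (k+1)) /
      (cpoch c (k+1) * cpoch d (k+1))
      = Complex.GammaSeq c k * Complex.GammaSeq d k /
          (Complex.GammaSeq a k * Complex.GammaSeq b k) := by
    intro k hk
    have hK : (k:ℂ) ≠ 0 := Nat.cast_ne_zero.mpr (by omega)
    have hpow : (k:ℂ) ^ (c + d - a - b) = (k:ℂ) ^ c * (k:ℂ) ^ d / ((k:ℂ) ^ a * (k:ℂ) ^ b) := by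
      rw [eq_div_iff (mul_ne_zero (cpow_nat_ne_zero hk a) (cpow_nat_ne_zero hk b)),
        ← cpow_add _ _ hK, ← cpow_add _ _ hK, ← cpow_add _ _ hK]
      ring_nf
    rw [gammaSeq_eq, gammaSeq_eq, gammaSeq_eq, gammaSeq_eq, hpow]
    have hf : ((k.factorial : ℂ)) ≠ 0 := Nat.cast_ne_zero.mpr k.factorial_ne_zero
    have hpa := cpoch_ne_zero ha (k+1)
    have hpb := cpoch_ne_zero hb (k+1)
    have hpc := cpoch_ne_zero hc (k+1)
    have hpd := cpoch_ne_zero hd (k+1)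
    have hka := cpow_nat_ne_zero hk a
    have hkb := cpow_nat_ne_zero hk b
    field_simp
  have hlim : Tendsto (fun k : ℕ => Complex.GammaSeq c k * Complex.GammaSeq d k /
          (Complex.GammaSeq a k * Complex.GammaSeq b k)) atTop
      (𝓝 (Complex.Gamma c * Complex.Gamma d / (Complex.Gamma a * Complex.Gamma b))) := by
    have h1 := (Complex.GammaSeq_tendsto_Gamma c).mul (Complex.GammaSeq_tendsto_Gamma d)
    have h2 := (Complex.GammaSeq_tendsto_Gamma a).mul (Complex.GammaSeq_tendsto_Gamma b)
    have hne : Complex.Gamma a * Complex.Gamma b ≠ 0 :=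
      mul_ne_zero (Complex.Gamma_ne_zero_of_re_pos ha) (Complex.Gamma_ne_zero_of_re_pos hb)
    exact h1.div h2 hne
  apply hlim.congr'
  filter_upwards [eventually_ge_atTop 1] with k hk
  exact (key k hk).symm

section Aseq
variable {α c : ℂ}

/-- The Gauss series term. -/
noncomputable def Aterm (α c : ℂ) (n : ℕ) : ℂ :=
  cpoch α n ^ 2 / (cpoch c n * (n.factorial : ℂ))

lemma Aterm_asymp (hα : 0 < α.re) (hc : 0 < c.re) :
    Tendsto (fun k : ℕ => (k:ℂ) ^ (c + 1 - α - α) * Aterm α c (k+1)) atTop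
      (𝓝 (Complex.Gamma c / Complex.Gamma α ^ 2)) := by
  have h := poch_ratio_tendsto hα hα hc (by norm_num : (0:ℝ) < (1:ℂ).re)
  simp only [Complex.Gamma_one, mul_one] at h
  rw [sq]
  apply h.congr'
  filter_upwards with k
  simp only [Aterm, cpoch_one_eq_factorial]
  ring

lemma norm_cpow_nat {k : ℕ} (hk : 1 ≤ k) (w : ℂ) : ‖(k:ℂ) ^ w‖ = (k:ℝ) ^ w.re := by
  have hkpos : (0:ℝ) < (k:ℝ) := by positivity
  rw [show ((k:ℂ)) = (((k:ℝ)):ℂ) by push_cast; rfl,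
    Complex.norm_cpow_eq_rpow_re_of_pos hkpos]

lemma summable_Aterm (hα : 0 < α.re) (hc : 0 < c.re) (h : 2 * α.re < c.re) :
    Summable (Aterm α c) := by
  rw [← summable_nat_add_iff 1]
  set w : ℂ := c + 1 - α - α with hw
  have hwre : 1 < w.re := by
    simp only [hw, Complex.sub_re, Complex.add_re, Complex.one_re]
    linarith
  apply summable_of_isBigO_nat (g := fun k : ℕ => (k:ℝ) ^ (-w.re))
  · exact Real.summable_nat_rpow.mpr (by linarith)
  · have h1 : (fun k : ℕ => ((k:ℂ) ^ w)⁻¹) =O[atTop] (fun k : ℕ => (k:ℝ) ^ (-w.re)) := by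
      apply Asymptotics.IsBigO.of_bound 1
      filter_upwards [eventually_ge_atTop 1] with k hk
      have habs : |(k:ℝ) ^ (-w.re)| = ((k:ℝ) ^ w.re)⁻¹ := by
        rw [_root_.abs_of_nonneg (Real.rpow_nonneg (by positivity) _), Real.rpow_neg (by positivity)]
      rw [norm_inv, norm_cpow_nat hk, Real.norm_eq_abs, habs, one_mul]
    have h2 : (fun k : ℕ => (k:ℂ) ^ w * Aterm α c (k+1)) =O[atTop] (fun _ : ℕ => (1:ℝ)) :=
      (Aterm_asymp hα hc).isBigO_one ℝ
    have h3 := h1.mul h2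
    simp only [mul_one] at h3
    apply h3.congr' _ (EventuallyEq.refl _ _)
    filter_upwards [eventually_ge_atTop 1] with k hk
    rw [← mul_assoc, inv_mul_cancel₀ (cpow_nat_ne_zero hk w), one_mul]

lemma tendsto_nat_mul_Aterm (hα : 0 < α.re) (hc : 0 < c.re) (h : 2 * α.re < c.re) :
    Tendsto (fun n : ℕ => (n:ℂ) * Aterm α c n) atTop (𝓝 0) := by
  rw [← tendsto_add_atTop_iff_nat 1]
  set w : ℂ := c + 1 - α - α with hw
  have hwre : 1 < w.re := by
    simp only [hw, Complex.sub_re, Complex.add_re, Complex.one_re]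
    linarith
  apply squeeze_zero_norm' (a := fun k : ℕ =>
    2 * (k:ℝ) ^ (1 - w.re) * ‖(k:ℂ) ^ w * Aterm α c (k+1)‖)
  · filter_upwards [eventually_ge_atTop 1] with k hk
    have hkpos : (0:ℝ) < (k:ℝ) := by positivity
    have key : ((k+1:ℕ):ℂ) * Aterm α c (k+1)
        = (((k+1:ℕ):ℂ) * ((k:ℂ) ^ w)⁻¹) * ((k:ℂ) ^ w * Aterm α c (k+1)) := by
      rw [mul_assoc, ← mul_assoc (((k:ℂ))^w)⁻¹, inv_mul_cancel₀ (cpow_nat_ne_zero hk w), one_mul]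
    rw [key, norm_mul]
    apply mul_le_mul_of_nonneg_right _ (norm_nonneg _)
    rw [norm_mul, norm_inv, norm_cpow_nat hk]
    have e1 : ‖((k+1:ℕ):ℂ)‖ = (k:ℝ) + 1 := by
      rw [show (((k+1:ℕ)):ℂ) = (((k:ℝ)+1:ℝ):ℂ) by push_cast; rfl]
      rw [Complex.norm_real, Real.norm_eq_abs, _root_.abs_of_nonneg (by positivity)]
    rw [e1]
    have e2 : (k:ℝ) + 1 ≤ 2 * (k:ℝ) := by
      have : (1:ℝ) ≤ (k:ℝ) := by exact_mod_cast hk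
      linarith
    calc ((k:ℝ) + 1) * ((k:ℝ) ^ w.re)⁻¹ ≤ 2 * (k:ℝ) * ((k:ℝ) ^ w.re)⁻¹ := by
          apply mul_le_mul_of_nonneg_right e2 (by positivity)
    _ = 2 * (k:ℝ) ^ (1 - w.re) := by
          rw [Real.rpow_sub hkpos, Real.rpow_one, div_eq_mul_inv]
          ring
  · have l1 : Tendsto (fun k : ℕ => 2 * (k:ℝ) ^ (1 - w.re)) atTop (𝓝 0) := by
      have := (tendsto_rpow_neg_atTop (y := w.re - 1) (by linarith)).comp
        tendsto_natCast_atTop_atTop (α := ℕ)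
      have h2 : Tendsto (fun k : ℕ => (k:ℝ) ^ (1 - w.re)) atTop (𝓝 0) := by
        apply this.congr
        intro k
        simp only [Function.comp]
        norm_num
      simpa using h2.const_mul 2
    have l2 := ((Aterm_asymp hα hc).norm)
    have := l1.mul l2
    simpa using this
end Aseq

lemma cpoch_shift (c : ℂ) (n : ℕ) : cpoch (c+1) n * c = cpoch c n * (c + n) := by
  induction n with
  | zero => simp [cpoch_zero]
  | succ k ih =>
      rw [cpoch_succ, cpoch_succ]
      push_cast
      calc cpoch (c+1) k * (c + 1 + k) * c = (cpoch (c+1) k * c) * (c + 1 + k) := by ring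
      _ = cpoch c k * (c + k) * (c + 1 + k) := by rw [ih]
      _ = cpoch c k * (c + ↑k) * (c + (↑k + 1)) := by ring

lemma contiguous {α c : ℂ} (hα : 0 < α.re) (hc : 0 < c.re) (n : ℕ) :
    c * (c - 2*α) * Aterm α c n - (c - α)^2 * Aterm α (c+1) n
      = c * (n:ℂ) * Aterm α c n - c * ((n:ℂ)+1) * Aterm α c (n+1) := by
  have hcne : c ≠ 0 := fun h => by simp [h] at hc
  have h1 : cpoch (c+1) n = cpoch c n * (c + n) / c := by
    rw [eq_div_iff hcne, cpoch_shift]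
  simp only [Aterm, h1, cpoch_succ, Nat.factorial_succ]
  have hf : ((n.factorial : ℂ)) ≠ 0 := Nat.cast_ne_zero.mpr n.factorial_ne_zero
  have hcn := add_nat_ne_zero hc n
  have hn1 : ((n:ℂ)+1) ≠ 0 := by
    have := add_nat_ne_zero (by norm_num : (0:ℝ) < (1:ℂ).re) n
    simpa [add_comm] using this
  have hpc := cpoch_ne_zero hc n
  push_cast
  field_simp
  ring

lemma tsum_telescope_zero {g : ℕ → ℂ} (hs : Summable (fun n => g n - g (n+1)))
    (h0 : g 0 = 0) (hlim : Tendsto g atTop (𝓝 0)) :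
    (∑' n, (g n - g (n+1))) = 0 := by
  have h1 := hs.hasSum.tendsto_sum_nat
  have h2 : ∀ n : ℕ, ∑ i ∈ Finset.range n, (g i - g (i+1)) = g 0 - g n := fun n =>
    Finset.sum_range_sub' g n
  simp only [h2, h0, zero_sub] at h1
  have h3 : Tendsto (fun n : ℕ => -g n) atTop (𝓝 0) := by simpa using hlim.neg
  exact tendsto_nhds_unique h1 h3

lemma summable_norm_Aterm {α c : ℂ} (hα : 0 < α.re) (hc : 0 < c.re) (h : 2 * α.re < c.re) :
    Summable (fun n => ‖Aterm α c n‖) := by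
  rw [← summable_nat_add_iff 1]
  set w : ℂ := c + 1 - α - α with hw
  have hwre : 1 < w.re := by
    simp only [hw, Complex.sub_re, Complex.add_re, Complex.one_re]
    linarith
  apply summable_of_isBigO_nat (g := fun k : ℕ => (k:ℝ) ^ (-w.re))
  · exact Real.summable_nat_rpow.mpr (by linarith)
  · have h1 : (fun k : ℕ => ((k:ℂ) ^ w)⁻¹) =O[atTop] (fun k : ℕ => (k:ℝ) ^ (-w.re)) := by
      apply Asymptotics.IsBigO.of_bound 1
      filter_upwards [eventually_ge_atTop 1] with k hk
      have habs : |(k:ℝ) ^ (-w.re)| = ((k:ℝ) ^ w.re)⁻¹ := by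
        rw [_root_.abs_of_nonneg (Real.rpow_nonneg (by positivity) _),
          Real.rpow_neg (by positivity)]
      rw [norm_inv, norm_cpow_nat hk, Real.norm_eq_abs, habs, one_mul]
    have h2 : (fun k : ℕ => (k:ℂ) ^ w * Aterm α c (k+1)) =O[atTop] (fun _ : ℕ => (1:ℝ)) :=
      (Aterm_asymp hα hc).isBigO_one ℝ
    have h3 := (h1.mul h2).norm_left
    simp only [mul_one] at h3
    apply h3.congr' _ (EventuallyEq.refl _ _)
    filter_upwards [eventually_ge_atTop 1] with k hk
    rw [← mul_assoc, inv_mul_cancel₀ (cpow_nat_ne_zero hk w), one_mul]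

lemma phi_rec {α c : ℂ} (hα : 0 < α.re) (hc : 0 < c.re) (h : 2 * α.re < c.re) :
    c * (c - 2*α) * (∑' n, Aterm α c n) = (c - α)^2 * (∑' n, Aterm α (c+1) n) := by
  have s1 : Summable (Aterm α c) := (summable_norm_Aterm hα hc h).of_norm
  have hc1 : 0 < (c+1).re := by
    simp only [Complex.add_re, Complex.one_re]; linarith
  have h1 : 2*α.re < (c+1).re := by
    simp only [Complex.add_re, Complex.one_re]; linarith
  have s2 : Summable (Aterm α (c+1)) := (summable_norm_Aterm hα hc1 h1).of_norm
  have s1' := s1.mul_left (c*(c-2*α))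
  have s2' := s2.mul_left ((c-α)^2)
  have hfun : ∀ n : ℕ, c*(c-2*α)*Aterm α c n - (c-α)^2*Aterm α (c+1) n
      = (fun k : ℕ => c*(k:ℂ)*Aterm α c k) n - (fun k : ℕ => c*(k:ℂ)*Aterm α c k) (n+1) := by
    intro n
    simp only []
    push_cast
    exact contiguous hα hc n
  have key : (∑' n, (c*(c-2*α)*Aterm α c n - (c-α)^2*Aterm α (c+1) n)) = 0 := by
    rw [tsum_congr hfun]
    apply tsum_telescope_zero ((s1'.sub s2').congr hfun)
    · simp
    · have := (tendsto_nat_mul_Aterm hα hc h).const_mul c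
      simp only [mul_zero] at this
      apply this.congr
      intro n
      ring
  have hsub := s1'.tsum_sub s2'
  rw [key] at hsub
  rw [tsum_mul_left, tsum_mul_left] at hsub
  exact (sub_eq_zero.mp hsub.symm)


lemma re_c_pos {α : ℂ} (hα : 0 < α.re) (j : ℕ) : 0 < ((j:ℂ) + 2*α + 1).re := by
  simp only [Complex.add_re, Complex.one_re, Complex.mul_re, Complex.natCast_re,
    Complex.re_ofNat, Complex.im_ofNat, Complex.natCast_im]
  have : (0:ℝ) ≤ (j:ℝ) := by positivity
  nlinarith [hα]

lemma re_c_gt {α : ℂ} (hα : 0 < α.re) (j : ℕ) : 2 * α.re < ((j:ℂ) + 2*α + 1).re := by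
  simp only [Complex.add_re, Complex.one_re, Complex.mul_re, Complex.natCast_re,
    Complex.re_ofNat, Complex.im_ofNat, Complex.natCast_im]
  have : (0:ℝ) ≤ (j:ℝ) := by positivity
  nlinarith [hα]

lemma phi_iterate {α : ℂ} (hα : 0 < α.re) (m : ℕ) : ∀ k : ℕ,
    (∑' n, Aterm α ((m:ℂ) + 2*α + 1) n) =
      cpoch ((m:ℂ)+α+1) k ^ 2 / (cpoch ((m:ℂ)+2*α+1) k * cpoch ((m:ℂ)+1) k) *
        (∑' n, Aterm α (((m+k:ℕ):ℂ) + 2*α + 1) n) := by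
  intro k
  induction k with
  | zero =>
      simp only [cpoch_zero, Nat.add_zero, one_pow, mul_one, one_div]
      norm_num
  | succ k ih =>
      have hcre : 0 < (((m+k:ℕ):ℂ) + 2*α + 1).re := re_c_pos hα (m+k)
      have hgt : 2 * α.re < (((m+k:ℕ):ℂ) + 2*α + 1).re := re_c_gt hα (m+k)
      have hrec := phi_rec hα hcre hgt
      have hshift : ((m+k:ℕ):ℂ) + 2*α + 1 + 1 = ((m+(k+1):ℕ):ℂ) + 2*α + 1 := by
        push_cast; ring
      rw [hshift] at hrec
      have hμ : (m:ℂ)+α+1 + (k:ℂ) = (((m+k:ℕ):ℂ) + 2*α + 1) - α := by push_cast; ring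
      have hc0 : (m:ℂ)+2*α+1 + (k:ℂ) = ((m+k:ℕ):ℂ) + 2*α + 1 := by push_cast; ring
      have hm1 : (m:ℂ)+1 + (k:ℂ) = (((m+k:ℕ):ℂ) + 2*α + 1) - 2*α := by push_cast; ring
      have hcne : ((m+k:ℕ):ℂ) + 2*α + 1 ≠ 0 := fun hz => by
        rw [hz] at hcre; simp at hcre
      have h2re : 0 < ((((m+k:ℕ):ℂ) + 2*α + 1) - 2*α).re := by
        have : (((m+k:ℕ):ℂ) + 2*α + 1) - 2*α = ((m+k:ℕ):ℂ) + 1 := by ring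
        rw [this]
        simp only [Complex.add_re, Complex.natCast_re, Complex.one_re]
        positivity
      have hc2ne : (((m+k:ℕ):ℂ) + 2*α + 1) - 2*α ≠ 0 := fun hz => by
        rw [hz] at h2re; simp at h2re
      have hq1 := cpoch_ne_zero (re_c_pos hα m) k
      have hq2 : cpoch ((m:ℂ)+1) k ≠ 0 := by
        apply cpoch_ne_zero
        simp only [Complex.add_re, Complex.natCast_re, Complex.one_re]
        positivity
      rw [ih, cpoch_succ, cpoch_succ, cpoch_succ, hμ, hc0, hm1]
      have hphi : (∑' n, Aterm α (((m+k:ℕ):ℂ) + 2*α + 1) n)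
          = (((((m+k:ℕ):ℂ) + 2*α + 1)) - α)^2 / ((((m+k:ℕ):ℂ) + 2*α + 1) * ((((m+k:ℕ):ℂ) + 2*α + 1) - 2*α))
            * (∑' n, Aterm α (((m+(k+1):ℕ):ℂ) + 2*α + 1) n) := by
        rw [div_mul_eq_mul_div, eq_div_iff (mul_ne_zero hcne hc2ne)]
        linear_combination hrec
      rw [hphi]
      field_simp

lemma Q_tendsto {α : ℂ} (hα : 0 < α.re) (m : ℕ) : Tendsto (fun k : ℕ =>
      cpoch ((m:ℂ)+α+1) k ^ 2 / (cpoch ((m:ℂ)+2*α+1) k * cpoch ((m:ℂ)+1) k)) atTop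
    (𝓝 (Complex.Gamma ((m:ℂ)+2*α+1) * Complex.Gamma ((m:ℂ)+1) /
      Complex.Gamma ((m:ℂ)+α+1) ^ 2)) := by
  have hare : 0 < ((m:ℂ)+α+1).re := by
    simp only [Complex.add_re, Complex.natCast_re, Complex.one_re]
    positivity
  have hcre : 0 < ((m:ℂ)+2*α+1).re := re_c_pos hα m
  have hdre : 0 < ((m:ℂ)+1).re := by
    simp only [Complex.add_re, Complex.natCast_re, Complex.one_re]
    positivity
  have h := poch_ratio_tendsto hare hare hcre hdre
  have he : ((m:ℂ)+2*α+1) + ((m:ℂ)+1) - ((m:ℂ)+α+1) - ((m:ℂ)+α+1) = 0 := by ring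
  rw [he] at h
  simp only [cpow_zero, one_mul] at h
  rw [show Complex.Gamma ((m:ℂ)+α+1) ^ 2
    = Complex.Gamma ((m:ℂ)+α+1) * Complex.Gamma ((m:ℂ)+α+1) from sq _]
  apply (tendsto_add_atTop_iff_nat 1).mp
  apply h.congr
  intro k
  rw [sq]

lemma cpoch_ofReal (x : ℝ) (n : ℕ) : cpoch (x:ℂ) n = ((rpoch x n : ℝ) : ℂ) := by
  induction n with
  | zero => simp [cpoch_zero, rpoch]
  | succ k ih => rw [cpoch_succ, rpoch_succ, ih]; push_cast; ring

lemma rpoch_ge_self {x : ℝ} (hx : 1 ≤ x) {n : ℕ} (hn : 1 ≤ n) : x ≤ rpoch x n := by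
  induction n with
  | zero => omega
  | succ k ih =>
      cases k with
      | zero =>
          rw [rpoch_succ]
          simp [rpoch]
      | succ j =>
          have h1 := ih (by omega)
          rw [rpoch_succ]
          have h2 : (1:ℝ) ≤ x + (j+1:ℕ) := by
            have : (0:ℝ) ≤ ((j+1:ℕ):ℝ) := by positivity
            linarith
          nlinarith

lemma phi_tendsto_one {α : ℂ} (hα : 0 < α.re) (m : ℕ) :
    Tendsto (fun k : ℕ => ∑' n, Aterm α (((m+k:ℕ):ℂ) + 2*α + 1) n) atTop (𝓝 1) := by
  set σ₀ : ℝ := (m:ℝ) + 2*α.re + 1 with hσ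
  have hσpos : 0 < σ₀ := by positivity
  have hσre : 0 < ((σ₀:ℝ):ℂ).re := by simpa using hσpos
  have hσgt : 2 * α.re < ((σ₀:ℝ):ℂ).re := by
    simp only [Complex.ofReal_re, hσ]
    have : (0:ℝ) ≤ (m:ℝ) := by positivity
    linarith
  have hckre : ∀ k : ℕ, (((m+k:ℕ):ℂ) + 2*α + 1).re = (m:ℝ) + k + 2*α.re + 1 := by
    intro k
    simp only [Complex.add_re, Complex.natCast_re, Complex.one_re, Complex.mul_re,
      Complex.re_ofNat, Complex.im_ofNat, Complex.natCast_im]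
    push_cast
    ring
  have hnorm_ge : ∀ k n : ℕ, rpoch σ₀ n ≤ ‖cpoch (((m+k:ℕ):ℂ) + 2*α + 1) n‖ := by
    intro k n
    have h1 : rpoch σ₀ n ≤ rpoch ((((m+k:ℕ):ℂ) + 2*α + 1).re) n := by
      apply rpoch_mono hσpos
      rw [hckre k, hσ]
      have : (0:ℝ) ≤ (k:ℝ) := by positivity
      linarith
    exact h1.trans (norm_cpoch_ge (re_c_pos hα (m+k)) n)
  have hbound_sum : Summable (fun n => ‖Aterm α ((σ₀:ℝ):ℂ) n‖) :=
    summable_norm_Aterm hα hσre hσgt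
  have hnorm_eq : ∀ n : ℕ, ‖Aterm α ((σ₀:ℝ):ℂ) n‖
      = ‖cpoch α n‖^2 / (rpoch σ₀ n * (n.factorial : ℝ)) := by
    intro n
    rw [Aterm, norm_div, norm_pow, norm_mul, cpoch_ofReal]
    congr 2
    · rw [Complex.norm_real, Real.norm_eq_abs, _root_.abs_of_nonneg (rpoch_pos hσpos n).le]
    · simp
  have hab : ∀ n : ℕ, Tendsto (fun k : ℕ => Aterm α (((m+k:ℕ):ℂ) + 2*α + 1) n) atTop
      (𝓝 (if n = 0 then 1 else 0)) := by
    intro n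
    rcases Nat.eq_zero_or_pos n with h0 | hpos
    · subst h0
      simp only [if_true, Aterm, cpoch_zero]
      norm_num
    · rw [if_neg (by omega)]
      apply squeeze_zero_norm' (a := fun k : ℕ =>
        (‖cpoch α n‖^2 / (n.factorial : ℝ)) / ((m:ℝ) + k + 2*α.re + 1))
      · filter_upwards with k
        have hcre := re_c_pos hα (m+k)
        have hge1 : (1:ℝ) ≤ (((m+k:ℕ):ℂ) + 2*α + 1).re := by
          rw [hckre k]
          have h1 : (0:ℝ) ≤ (m:ℝ) := by positivity
          have h2 : (0:ℝ) ≤ (k:ℝ) := by positivity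
          linarith [hα]
        have hD : (m:ℝ) + k + 2*α.re + 1 ≤ ‖cpoch (((m+k:ℕ):ℂ) + 2*α + 1) n‖ := by
          calc (m:ℝ) + k + 2*α.re + 1 = (((m+k:ℕ):ℂ) + 2*α + 1).re := (hckre k).symm
          _ ≤ rpoch ((((m+k:ℕ):ℂ) + 2*α + 1).re) n := rpoch_ge_self hge1 hpos
          _ ≤ ‖cpoch (((m+k:ℕ):ℂ) + 2*α + 1) n‖ := norm_cpoch_ge hcre n
        have hDpos : (0:ℝ) < (m:ℝ) + k + 2*α.re + 1 := by
          have h1 : (0:ℝ) ≤ (m:ℝ) := by positivity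
          have h2 : (0:ℝ) ≤ (k:ℝ) := by positivity
          linarith [hα]
        rw [Aterm, norm_div, norm_pow, norm_mul]
        rw [div_div]
        apply div_le_div_of_nonneg_left (by positivity) (by positivity)
        rw [show ‖((n.factorial : ℕ):ℂ)‖ = ((n.factorial : ℕ):ℝ) by simp]
        calc (n.factorial : ℝ) * ((m:ℝ) + k + 2*α.re + 1)
            = ((m:ℝ) + k + 2*α.re + 1) * (n.factorial : ℝ) := by ring
        _ ≤ ‖cpoch (((m+k:ℕ):ℂ) + 2*α + 1) n‖ * (n.factorial : ℝ) :=
              mul_le_mul_of_nonneg_right hD (by positivity)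
      · apply Tendsto.div_atTop tendsto_const_nhds
        have : Tendsto (fun k : ℕ => (k:ℝ)) atTop atTop := tendsto_natCast_atTop_atTop
        have h2 : Tendsto (fun k : ℕ => (k:ℝ) + ((m:ℝ) + 2*α.re + 1)) atTop atTop :=
          tendsto_atTop_add_const_right _ _ this
        apply h2.congr
        intro k
        ring
  have h_bound : ∀ᶠ (k : ℕ) in atTop, ∀ n : ℕ,
      ‖Aterm α (((m+k:ℕ):ℂ) + 2*α + 1) n‖ ≤ ‖Aterm α ((σ₀:ℝ):ℂ) n‖ := by
    filter_upwards with k n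
    rw [hnorm_eq n, Aterm, norm_div, norm_pow, norm_mul]
    rw [show ‖((n.factorial : ℕ):ℂ)‖ = ((n.factorial : ℕ):ℝ) by simp]
    apply div_le_div_of_nonneg_left (by positivity) ?_ ?_
    · exact mul_pos (rpoch_pos hσpos n) (by positivity)
    · exact mul_le_mul_of_nonneg_right (hnorm_ge k n) (by positivity)
  have := tendsto_tsum_of_dominated_convergence hbound_sum hab h_bound
  have htsum : (∑' n : ℕ, (if n = 0 then (1:ℂ) else 0)) = 1 := tsum_ite_eq 0 1
  rw [htsum] at this
  exact this

lemma gauss_eval {α : ℂ} (hα : 0 < α.re) (m : ℕ) :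
    (∑' n, Aterm α ((m:ℂ)+2*α+1) n)
      = Complex.Gamma ((m:ℂ)+2*α+1) * (m.factorial : ℂ) / Complex.Gamma ((m:ℂ)+α+1)^2 := by
  have h1 := (Q_tendsto hα m).mul (phi_tendsto_one hα m)
  rw [mul_one] at h1
  have h3 : Tendsto (fun _ : ℕ => (∑' n, Aterm α ((m:ℂ)+2*α+1) n)) atTop
      (𝓝 (Complex.Gamma ((m:ℂ)+2*α+1) * Complex.Gamma ((m:ℂ)+1) /
        Complex.Gamma ((m:ℂ)+α+1)^2)) := by
    apply h1.congr
    intro k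
    exact (phi_iterate hα m k).symm
  have h4 := tendsto_nhds_unique tendsto_const_nhds h3
  rw [h4, Complex.Gamma_nat_eq_factorial]

lemma Gamma_cpoch {s : ℂ} (hs : 0 < s.re) (n : ℕ) :
    Complex.Gamma (s + n) = cpoch s n * Complex.Gamma s := by
  induction n with
  | zero => simp [cpoch_zero]
  | succ k ih =>
      have hne : s + k ≠ 0 := add_nat_ne_zero hs k
      have : s + ((k+1:ℕ):ℂ) = (s + k) + 1 := by push_cast; ring
      rw [this, Complex.Gamma_add_one _ hne, ih, cpoch_succ]
      ring

theorem stmt_8 (α : ℂ) (hα : 0 < α.re) (m : ℕ) :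
    (∑' n : ℕ, (1 / ((n : ℂ) + α)) * (cpoch α n / (n.factorial : ℂ)) *
        (Complex.Gamma ((m : ℂ) + α + 1) * Complex.Gamma ((n : ℂ) + α + 1) /
          Complex.Gamma ((m : ℂ) + (n : ℂ) + 2 * α + 1))) =
      (1 / ((m : ℂ) + α)) * ((m.factorial : ℂ) / cpoch α m) := by
  have hΓα := Complex.Gamma_ne_zero_of_re_pos hα
  have hc0re : 0 < ((m:ℂ)+2*α+1).re := re_c_pos hα m
  have hΓc := Complex.Gamma_ne_zero_of_re_pos hc0re
  set C : ℂ := cpoch α (m+1) * Complex.Gamma α ^ 2 / Complex.Gamma ((m:ℂ)+2*α+1) with hC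
  have hterm : ∀ n : ℕ, (1 / ((n : ℂ) + α)) * (cpoch α n / (n.factorial : ℂ)) *
        (Complex.Gamma ((m : ℂ) + α + 1) * Complex.Gamma ((n : ℂ) + α + 1) /
          Complex.Gamma ((m : ℂ) + (n : ℂ) + 2 * α + 1))
      = C * Aterm α ((m:ℂ)+2*α+1) n := by
    intro n
    have e1 : (m:ℂ) + α + 1 = α + ((m+1:ℕ):ℂ) := by push_cast; ring
    have e2 : (n:ℂ) + α + 1 = α + ((n+1:ℕ):ℂ) := by push_cast; ring
    have e3 : (m:ℂ) + (n:ℂ) + 2*α + 1 = ((m:ℂ)+2*α+1) + (n:ℕ) := by push_cast; ring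
    rw [e1, e2, e3, Gamma_cpoch hα (m+1), Gamma_cpoch hα (n+1), Gamma_cpoch hc0re n]
    rw [cpoch_succ α n]
    have hf : ((n.factorial : ℂ)) ≠ 0 := Nat.cast_ne_zero.mpr n.factorial_ne_zero
    have hna := add_nat_ne_zero hα n
    have hnα : (n:ℂ) + α ≠ 0 := by rwa [add_comm]
    have hpc := cpoch_ne_zero hc0re n
    rw [hC, Aterm]
    field_simp
    ring
  calc (∑' n : ℕ, (1 / ((n : ℂ) + α)) * (cpoch α n / (n.factorial : ℂ)) *
        (Complex.Gamma ((m : ℂ) + α + 1) * Complex.Gamma ((n : ℂ) + α + 1) /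
          Complex.Gamma ((m : ℂ) + (n : ℂ) + 2 * α + 1)))
      = ∑' n : ℕ, C * Aterm α ((m:ℂ)+2*α+1) n := tsum_congr hterm
  _ = C * ∑' n : ℕ, Aterm α ((m:ℂ)+2*α+1) n := tsum_mul_left
  _ = C * (Complex.Gamma ((m:ℂ)+2*α+1) * (m.factorial : ℂ) /
        Complex.Gamma ((m:ℂ)+α+1)^2) := by rw [gauss_eval hα m]
  _ = (1 / ((m : ℂ) + α)) * ((m.factorial : ℂ) / cpoch α m) := by
      have e1 : (m:ℂ) + α + 1 = α + ((m+1:ℕ):ℂ) := by push_cast; ring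
      rw [hC, e1, Gamma_cpoch hα (m+1), cpoch_succ α m]
      have hpm := cpoch_ne_zero hα m
      have hma := add_nat_ne_zero hα m
      have hmα : (m:ℂ) + α ≠ 0 := by rwa [add_comm]
      field_simp
      ring
      have hΓc' : Complex.Gamma (1 + (m:ℂ) + α*2) ≠ 0 := by convert hΓc using 2; ring
      field_simp
end

section
/- Let α > 0 be real. Define ζ̃(k₁,...,k_r;α) := Σ_{0 ≤ m₁ < ··· < m_r} (Γ(m_r+α+1)/Γ(m_r+2α)) · 1/((m₁+α)^{k₁}···(m_r+α)^{k_r}) for an admissible index (positive integers with k_r ≥ 2). Then ζ̃(1,2,2;α) = ζ̃(2,3;α). -/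
open Filter Topology

set_option maxHeartbeats 1000000

noncomputable def cc (α x y : ℝ) : ℝ :=
  Real.Gamma (x + α + 1) * Real.Gamma (y + α + 1) / Real.Gamma (x + y + 2*α + 1)

lemma cc_symm (α x y : ℝ) : cc α x y = cc α y x := by
  unfold cc
  rw [mul_comm (Real.Gamma (x + α + 1)), show x + y + 2*α + 1 = y + x + 2*α + 1 by ring]

lemma cc_pos {α x y : ℝ} (hx : 0 < x + α + 1) (hy : 0 < y + α + 1)
    (hxy : 0 < x + y + 2*α + 1) : 0 < cc α x y :=
  div_pos (mul_pos (Real.Gamma_pos_of_pos hx) (Real.Gamma_pos_of_pos hy))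
    (Real.Gamma_pos_of_pos hxy)

lemma cc_succ {α x y : ℝ} (hx : 0 < x + α + 1) (hxy : 0 < x + y + 2*α + 1) :
    cc α (x + 1) y = cc α x y * ((x + α + 1) / (x + y + 2*α + 1)) := by
  unfold cc
  rw [show x + 1 + α + 1 = (x + α + 1) + 1 by ring,
    show x + 1 + y + 2*α + 1 = (x + y + 2*α + 1) + 1 by ring,
    Real.Gamma_add_one hx.ne', Real.Gamma_add_one hxy.ne']
  have h1 := (Real.Gamma_pos_of_pos hxy).ne'
  field_simp

lemma cc_diff {α x y : ℝ} (hx : 0 < x + α + 1) (hxy : 0 < x + y + 2*α + 1) :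
    cc α x y - cc α (x + 1) y = cc α (x + 1) y * (y + α) / (x + α + 1) := by
  rw [cc_succ hx hxy]
  have h1 := hx.ne'
  have h2 := hxy.ne'
  have hu := mul_inv_cancel₀ h1
  have hv := mul_inv_cancel₀ h2
  simp only [div_eq_mul_inv]
  linear_combination (-cc α x y) * hv - cc α x y * (x + y + 2*α + 1)⁻¹ * (y + α) * hu

/-- a positive sequence with ratio (k+p)/(k+p+δ) tends to 0 -/
lemma ratio_tendsto_zero {p δ : ℝ} (hp : 0 < p) (hδ : 0 < δ) (f : ℕ → ℝ)
    (hf0 : 0 < f 0) (hrec : ∀ k : ℕ, f (k+1) = f k * (((k : ℝ) + p) / ((k : ℝ) + p + δ))) :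
    Tendsto f atTop (𝓝 0) := by
  have hkp : ∀ k : ℕ, (0:ℝ) < (k:ℝ) + p := fun k => by positivity
  have hkpδ : ∀ k : ℕ, (0:ℝ) < (k:ℝ) + p + δ := fun k => by positivity
  have hfpos : ∀ k, 0 < f k := by
    intro k
    induction k with
    | zero => exact hf0
    | succ n ih => rw [hrec n]; exact mul_pos ih (div_pos (hkp n) (hkpδ n))
  set h : ℕ → ℝ := fun k => (f k)⁻¹ with hh
  have hhpos : ∀ k, 0 < h k := fun k => inv_pos.mpr (hfpos k)
  have hhrec : ∀ k : ℕ, h (k+1) = h k * (1 + δ / ((k:ℝ) + p)) := by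
    intro k
    simp only [hh, hrec k, mul_inv]
    rw [inv_div]
    field_simp
  have key : ∀ n : ℕ, h 0 * (1 + δ * ∑ k ∈ Finset.range n, ((k:ℝ) + p)⁻¹) ≤ h n := by
    intro n
    induction n with
    | zero => simp
    | succ n ih =>
      rw [hhrec n, Finset.sum_range_succ]
      have h1 : (1:ℝ) ≤ 1 + δ * ∑ k ∈ Finset.range n, ((k:ℝ) + p)⁻¹ := by
        have : (0:ℝ) ≤ ∑ k ∈ Finset.range n, ((k:ℝ) + p)⁻¹ :=
          Finset.sum_nonneg fun k _ => (inv_pos.mpr (hkp k)).le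
        nlinarith
      have h2 : h 0 * (1 + δ * ∑ k ∈ Finset.range n, ((k:ℝ)+p)⁻¹) * (1 + δ / ((n:ℝ) + p))
          ≤ h n * (1 + δ / ((n:ℝ) + p)) := by
        apply mul_le_mul_of_nonneg_right ih
        have := hkp n
        positivity
      refine le_trans ?_ h2
      have h3 : (0:ℝ) < (n:ℝ) + p := hkp n
      rw [div_eq_mul_inv]
      nlinarith [hhpos 0, mul_pos (hhpos 0) h3, inv_pos.mpr h3,
        mul_le_mul_of_nonneg_right h1 (le_of_lt (mul_pos (hhpos 0) (mul_pos hδ (inv_pos.mpr h3))))]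
  have hdiv : Tendsto (fun n : ℕ => ∑ k ∈ Finset.range n, ((k:ℝ) + p)⁻¹) atTop atTop := by
    have hb : ∀ n : ℕ, (1+p)⁻¹ * ∑ i ∈ Finset.range n, (1:ℝ)/((i:ℝ)+1)
        ≤ ∑ k ∈ Finset.range n, ((k:ℝ) + p)⁻¹ := by
      intro n
      rw [Finset.mul_sum]
      apply Finset.sum_le_sum
      intro i _
      rw [one_div, ← mul_inv]
      apply inv_anti₀ (hkp i)
      nlinarith [Nat.cast_nonneg (α := ℝ) i]
    exact tendsto_atTop_mono hb
      ((Real.tendsto_sum_range_one_div_nat_succ_atTop).const_mul_atTop (by positivity))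
  have hhtop : Tendsto h atTop atTop := by
    apply tendsto_atTop_mono key
    apply Filter.Tendsto.const_mul_atTop (hhpos 0)
    exact tendsto_atTop_add_const_left _ 1 (hdiv.const_mul_atTop hδ)
  have : Tendsto (fun k => (h k)⁻¹) atTop (𝓝 0) := hhtop.inv_tendsto_atTop
  refine this.congr fun k => ?_
  simp [hh]

lemma tsum_ofReal_telescope (d : ℕ → ℝ) (hanti : ∀ k, d (k+1) ≤ d k)
    (hlim : Tendsto d atTop (𝓝 0)) :
    ∑' k : ℕ, ENNReal.ofReal (d k - d (k+1)) = ENNReal.ofReal (d 0) := by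
  have hnn : ∀ k, 0 ≤ d k - d (k+1) := fun k => sub_nonneg.mpr (hanti k)
  have hs : HasSum (fun k => d k - d (k+1)) (d 0) := by
    rw [hasSum_iff_tendsto_nat_of_nonneg hnn]
    have he : ∀ n : ℕ, ∑ i ∈ Finset.range n, (d i - d (i+1)) = d 0 - d n := fun n =>
      Finset.sum_range_sub' d n
    simp only [he]
    simpa using tendsto_const_nhds.sub hlim
  rw [← ENNReal.ofReal_tsum_of_nonneg hnn hs.summable, hs.tsum_eq]

lemma step_sum (α x0 y : ℝ) (hp : 0 < x0 + α + 1) (hδ : 0 < y + α) :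
    ∑' k : ℕ, ENNReal.ofReal (cc α (x0 + 1 + (k:ℝ)) y / (x0 + 1 + (k:ℝ) + α))
      = ENNReal.ofReal (cc α x0 y / (y + α)) := by
  have hyne : (y + α) ≠ 0 := hδ.ne'
  have harg1 : ∀ t : ℝ, 0 ≤ t → 0 < (x0 + t) + α + 1 := fun t ht => by linarith
  have harg2 : 0 < y + α + 1 := by linarith
  have harg3 : ∀ t : ℝ, 0 ≤ t → 0 < (x0 + t) + y + 2*α + 1 := fun t ht => by linarith
  set d : ℕ → ℝ := fun k => cc α (x0 + (k:ℝ)) y / (y + α) with hd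
  have hdk : ∀ k : ℕ, d k - d (k+1) = cc α (x0 + 1 + (k:ℝ)) y / (x0 + 1 + (k:ℝ) + α) := by
    intro k
    have h1 : cc α (x0 + (k:ℝ)) y - cc α ((x0 + (k:ℝ)) + 1) y
        = cc α ((x0 + (k:ℝ)) + 1) y * (y + α) / ((x0 + (k:ℝ)) + α + 1) :=
      cc_diff (harg1 k (Nat.cast_nonneg k)) (harg3 k (Nat.cast_nonneg k))
    have e1 : (x0 + (k:ℝ)) + 1 = x0 + 1 + (k:ℝ) := by ring
    rw [e1] at h1
    have e2 : d (k+1) = cc α (x0 + 1 + (k:ℝ)) y / (y + α) := by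
      simp only [hd]
      push_cast
      rw [show x0 + ((k:ℝ)+1) = x0 + 1 + (k:ℝ) by ring]
    have e3 : (x0 + (k:ℝ)) + α + 1 = x0 + 1 + (k:ℝ) + α := by ring
    rw [e3] at h1
    have hdd : d k - d (k+1) = (cc α (x0 + (k:ℝ)) y - cc α (x0 + 1 + (k:ℝ)) y) / (y + α) := by
      rw [e2]; simp only [hd]; ring
    rw [hdd, h1]
    have hxne : (x0 + 1 + (k:ℝ) + α) ≠ 0 := by
      have := harg1 k (Nat.cast_nonneg k); rw [e3] at this; exact this.ne'
    field_simp
  have hccpos : ∀ t : ℝ, 0 ≤ t → 0 < cc α (x0 + t) y := fun t ht =>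
    cc_pos (harg1 t ht) harg2 (harg3 t ht)
  have hanti : ∀ k : ℕ, d (k+1) ≤ d k := by
    intro k
    have h0 := hdk k
    have h2 : 0 < cc α (x0 + 1 + (k:ℝ)) y := by
      have := hccpos (1 + (k:ℝ)) (by positivity)
      rwa [show x0 + (1 + (k:ℝ)) = x0 + 1 + (k:ℝ) by ring] at this
    have h3 : 0 < x0 + 1 + (k:ℝ) + α := by
      have := harg1 k (Nat.cast_nonneg k); linarith
    nlinarith [div_pos h2 h3]
  have hlim : Tendsto d atTop (𝓝 0) := by
    have hf : Tendsto (fun k : ℕ => cc α (x0 + (k:ℝ)) y) atTop (𝓝 0) := by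
      apply ratio_tendsto_zero (p := x0 + α + 1) (δ := y + α) hp hδ
      · simpa using hccpos 0 le_rfl
      · intro k
        push_cast
        have h1 : cc α ((x0 + (k:ℝ)) + 1) y
            = cc α (x0 + (k:ℝ)) y * (((x0 + (k:ℝ)) + α + 1) / ((x0 + (k:ℝ)) + y + 2*α + 1)) :=
          cc_succ (harg1 k (Nat.cast_nonneg k)) (harg3 k (Nat.cast_nonneg k))
        rw [show x0 + ((k:ℝ)+1) = (x0 + (k:ℝ)) + 1 by ring, h1,
          show (x0 + (k:ℝ)) + α + 1 = (k:ℝ) + (x0 + α + 1) by ring,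
          show (x0 + (k:ℝ)) + y + 2*α + 1 = (k:ℝ) + (x0 + α + 1) + (y + α) by ring]
    have : Tendsto (fun k : ℕ => cc α (x0 + (k:ℝ)) y * (y+α)⁻¹) atTop (𝓝 (0 * (y+α)⁻¹)) :=
      hf.mul_const _
    simpa [hd, div_eq_mul_inv] using this
  have := tsum_ofReal_telescope d hanti hlim
  simp only [hdk] at this
  rw [this]
  simp only [hd]
  norm_num

lemma step_sum' (α x y0 : ℝ) (hp : 0 < y0 + α + 1) (hδ : 0 < x + α) :
    ∑' k : ℕ, ENNReal.ofReal (cc α x (y0 + 1 + (k:ℝ)) / (y0 + 1 + (k:ℝ) + α))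
      = ENNReal.ofReal (cc α x y0 / (x + α)) := by
  have h := step_sum α y0 x hp hδ
  simp only [cc_symm α x] at *
  exact h

lemma cc_nonneg_aux {α x y0 : ℝ} (hx : 0 < x + α) (hy0 : 0 < y0 + α + 1) (t : ℝ) (ht : 0 ≤ t) :
    0 < cc α x (y0 + 1 + t) :=
  cc_pos (by linarith) (by linarith) (by linarith)

lemma inner_split (α x y0 K : ℝ) (hK : 0 < K) (hy0 : 0 < y0 + α + 1) (hx : 0 < x + α) :
    ENNReal.ofReal (cc α x y0 / (K * (x + α)))
      = ∑' q : ℕ, ENNReal.ofReal (cc α x (y0 + 1 + (q:ℝ)) / (K * (y0 + 1 + (q:ℝ) + α))) := by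
  have hccy0 : 0 < cc α x y0 := cc_pos (by linarith) hy0 (by linarith)
  symm
  calc ∑' q : ℕ, ENNReal.ofReal (cc α x (y0 + 1 + (q:ℝ)) / (K * (y0 + 1 + (q:ℝ) + α)))
      = ∑' q : ℕ, (ENNReal.ofReal (cc α x (y0 + 1 + (q:ℝ)) / (y0 + 1 + (q:ℝ) + α))
          * ENNReal.ofReal K⁻¹) := by
        refine tsum_congr fun q => ?_
        have hw : (0:ℝ) < y0 + 1 + (q:ℝ) + α := by
          have : (0:ℝ) ≤ (q:ℝ) := Nat.cast_nonneg q
          linarith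
        have hcq := cc_nonneg_aux hx hy0 (q:ℝ) (Nat.cast_nonneg q)
        rw [← ENNReal.ofReal_mul (by positivity)]
        congr 1
        field_simp
    _ = (∑' q : ℕ, ENNReal.ofReal (cc α x (y0 + 1 + (q:ℝ)) / (y0 + 1 + (q:ℝ) + α)))
          * ENNReal.ofReal K⁻¹ := ENNReal.tsum_mul_right
    _ = ENNReal.ofReal (cc α x y0 / (x + α)) * ENNReal.ofReal K⁻¹ := by
        rw [step_sum' α x y0 hy0 hx]
    _ = ENNReal.ofReal (cc α x y0 / (K * (x + α))) := by
        rw [← ENNReal.ofReal_mul (by positivity)]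
        congr 1
        field_simp

lemma inner_collapse (α x0 y K : ℝ) (hK : 0 < K) (hp : 0 < x0 + α + 1) (hδ : 0 < y + α) :
    ∑' k : ℕ, ENNReal.ofReal (cc α (x0 + 1 + (k:ℝ)) y / (K * (x0 + 1 + (k:ℝ) + α)))
      = ENNReal.ofReal (cc α x0 y / (K * (y + α))) := by
  have hccy0 : 0 < cc α x0 y := cc_pos hp (by linarith) (by linarith)
  calc ∑' k : ℕ, ENNReal.ofReal (cc α (x0 + 1 + (k:ℝ)) y / (K * (x0 + 1 + (k:ℝ) + α)))
      = ∑' k : ℕ, (ENNReal.ofReal (cc α (x0 + 1 + (k:ℝ)) y / (x0 + 1 + (k:ℝ) + α))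
          * ENNReal.ofReal K⁻¹) := by
        refine tsum_congr fun k => ?_
        have hw : (0:ℝ) < x0 + 1 + (k:ℝ) + α := by
          have : (0:ℝ) ≤ (k:ℝ) := Nat.cast_nonneg k
          linarith
        have hck : 0 < cc α (x0 + 1 + (k:ℝ)) y :=
          cc_pos (by linarith) (by linarith) (by linarith)
        rw [← ENNReal.ofReal_mul (by positivity)]
        congr 1
        field_simp
    _ = (∑' k : ℕ, ENNReal.ofReal (cc α (x0 + 1 + (k:ℝ)) y / (x0 + 1 + (k:ℝ) + α)))
          * ENNReal.ofReal K⁻¹ := ENNReal.tsum_mul_right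
    _ = ENNReal.ofReal (cc α x0 y / (y + α)) * ENNReal.ofReal K⁻¹ := by
        rw [step_sum α x0 y hp hδ]
    _ = ENNReal.ofReal (cc α x0 y / (K * (y + α))) := by
        rw [← ENNReal.ofReal_mul (by positivity)]
        congr 1
        field_simp

lemma rtsum (f : ℕ → ℝ) (h : ∀ n, 0 ≤ f n) :
    ∑' n, f n = (∑' n, ENNReal.ofReal (f n)).toReal := by
  by_cases hs : Summable f
  · rw [← ENNReal.ofReal_tsum_of_nonneg h hs, ENNReal.toReal_ofReal (tsum_nonneg h)]
  · rw [tsum_eq_zero_of_not_summable hs]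
    have htop : ∑' n, ENNReal.ofReal (f n) = ⊤ := by
      by_contra hne
      exact hs ((ENNReal.summable_toReal hne).congr fun n => ENNReal.toReal_ofReal (h n))
    rw [htop]
    simp

lemma gamma_ratio_le (α : ℝ) (hα : 0 < α) : ∀ n : ℕ,
    Real.Gamma ((n:ℝ) + α) / Real.Gamma ((n:ℝ) + 2*α) ≤ Real.Gamma α / Real.Gamma (2*α) := by
  intro n
  induction n with
  | zero => simp
  | succ n ih =>
    have h1 : (0:ℝ) < (n:ℝ) + α := by positivity
    have h2 : (0:ℝ) < (n:ℝ) + 2*α := by positivity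
    have e1 : ((n+1:ℕ):ℝ) + α = ((n:ℝ) + α) + 1 := by push_cast; ring
    have e2 : ((n+1:ℕ):ℝ) + 2*α = ((n:ℝ) + 2*α) + 1 := by push_cast; ring
    rw [e1, e2, Real.Gamma_add_one h1.ne', Real.Gamma_add_one h2.ne', mul_div_mul_comm]
    have h3 : ((n:ℝ) + α) / ((n:ℝ) + 2*α) ≤ 1 := by
      rw [div_le_one h2]; linarith
    have h4 : 0 ≤ Real.Gamma ((n:ℝ) + α) / Real.Gamma ((n:ℝ) + 2*α) :=
      div_nonneg (Real.Gamma_pos_of_pos h1).le (Real.Gamma_pos_of_pos h2).le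
    calc ((n:ℝ) + α) / ((n:ℝ) + 2*α) * (Real.Gamma ((n:ℝ)+α) / Real.Gamma ((n:ℝ)+2*α))
        ≤ 1 * (Real.Gamma ((n:ℝ)+α) / Real.Gamma ((n:ℝ)+2*α)) :=
          mul_le_mul_of_nonneg_right h3 h4
      _ = Real.Gamma ((n:ℝ)+α) / Real.Gamma ((n:ℝ)+2*α) := one_mul _
      _ ≤ _ := ih

lemma chain (α : ℝ) (hα : 0 < α) :
    (∑' a : ℕ, ∑' b : ℕ, ∑' c : ℕ,
      ENNReal.ofReal (cc α ((a:ℝ)+(b:ℝ)+(c:ℝ)+2) (-1) /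
        (Real.Gamma α * (((a:ℝ)+α) * ((a:ℝ)+(b:ℝ)+1+α)^2 * ((a:ℝ)+(b:ℝ)+(c:ℝ)+2+α)^2))))
    = ∑' p : ℕ, ∑' q : ℕ,
      ENNReal.ofReal (cc α (-1) ((p:ℝ)+1+(q:ℝ)) /
        (Real.Gamma α * (((p:ℝ)+α)^2 * ((p:ℝ)+1+(q:ℝ)+α)^3))) := by
  have hΓ : 0 < Real.Gamma α := Real.Gamma_pos_of_pos hα
  calc
    (∑' a : ℕ, ∑' b : ℕ, ∑' c : ℕ,
      ENNReal.ofReal (cc α ((a:ℝ)+(b:ℝ)+(c:ℝ)+2) (-1) /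
        (Real.Gamma α * (((a:ℝ)+α) * ((a:ℝ)+(b:ℝ)+1+α)^2 * ((a:ℝ)+(b:ℝ)+(c:ℝ)+2+α)^2))))
      = ∑' a : ℕ, ∑' b : ℕ, ∑' c : ℕ, ∑' p : ℕ,
        ENNReal.ofReal (cc α ((a:ℝ)+(b:ℝ)+(c:ℝ)+2) ((p:ℝ)) /
          (Real.Gamma α * (((a:ℝ)+α) * ((a:ℝ)+(b:ℝ)+1+α)^2 * ((a:ℝ)+(b:ℝ)+(c:ℝ)+2+α)
            * ((p:ℝ)+α)))) := by
      refine tsum_congr fun a => tsum_congr fun b => tsum_congr fun c => ?_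
      have key := inner_split α ((a:ℝ)+(b:ℝ)+(c:ℝ)+2) (-1)
          (Real.Gamma α * (((a:ℝ)+α) * ((a:ℝ)+(b:ℝ)+1+α)^2 * ((a:ℝ)+(b:ℝ)+(c:ℝ)+2+α)))
          (by positivity) (by linarith) (by positivity)
      calc ENNReal.ofReal (cc α ((a:ℝ)+(b:ℝ)+(c:ℝ)+2) (-1) /
          (Real.Gamma α * (((a:ℝ)+α) * ((a:ℝ)+(b:ℝ)+1+α)^2 * ((a:ℝ)+(b:ℝ)+(c:ℝ)+2+α)^2)))
          = ENNReal.ofReal (cc α ((a:ℝ)+(b:ℝ)+(c:ℝ)+2) (-1) /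
            (Real.Gamma α * (((a:ℝ)+α) * ((a:ℝ)+(b:ℝ)+1+α)^2 * ((a:ℝ)+(b:ℝ)+(c:ℝ)+2+α))
              * ((a:ℝ)+(b:ℝ)+(c:ℝ)+2+α))) := by congr 1; ring
        _ = ∑' q : ℕ, ENNReal.ofReal (cc α ((a:ℝ)+(b:ℝ)+(c:ℝ)+2) ((-1)+1+(q:ℝ)) /
            (Real.Gamma α * (((a:ℝ)+α) * ((a:ℝ)+(b:ℝ)+1+α)^2 * ((a:ℝ)+(b:ℝ)+(c:ℝ)+2+α))
              * ((-1)+1+(q:ℝ)+α))) := key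
        _ = _ := by
            refine tsum_congr fun p => ?_
            rw [show (-1:ℝ)+1+(p:ℝ) = (p:ℝ) by ring]
            congr 1
            ring
    _ = ∑' a : ℕ, ∑' b : ℕ, ∑' p : ℕ, ∑' c : ℕ,
        ENNReal.ofReal (cc α ((a:ℝ)+(b:ℝ)+(c:ℝ)+2) ((p:ℝ)) /
          (Real.Gamma α * (((a:ℝ)+α) * ((a:ℝ)+(b:ℝ)+1+α)^2 * ((a:ℝ)+(b:ℝ)+(c:ℝ)+2+α)
            * ((p:ℝ)+α)))) := by
      exact tsum_congr fun a => tsum_congr fun b => ENNReal.tsum_comm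
    _ = ∑' a : ℕ, ∑' b : ℕ, ∑' p : ℕ,
        ENNReal.ofReal (cc α ((a:ℝ)+(b:ℝ)+1) ((p:ℝ)) /
          (Real.Gamma α * (((a:ℝ)+α) * ((a:ℝ)+(b:ℝ)+1+α)^2 * ((p:ℝ)+α)^2))) := by
      refine tsum_congr fun a => tsum_congr fun b => tsum_congr fun p => ?_
      have key := inner_collapse α ((a:ℝ)+(b:ℝ)+1) ((p:ℝ))
          (Real.Gamma α * (((a:ℝ)+α) * ((a:ℝ)+(b:ℝ)+1+α)^2 * ((p:ℝ)+α)))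
          (by positivity) (by positivity) (by positivity)
      calc (∑' c : ℕ, ENNReal.ofReal (cc α ((a:ℝ)+(b:ℝ)+(c:ℝ)+2) ((p:ℝ)) /
            (Real.Gamma α * (((a:ℝ)+α) * ((a:ℝ)+(b:ℝ)+1+α)^2 * ((a:ℝ)+(b:ℝ)+(c:ℝ)+2+α)
              * ((p:ℝ)+α)))))
          = ∑' c : ℕ, ENNReal.ofReal (cc α (((a:ℝ)+(b:ℝ)+1)+1+(c:ℝ)) ((p:ℝ)) /
            (Real.Gamma α * (((a:ℝ)+α) * ((a:ℝ)+(b:ℝ)+1+α)^2 * ((p:ℝ)+α))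
              * (((a:ℝ)+(b:ℝ)+1)+1+(c:ℝ)+α))) := by
            refine tsum_congr fun c => ?_
            rw [show (a:ℝ)+(b:ℝ)+(c:ℝ)+2 = ((a:ℝ)+(b:ℝ)+1)+1+(c:ℝ) by ring]
            congr 1
            ring
        _ = ENNReal.ofReal (cc α ((a:ℝ)+(b:ℝ)+1) ((p:ℝ)) /
            (Real.Gamma α * (((a:ℝ)+α) * ((a:ℝ)+(b:ℝ)+1+α)^2 * ((p:ℝ)+α)) * ((p:ℝ)+α))) := key
        _ = _ := by congr 1; ring
    _ = ∑' a : ℕ, ∑' b : ℕ, ∑' p : ℕ, ∑' q : ℕ,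
        ENNReal.ofReal (cc α ((a:ℝ)+(b:ℝ)+1) ((p:ℝ)+1+(q:ℝ)) /
          (Real.Gamma α * (((a:ℝ)+α) * ((a:ℝ)+(b:ℝ)+1+α) * ((p:ℝ)+α)^2
            * ((p:ℝ)+1+(q:ℝ)+α)))) := by
      refine tsum_congr fun a => tsum_congr fun b => tsum_congr fun p => ?_
      have key := inner_split α ((a:ℝ)+(b:ℝ)+1) ((p:ℝ))
          (Real.Gamma α * (((a:ℝ)+α) * ((a:ℝ)+(b:ℝ)+1+α) * ((p:ℝ)+α)^2))
          (by positivity) (by positivity) (by positivity)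
      calc ENNReal.ofReal (cc α ((a:ℝ)+(b:ℝ)+1) ((p:ℝ)) /
            (Real.Gamma α * (((a:ℝ)+α) * ((a:ℝ)+(b:ℝ)+1+α)^2 * ((p:ℝ)+α)^2)))
          = ENNReal.ofReal (cc α ((a:ℝ)+(b:ℝ)+1) ((p:ℝ)) /
            (Real.Gamma α * (((a:ℝ)+α) * ((a:ℝ)+(b:ℝ)+1+α) * ((p:ℝ)+α)^2)
              * ((a:ℝ)+(b:ℝ)+1+α))) := by congr 1; ring
        _ = ∑' q : ℕ, ENNReal.ofReal (cc α ((a:ℝ)+(b:ℝ)+1) ((p:ℝ)+1+(q:ℝ)) /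
            (Real.Gamma α * (((a:ℝ)+α) * ((a:ℝ)+(b:ℝ)+1+α) * ((p:ℝ)+α)^2)
              * ((p:ℝ)+1+(q:ℝ)+α))) := key
        _ = _ := by
            refine tsum_congr fun q => ?_
            congr 1
            ring
    _ = ∑' a : ℕ, ∑' p : ℕ, ∑' q : ℕ, ∑' b : ℕ,
        ENNReal.ofReal (cc α ((a:ℝ)+(b:ℝ)+1) ((p:ℝ)+1+(q:ℝ)) /
          (Real.Gamma α * (((a:ℝ)+α) * ((a:ℝ)+(b:ℝ)+1+α) * ((p:ℝ)+α)^2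
            * ((p:ℝ)+1+(q:ℝ)+α)))) := by
      refine tsum_congr fun a => ?_
      rw [ENNReal.tsum_comm]
      exact tsum_congr fun p => ENNReal.tsum_comm
    _ = ∑' a : ℕ, ∑' p : ℕ, ∑' q : ℕ,
        ENNReal.ofReal (cc α ((a:ℝ)) ((p:ℝ)+1+(q:ℝ)) /
          (Real.Gamma α * (((a:ℝ)+α) * ((p:ℝ)+α)^2 * ((p:ℝ)+1+(q:ℝ)+α)^2))) := by
      refine tsum_congr fun a => tsum_congr fun p => tsum_congr fun q => ?_
      have key := inner_collapse α ((a:ℝ)) ((p:ℝ)+1+(q:ℝ))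
          (Real.Gamma α * (((a:ℝ)+α) * ((p:ℝ)+α)^2 * ((p:ℝ)+1+(q:ℝ)+α)))
          (by positivity) (by positivity) (by positivity)
      calc (∑' b : ℕ, ENNReal.ofReal (cc α ((a:ℝ)+(b:ℝ)+1) ((p:ℝ)+1+(q:ℝ)) /
            (Real.Gamma α * (((a:ℝ)+α) * ((a:ℝ)+(b:ℝ)+1+α) * ((p:ℝ)+α)^2
              * ((p:ℝ)+1+(q:ℝ)+α)))))
          = ∑' b : ℕ, ENNReal.ofReal (cc α ((a:ℝ)+1+(b:ℝ)) ((p:ℝ)+1+(q:ℝ)) /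
            (Real.Gamma α * (((a:ℝ)+α) * ((p:ℝ)+α)^2 * ((p:ℝ)+1+(q:ℝ)+α))
              * ((a:ℝ)+1+(b:ℝ)+α))) := by
            refine tsum_congr fun b => ?_
            rw [show (a:ℝ)+(b:ℝ)+1 = (a:ℝ)+1+(b:ℝ) by ring]
            congr 1
            ring
        _ = ENNReal.ofReal (cc α ((a:ℝ)) ((p:ℝ)+1+(q:ℝ)) /
            (Real.Gamma α * (((a:ℝ)+α) * ((p:ℝ)+α)^2 * ((p:ℝ)+1+(q:ℝ)+α))
              * ((p:ℝ)+1+(q:ℝ)+α))) := key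
        _ = _ := by congr 1; ring
    _ = ∑' p : ℕ, ∑' q : ℕ, ∑' a : ℕ,
        ENNReal.ofReal (cc α ((a:ℝ)) ((p:ℝ)+1+(q:ℝ)) /
          (Real.Gamma α * (((a:ℝ)+α) * ((p:ℝ)+α)^2 * ((p:ℝ)+1+(q:ℝ)+α)^2))) := by
      rw [ENNReal.tsum_comm]
      exact tsum_congr fun p => ENNReal.tsum_comm
    _ = ∑' p : ℕ, ∑' q : ℕ,
        ENNReal.ofReal (cc α (-1) ((p:ℝ)+1+(q:ℝ)) /
          (Real.Gamma α * (((p:ℝ)+α)^2 * ((p:ℝ)+1+(q:ℝ)+α)^3))) := by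
      refine tsum_congr fun p => tsum_congr fun q => ?_
      have key := inner_collapse α (-1) ((p:ℝ)+1+(q:ℝ))
          (Real.Gamma α * (((p:ℝ)+α)^2 * ((p:ℝ)+1+(q:ℝ)+α)^2))
          (by positivity) (by linarith) (by positivity)
      calc (∑' a : ℕ, ENNReal.ofReal (cc α ((a:ℝ)) ((p:ℝ)+1+(q:ℝ)) /
            (Real.Gamma α * (((a:ℝ)+α) * ((p:ℝ)+α)^2 * ((p:ℝ)+1+(q:ℝ)+α)^2))))
          = ∑' a : ℕ, ENNReal.ofReal (cc α ((-1)+1+(a:ℝ)) ((p:ℝ)+1+(q:ℝ)) /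
            (Real.Gamma α * (((p:ℝ)+α)^2 * ((p:ℝ)+1+(q:ℝ)+α)^2)
              * ((-1)+1+(a:ℝ)+α))) := by
            refine tsum_congr fun a => ?_
            rw [show (-1:ℝ)+1+(a:ℝ) = (a:ℝ) by ring]
            congr 1
            ring
        _ = ENNReal.ofReal (cc α (-1) ((p:ℝ)+1+(q:ℝ)) /
            (Real.Gamma α * (((p:ℝ)+α)^2 * ((p:ℝ)+1+(q:ℝ)+α)^2)
              * ((p:ℝ)+1+(q:ℝ)+α))) := key
        _ = _ := by congr 1; ring

lemma cc_neg_one (α t : ℝ) :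
    cc α t (-1) = Real.Gamma α * (Real.Gamma (t+α+1) / Real.Gamma (t+2*α)) := by
  unfold cc
  rw [show (-1:ℝ)+α+1 = α by ring, show t+(-1)+2*α+1 = t+2*α by ring]
  ring

lemma cc_neg_one' (α t : ℝ) :
    cc α (-1) t = Real.Gamma α * (Real.Gamma (t+α+1) / Real.Gamma (t+2*α)) := by
  rw [cc_symm, cc_neg_one]

lemma summable_u : Summable (fun n : ℕ => (1:ℝ)/((n:ℝ)+1)^2) := by
  have h : Summable (fun n : ℕ => 1 / (n : ℝ) ^ 2) := Real.summable_one_div_nat_pow.mpr one_lt_two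
  have h2 := (summable_nat_add_iff 1).mpr h
  refine h2.congr fun n => ?_
  push_cast
  ring

lemma S_ne_top : (∑' n : ℕ, ENNReal.ofReal ((1:ℝ)/((n:ℝ)+1)^2)) ≠ ⊤ := by
  rw [← ENNReal.ofReal_tsum_of_nonneg (fun n => by positivity) summable_u]
  exact ENNReal.ofReal_ne_top

lemma R_ne_top (α : ℝ) (hα : 0 < α) :
    (∑' p : ℕ, ∑' q : ℕ,
      ENNReal.ofReal (cc α (-1) ((p:ℝ)+1+(q:ℝ)) /
        (Real.Gamma α * (((p:ℝ)+α)^2 * ((p:ℝ)+1+(q:ℝ)+α)^3)))) ≠ ⊤ := by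
  have hΓ : 0 < Real.Gamma α := Real.Gamma_pos_of_pos hα
  have hΓ2 : 0 < Real.Gamma (2*α) := Real.Gamma_pos_of_pos (by linarith)
  set r0 : ℝ := Real.Gamma α / Real.Gamma (2*α) with hr0
  have hr0pos : 0 < r0 := div_pos hΓ hΓ2
  set C : ℝ := r0 * (1+α⁻¹)^2 with hC
  have hCpos : 0 < C := by positivity
  have hbound : ∀ p q : ℕ, cc α (-1) ((p:ℝ)+1+(q:ℝ)) /
      (Real.Gamma α * (((p:ℝ)+α)^2 * ((p:ℝ)+1+(q:ℝ)+α)^3))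
      ≤ C * ((1:ℝ)/((p:ℝ)+1)^2) * ((1:ℝ)/((q:ℝ)+1)^2) := by
    intro p q
    have hp0 : (0:ℝ) ≤ (p:ℝ) := Nat.cast_nonneg p
    have hq0 : (0:ℝ) ≤ (q:ℝ) := Nat.cast_nonneg q
    set t : ℝ := (p:ℝ)+1+(q:ℝ) with ht
    have htpos : (0:ℝ) < t := by positivity
    have htα : (0:ℝ) < t + α := by positivity
    have hg : Real.Gamma (t+α+1)/Real.Gamma (t+2*α) ≤ (t+α) * r0 := by
      rw [show t+α+1 = (t+α)+1 by ring, Real.Gamma_add_one htα.ne', mul_div_assoc]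
      refine mul_le_mul_of_nonneg_left ?_ htα.le
      have h3 := gamma_ratio_le α hα (p+q+1)
      have e2 : ((p+q+1:ℕ):ℝ) = t := by push_cast; ring
      rwa [e2] at h3
    have hD : cc α (-1) t / (Real.Gamma α * (((p:ℝ)+α)^2 * (t+α)^3))
        = (Real.Gamma (t+α+1)/Real.Gamma (t+2*α)) / (((p:ℝ)+α)^2 * (t+α)^3) := by
      rw [cc_neg_one', mul_div_mul_left _ _ hΓ.ne']
    rw [hD]
    have k1 : (p:ℝ)+1 ≤ (1+α⁻¹)*((p:ℝ)+α) := by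
      have hz : α * α⁻¹ = 1 := mul_inv_cancel₀ hα.ne'
      have h4 : 0 ≤ α⁻¹ * (p:ℝ) := by positivity
      nlinarith
    have k2 : (q:ℝ)+1 ≤ t+α := by rw [ht]; linarith
    have k1' : ((p:ℝ)+1)^2 ≤ (1+α⁻¹)^2*((p:ℝ)+α)^2 := by
      rw [← mul_pow]
      exact pow_le_pow_left₀ (by positivity) k1 2
    have k2' : ((q:ℝ)+1)^2 ≤ (t+α)^2 := pow_le_pow_left₀ (by positivity) k2 2
    have k3 : ((p:ℝ)+1)^2*((q:ℝ)+1)^2 ≤ ((1+α⁻¹)^2*((p:ℝ)+α)^2)*((t+α)^2) :=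
      mul_le_mul k1' k2' (by positivity) (by positivity)
    calc (Real.Gamma (t+α+1)/Real.Gamma (t+2*α)) / (((p:ℝ)+α)^2 * (t+α)^3)
        ≤ ((t+α)*r0) / (((p:ℝ)+α)^2 * (t+α)^3) := by gcongr
      _ = r0 / (((p:ℝ)+α)^2 * (t+α)^2) := by
          rw [div_eq_div_iff (by positivity) (by positivity)]
          ring
      _ ≤ C * ((1:ℝ)/((p:ℝ)+1)^2) * ((1:ℝ)/((q:ℝ)+1)^2) := by
          have h9 : C * ((1:ℝ)/((p:ℝ)+1)^2) * ((1:ℝ)/((q:ℝ)+1)^2)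
              = C / (((p:ℝ)+1)^2 * ((q:ℝ)+1)^2) := by
            rw [mul_one_div, mul_one_div, div_div]
          rw [h9, hC, div_le_div_iff₀ (by positivity) (by positivity)]
          linarith [mul_le_mul_of_nonneg_left k3 hr0pos.le]
  have hle : (∑' p : ℕ, ∑' q : ℕ,
      ENNReal.ofReal (cc α (-1) ((p:ℝ)+1+(q:ℝ)) /
        (Real.Gamma α * (((p:ℝ)+α)^2 * ((p:ℝ)+1+(q:ℝ)+α)^3))))
      ≤ ENNReal.ofReal C * (∑' n : ℕ, ENNReal.ofReal ((1:ℝ)/((n:ℝ)+1)^2))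
        * (∑' n : ℕ, ENNReal.ofReal ((1:ℝ)/((n:ℝ)+1)^2)) := by
    calc (∑' p : ℕ, ∑' q : ℕ,
        ENNReal.ofReal (cc α (-1) ((p:ℝ)+1+(q:ℝ)) /
          (Real.Gamma α * (((p:ℝ)+α)^2 * ((p:ℝ)+1+(q:ℝ)+α)^3))))
        ≤ ∑' p : ℕ, ∑' q : ℕ,
          ENNReal.ofReal (C * ((1:ℝ)/((p:ℝ)+1)^2) * ((1:ℝ)/((q:ℝ)+1)^2)) :=
        ENNReal.tsum_le_tsum fun p => ENNReal.tsum_le_tsum fun q =>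
          ENNReal.ofReal_le_ofReal (hbound p q)
      _ = ∑' p : ℕ, (ENNReal.ofReal C * ENNReal.ofReal ((1:ℝ)/((p:ℝ)+1)^2)
            * ∑' n : ℕ, ENNReal.ofReal ((1:ℝ)/((n:ℝ)+1)^2)) := by
          refine tsum_congr fun p => ?_
          rw [← ENNReal.tsum_mul_left]
          refine tsum_congr fun q => ?_
          rw [← ENNReal.ofReal_mul hCpos.le, ← ENNReal.ofReal_mul (by positivity)]
      _ = (∑' p : ℕ, ENNReal.ofReal C * ENNReal.ofReal ((1:ℝ)/((p:ℝ)+1)^2))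
            * (∑' n : ℕ, ENNReal.ofReal ((1:ℝ)/((n:ℝ)+1)^2)) := ENNReal.tsum_mul_right
      _ = ENNReal.ofReal C * (∑' n : ℕ, ENNReal.ofReal ((1:ℝ)/((n:ℝ)+1)^2))
            * (∑' n : ℕ, ENNReal.ofReal ((1:ℝ)/((n:ℝ)+1)^2)) := by
          rw [ENNReal.tsum_mul_left]
  have hfin : ENNReal.ofReal C * (∑' n : ℕ, ENNReal.ofReal ((1:ℝ)/((n:ℝ)+1)^2))
      * (∑' n : ℕ, ENNReal.ofReal ((1:ℝ)/((n:ℝ)+1)^2)) ≠ ⊤ :=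
    ENNReal.mul_ne_top (ENNReal.mul_ne_top ENNReal.ofReal_ne_top S_ne_top) S_ne_top
  exact (lt_of_le_of_lt hle hfin.lt_top).ne

noncomputable def g3 (α : ℝ) (a b c : ℕ) : ℝ :=
  Real.Gamma (((a + b + c + 2 : ℕ) : ℝ) + α + 1) /
      Real.Gamma (((a + b + c + 2 : ℕ) : ℝ) + 2 * α) /
    (((a : ℝ) + α) * (((a + b + 1 : ℕ) : ℝ) + α) ^ 2 * (((a + b + c + 2 : ℕ) : ℝ) + α) ^ 2)

noncomputable def g2 (α : ℝ) (a b : ℕ) : ℝ :=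
  Real.Gamma (((a + b + 1 : ℕ) : ℝ) + α + 1) / Real.Gamma (((a + b + 1 : ℕ) : ℝ) + 2 * α) /
    (((a : ℝ) + α) ^ 2 * (((a + b + 1 : ℕ) : ℝ) + α) ^ 3)

lemma g3_nonneg (α : ℝ) (hα : 0 < α) (a b c : ℕ) : 0 ≤ g3 α a b c := by
  unfold g3
  have h1 : 0 < ((a + b + c + 2 : ℕ) : ℝ) + α + 1 := by positivity
  have h2 : 0 < ((a + b + c + 2 : ℕ) : ℝ) + 2 * α := by positivity
  have h3 : 0 < Real.Gamma (((a + b + c + 2 : ℕ) : ℝ) + α + 1) := Real.Gamma_pos_of_pos h1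
  have h4 : 0 < Real.Gamma (((a + b + c + 2 : ℕ) : ℝ) + 2 * α) := Real.Gamma_pos_of_pos h2
  positivity

lemma g2_nonneg (α : ℝ) (hα : 0 < α) (a b : ℕ) : 0 ≤ g2 α a b := by
  unfold g2
  have h1 : 0 < ((a + b + 1 : ℕ) : ℝ) + α + 1 := by positivity
  have h2 : 0 < ((a + b + 1 : ℕ) : ℝ) + 2 * α := by positivity
  have h3 : 0 < Real.Gamma (((a + b + 1 : ℕ) : ℝ) + α + 1) := Real.Gamma_pos_of_pos h1
  have h4 : 0 < Real.Gamma (((a + b + 1 : ℕ) : ℝ) + 2 * α) := Real.Gamma_pos_of_pos h2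
  positivity

lemma L_eq (α : ℝ) (hα : 0 < α) :
    (∑' a : ℕ, ∑' b : ℕ, ∑' c : ℕ, ENNReal.ofReal (g3 α a b c))
    = ∑' a : ℕ, ∑' b : ℕ, ∑' c : ℕ,
      ENNReal.ofReal (cc α ((a:ℝ)+(b:ℝ)+(c:ℝ)+2) (-1) /
        (Real.Gamma α * (((a:ℝ)+α) * ((a:ℝ)+(b:ℝ)+1+α)^2 * ((a:ℝ)+(b:ℝ)+(c:ℝ)+2+α)^2))) := by
  have hΓ : 0 < Real.Gamma α := Real.Gamma_pos_of_pos hα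
  refine tsum_congr fun a => tsum_congr fun b => tsum_congr fun c => ?_
  congr 1
  rw [cc_neg_one, mul_div_mul_left _ _ hΓ.ne']
  unfold g3
  rw [show ((a+b+c+2:ℕ):ℝ) = (a:ℝ)+(b:ℝ)+(c:ℝ)+2 by push_cast; ring,
    show ((a+b+1:ℕ):ℝ) = (a:ℝ)+(b:ℝ)+1 by push_cast; ring]

lemma R_eq (α : ℝ) (hα : 0 < α) :
    (∑' a : ℕ, ∑' b : ℕ, ENNReal.ofReal (g2 α a b))
    = ∑' p : ℕ, ∑' q : ℕ,
      ENNReal.ofReal (cc α (-1) ((p:ℝ)+1+(q:ℝ)) /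
        (Real.Gamma α * (((p:ℝ)+α)^2 * ((p:ℝ)+1+(q:ℝ)+α)^3))) := by
  have hΓ : 0 < Real.Gamma α := Real.Gamma_pos_of_pos hα
  refine tsum_congr fun p => tsum_congr fun q => ?_
  congr 1
  rw [cc_neg_one', mul_div_mul_left _ _ hΓ.ne']
  unfold g2
  rw [show ((p+q+1:ℕ):ℝ) = (p:ℝ)+1+(q:ℝ) by push_cast; ring]

/-- The duality ζ̃(1,2,2;α) = ζ̃(2,3;α) for the modified parametrized series with factor
Γ(m_r+α+1)/Γ(m_r+2α); triples 0 ≤ m₁ < m₂ < m₃ are parametrized as a, a+b+1, a+b+c+2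
and pairs 0 ≤ n₁ < n₂ as a, a+b+1. -/
theorem stmt_12 (α : ℝ) (hα : 0 < α) :
    (∑' a : ℕ, ∑' b : ℕ, ∑' c : ℕ,
        Real.Gamma (((a + b + c + 2 : ℕ) : ℝ) + α + 1) /
            Real.Gamma (((a + b + c + 2 : ℕ) : ℝ) + 2 * α) /
          (((a : ℝ) + α) * (((a + b + 1 : ℕ) : ℝ) + α) ^ 2 *
            (((a + b + c + 2 : ℕ) : ℝ) + α) ^ 2)) =
      ∑' a : ℕ, ∑' b : ℕ,
        Real.Gamma (((a + b + 1 : ℕ) : ℝ) + α + 1) / Real.Gamma (((a + b + 1 : ℕ) : ℝ) + 2 * α) /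
          (((a : ℝ) + α) ^ 2 * (((a + b + 1 : ℕ) : ℝ) + α) ^ 3) := by
  have hΓ : 0 < Real.Gamma α := Real.Gamma_pos_of_pos hα
  have hLR : (∑' a : ℕ, ∑' b : ℕ, ∑' c : ℕ, ENNReal.ofReal (g3 α a b c))
      = ∑' a : ℕ, ∑' b : ℕ, ENNReal.ofReal (g2 α a b) := by
    rw [L_eq α hα, R_eq α hα, chain α hα]
  have hRtop : (∑' a : ℕ, ∑' b : ℕ, ENNReal.ofReal (g2 α a b)) ≠ ⊤ := by
    rw [R_eq α hα]
    exact R_ne_top α hα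
  have hLtop : (∑' a : ℕ, ∑' b : ℕ, ∑' c : ℕ, ENNReal.ofReal (g3 α a b c)) ≠ ⊤ := by
    rw [hLR]; exact hRtop
  have hb3 : (∑' a : ℕ, ∑' b : ℕ, ∑' c : ℕ, g3 α a b c)
      = (∑' a : ℕ, ∑' b : ℕ, ∑' c : ℕ, ENNReal.ofReal (g3 α a b c)).toReal := by
    have h2 : ∀ a : ℕ, (∑' b : ℕ, ∑' c : ℕ, g3 α a b c)
        = (∑' b : ℕ, ∑' c : ℕ, ENNReal.ofReal (g3 α a b c)).toReal := by
      intro a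
      calc (∑' b : ℕ, ∑' c : ℕ, g3 α a b c)
          = ∑' b : ℕ, (∑' c : ℕ, ENNReal.ofReal (g3 α a b c)).toReal :=
            tsum_congr fun b => rtsum _ (g3_nonneg α hα a b)
        _ = (∑' b : ℕ, ENNReal.ofReal ((∑' c : ℕ, ENNReal.ofReal (g3 α a b c)).toReal)).toReal :=
            rtsum _ (fun b => ENNReal.toReal_nonneg)
        _ = (∑' b : ℕ, ∑' c : ℕ, ENNReal.ofReal (g3 α a b c)).toReal := by
            congr 1
            refine tsum_congr fun b => ENNReal.ofReal_toReal ?_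
            exact ((lt_of_le_of_lt (le_trans (ENNReal.le_tsum b) (ENNReal.le_tsum a))
              hLtop.lt_top)).ne
    calc (∑' a : ℕ, ∑' b : ℕ, ∑' c : ℕ, g3 α a b c)
        = ∑' a : ℕ, (∑' b : ℕ, ∑' c : ℕ, ENNReal.ofReal (g3 α a b c)).toReal :=
          tsum_congr h2
      _ = (∑' a : ℕ, ENNReal.ofReal
            ((∑' b : ℕ, ∑' c : ℕ, ENNReal.ofReal (g3 α a b c)).toReal)).toReal :=
          rtsum _ (fun a => ENNReal.toReal_nonneg)
      _ = (∑' a : ℕ, ∑' b : ℕ, ∑' c : ℕ, ENNReal.ofReal (g3 α a b c)).toReal := by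
          congr 1
          refine tsum_congr fun a => ENNReal.ofReal_toReal ?_
          exact ((lt_of_le_of_lt (ENNReal.le_tsum a) hLtop.lt_top)).ne
  have hb2 : (∑' a : ℕ, ∑' b : ℕ, g2 α a b)
      = (∑' a : ℕ, ∑' b : ℕ, ENNReal.ofReal (g2 α a b)).toReal := by
    calc (∑' a : ℕ, ∑' b : ℕ, g2 α a b)
        = ∑' a : ℕ, (∑' b : ℕ, ENNReal.ofReal (g2 α a b)).toReal :=
          tsum_congr fun a => rtsum _ (g2_nonneg α hα a)
      _ = (∑' a : ℕ, ENNReal.ofReal ((∑' b : ℕ, ENNReal.ofReal (g2 α a b)).toReal)).toReal :=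
          rtsum _ (fun a => ENNReal.toReal_nonneg)
      _ = (∑' a : ℕ, ∑' b : ℕ, ENNReal.ofReal (g2 α a b)).toReal := by
          congr 1
          refine tsum_congr fun a => ENNReal.ofReal_toReal ?_
          exact ((lt_of_le_of_lt (ENNReal.le_tsum a) hRtop.lt_top)).ne
  show (∑' a : ℕ, ∑' b : ℕ, ∑' c : ℕ, g3 α a b c) = ∑' a : ℕ, ∑' b : ℕ, g2 α a b
  rw [hb3, hb2, hLR]
end

section
/- For a real number α > 0 and integers m ≥ 0, n ≥ 0 with n ≥ 1, the partial sums telescope: Σ_{n₀ < n ≤ N} (1/(n+α)) · Γ(m+α+1)Γ(n+α+1)/Γ(m+n+2α+1) = (1/(m+α)) · [Γ(m+α+1)Γ(n₀+α+1)/Γ(m+n₀+2α+1) − Γ(m+α+1)Γ(N+α+1)/Γ(m+N+2α+1)] for any integers −1 ≤ n₀ < N. -/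
open Finset

theorem stmt_13 (α : ℝ) (hα : 0 < α) (m : ℕ) (n₀ N : ℤ) (hn₀ : -1 ≤ n₀) (hN : n₀ < N) :
    (∑ k ∈ Finset.range (N - n₀).toNat,
        (1 / (((n₀ + 1 + k : ℤ) : ℝ) + α)) *
          (Real.Gamma ((m : ℝ) + α + 1) * Real.Gamma (((n₀ + 1 + k : ℤ) : ℝ) + α + 1) /
            Real.Gamma ((m : ℝ) + ((n₀ + 1 + k : ℤ) : ℝ) + 2 * α + 1))) =
      (1 / ((m : ℝ) + α)) *
        (Real.Gamma ((m : ℝ) + α + 1) * Real.Gamma ((n₀ : ℝ) + α + 1) /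
            Real.Gamma ((m : ℝ) + (n₀ : ℝ) + 2 * α + 1) -
          Real.Gamma ((m : ℝ) + α + 1) * Real.Gamma ((N : ℝ) + α + 1) /
            Real.Gamma ((m : ℝ) + (N : ℝ) + 2 * α + 1)) := by
  have hm : (0:ℝ) ≤ m := Nat.cast_nonneg m
  have hn₀' : (-1:ℝ) ≤ (n₀:ℝ) := by exact_mod_cast hn₀
  set g : ℕ → ℝ := fun k =>
    Real.Gamma ((m:ℝ) + α + 1) * Real.Gamma ((n₀:ℝ) + k + α + 1) /
      Real.Gamma ((m:ℝ) + (n₀:ℝ) + k + 2*α + 1) with hg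
  have key : ∀ k ∈ Finset.range (N - n₀).toNat,
      (1 / (((n₀ + 1 + k : ℤ) : ℝ) + α)) *
        (Real.Gamma ((m : ℝ) + α + 1) * Real.Gamma (((n₀ + 1 + k : ℤ) : ℝ) + α + 1) /
          Real.Gamma ((m : ℝ) + ((n₀ + 1 + k : ℤ) : ℝ) + 2 * α + 1))
        = (1 / ((m:ℝ) + α)) * (g k - g (k+1)) := by
    intro k _
    have hk : (0:ℝ) ≤ (k:ℝ) := Nat.cast_nonneg k
    have ha : (0:ℝ) < (n₀:ℝ) + k + α + 1 := by linarith
    have hb : (0:ℝ) < (m:ℝ) + (n₀:ℝ) + k + 2*α + 1 := by linarith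
    have hGa : Real.Gamma ((n₀:ℝ) + k + α + 1 + 1)
        = ((n₀:ℝ)+k+α+1) * Real.Gamma ((n₀:ℝ)+k+α+1) :=
      Real.Gamma_add_one (ne_of_gt ha)
    have hGb : Real.Gamma ((m:ℝ) + (n₀:ℝ) + k + 2*α + 1 + 1)
        = ((m:ℝ)+(n₀:ℝ)+k+2*α+1) * Real.Gamma ((m:ℝ)+(n₀:ℝ)+k+2*α+1) :=
      Real.Gamma_add_one (ne_of_gt hb)
    have hGbpos := Real.Gamma_pos_of_pos hb
    have hma : (0:ℝ) < (m:ℝ) + α := by linarith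
    simp only [hg]
    push_cast
    have e1 : (n₀:ℝ) + 1 + k + α + 1 = (n₀:ℝ) + k + α + 1 + 1 := by ring
    have e2 : (m:ℝ) + ((n₀:ℝ) + 1 + k) + 2*α + 1 = (m:ℝ) + (n₀:ℝ) + k + 2*α + 1 + 1 := by ring
    have e3 : (n₀:ℝ) + (k+1) + α + 1 = (n₀:ℝ) + k + α + 1 + 1 := by ring
    have e4 : (m:ℝ) + (n₀:ℝ) + (k+1) + 2*α + 1 = (m:ℝ) + (n₀:ℝ) + k + 2*α + 1 + 1 := by ring
    rw [e1, e2, e3, e4, hGa, hGb]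
    have h1 : ((n₀:ℝ) + 1 + k + α) ≠ 0 := by linarith
    have h2 : ((n₀:ℝ) + k + α + 1) ≠ 0 := ne_of_gt ha
    have h3 : ((m:ℝ) + (n₀:ℝ) + k + 2*α + 1) ≠ 0 := ne_of_gt hb
    have h4 : Real.Gamma ((m:ℝ) + (n₀:ℝ) + k + 2*α + 1) ≠ 0 := ne_of_gt hGbpos
    have h5 : ((m:ℝ) + α) ≠ 0 := ne_of_gt hma
    field_simp
    have h3' : ((m:ℝ) + (n₀:ℝ) + k + α*2 + 1) ≠ 0 := by linarith
    field_simp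
    ring
  rw [Finset.sum_congr rfl key, ← Finset.mul_sum, Finset.sum_range_sub' g]
  have hM : (((N - n₀).toNat : ℕ) : ℝ) = (N:ℝ) - n₀ := by
    have := Int.toNat_of_nonneg (by omega : (0:ℤ) ≤ N - n₀)
    exact_mod_cast congrArg (Int.cast : ℤ → ℝ) this
  simp only [hg, Nat.cast_zero, hM]
  ring_nf
end
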